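/- arXiv:2603.07210 — 6 statements merged into one kernel-verified Lean document; each statement's English description precedes it below -/
import Mathlib

section
/- Let T be a tensor field of type (p,q) on ℂⁿ, not identically zero, such that L_F T = 0 for every analytic vector field F on ℂⁿ (i.e., T is a trivial tensor invariant). Then every component T^{i₁⋯i_p}_{j₁⋯j_q} is a constant function, p = q, and T^{i₁⋯i_p}_{j₁⋯j_p} = 0 whenever the tuple (j₁,…,j_p) is not a permutation of the tuple (i₁,…,i_p). -/
open scoped BigOperators

/-- Partial derivative of `f : ℂⁿ → ℂ` in the `s`-th coordinate direction at `x`. -/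
noncomputable def pderivC {n : ℕ} (f : (Fin n → ℂ) → ℂ) (s : Fin n) (x : Fin n → ℂ) : ℂ :=
  fderiv ℂ f x (Pi.single s 1)

/-- Components of the Lie derivative `L_F T` of a type-`(p,q)` tensor field `T` on `ℂⁿ`
along the vector field `F`. -/
noncomputable def lieDeriv {n p q : ℕ} (F : Fin n → (Fin n → ℂ) → ℂ)
    (T : (Fin p → Fin n) → (Fin q → Fin n) → (Fin n → ℂ) → ℂ)
    (i : Fin p → Fin n) (j : Fin q → Fin n) (x : Fin n → ℂ) : ℂ :=
  (∑ s, F s x * pderivC (T i j) s x)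
    + ∑ a : Fin q, ∑ k, T i (Function.update j a k) x * pderivC (F k) (j a) x
    - ∑ b : Fin p, ∑ l, T (Function.update i b l) j x * pderivC (F (i b)) l x

/-- Count of `ν` in the multiset of values of `f`. -/
lemma cnt_eq {n m : ℕ} (f : Fin m → Fin n) (ν : Fin n) :
    Multiset.count ν (↑(List.ofFn f) : Multiset (Fin n))
      = (Finset.univ.filter fun a => ν = f a).card := by
  rw [← Fin.univ_val_map, Multiset.count_map]
  rfl

/-- A nonzero tensor field of type `(p,q)` on `ℂⁿ` whose Lie derivative
vanishes along every analytic vector field (a trivial tensor invariant) has constant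
components, satisfies `p = q`, and its component `T^{i}_{j}` vanishes whenever the tuple
`j` is not a permutation of the tuple `i`. -/
theorem trivial_tensor_invariant_characterization {n p q : ℕ}
    (T : (Fin p → Fin n) → (Fin q → Fin n) → (Fin n → ℂ) → ℂ)
    (hTan : ∀ i j, AnalyticOnNhd ℂ (T i j) Set.univ)
    (hne : ∃ i j x, T i j x ≠ 0)
    (htriv : ∀ F : Fin n → (Fin n → ℂ) → ℂ,
      (∀ s, AnalyticOnNhd ℂ (F s) Set.univ) →
      ∀ i j x, lieDeriv F T i j x = 0) :
    (∀ i j, ∃ c : ℂ, ∀ x, T i j x = c) ∧ p = q ∧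
      (∀ (i : Fin p → Fin n) (j : Fin q → Fin n),
        (↑(List.ofFn j) : Multiset (Fin n)) ≠ ↑(List.ofFn i) →
        ∀ x, T i j x = 0) := by
  classical
  have hdiff : ∀ i j, Differentiable ℂ (T i j) := fun i j x =>
    (hTan i j x trivial).differentiableAt
  -- Step 1: all partial derivatives of the components vanish
  have hder : ∀ i j (s : Fin n) x, pderivC (T i j) s x = 0 := by
    intro i j s x
    have h := htriv (fun k _ => if k = s then (1:ℂ) else 0)
      (fun k => analyticOnNhd_const) i j x
    simp only [lieDeriv] at h
    have h2 : ∀ (k l : Fin n) (y : Fin n → ℂ),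
        pderivC (fun _ : Fin n → ℂ => if k = s then (1:ℂ) else 0) l y = 0 := by
      intro k l y; simp [pderivC]
    simp only [h2, mul_zero, Finset.sum_const_zero, add_zero, sub_zero, ite_mul, one_mul,
      zero_mul, Finset.sum_ite_eq'] at h
    simpa using h
  -- Step 2: components are constant
  have hconst : ∀ i j x, T i j x = T i j 0 := by
    intro i j x
    refine is_const_of_fderiv_eq_zero (hdiff i j) ?_ x 0
    intro y
    refine ContinuousLinearMap.ext fun v => ?_
    have hv : v = ∑ s, v s • (Pi.single s 1 : Fin n → ℂ) := by
      funext t; simp [Pi.single_apply]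
    rw [ContinuousLinearMap.zero_apply, hv, map_sum]
    refine Finset.sum_eq_zero fun s _ => ?_
    have hs := hder i j s y
    rw [pderivC] at hs
    rw [map_smul, hs, smul_zero]
  -- Step 3: the key counting identity, from the scaling field x^ν ∂_ν
  have hkey : ∀ (i : Fin p → Fin n) (j : Fin q → Fin n) (x : Fin n → ℂ) (ν : Fin n),
      ((Finset.univ.filter fun a => ν = j a).card : ℂ) * T i j x
        = ((Finset.univ.filter fun b => ν = i b).card : ℂ) * T i j x := by
    intro i j x ν
    have hF : ∀ k, AnalyticOnNhd ℂ (fun y : Fin n → ℂ => if k = ν then y ν else 0) Set.univ := by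
      intro k
      by_cases h : k = ν
      · simp only [h, eq_self_iff_true, if_true]
        exact
          (ContinuousLinearMap.proj ν : (Fin n → ℂ) →L[ℂ] ℂ).analyticOnNhd Set.univ
      · simpa [h] using
          (analyticOnNhd_const : AnalyticOnNhd ℂ (fun _ : Fin n → ℂ => (0:ℂ)) Set.univ)
    have hpd : ∀ (k l : Fin n) (y : Fin n → ℂ),
        pderivC (fun z : Fin n → ℂ => if k = ν then z ν else 0) l y
          = if k = ν then (if ν = l then 1 else 0) else 0 := by
      intro k l y
      by_cases h : k = ν
      · have h2 : fderiv ℂ (fun z : Fin n → ℂ => z ν) y = ContinuousLinearMap.proj ν :=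
          (ContinuousLinearMap.proj ν : (Fin n → ℂ) →L[ℂ] ℂ).fderiv
        simp only [pderivC, h, if_true]
        rw [h2]
        simp [Pi.single_apply]
      · simp [pderivC, h]
    have h := htriv (fun k y => if k = ν then y ν else 0) hF i j x
    simp only [lieDeriv] at h
    have e1 : (∑ s, (if s = ν then x ν else 0) * pderivC (T i j) s x) = 0 := by
      simp [hder]
    have e2 : (∑ a : Fin q, ∑ k, T i (Function.update j a k) x *
        pderivC (fun z : Fin n → ℂ => if k = ν then z ν else 0) (j a) x)
        = ((Finset.univ.filter fun a => ν = j a).card : ℂ) * T i j x := by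
      have inner : ∀ a : Fin q, (∑ k, T i (Function.update j a k) x *
          pderivC (fun z : Fin n → ℂ => if k = ν then z ν else 0) (j a) x)
          = if ν = j a then T i j x else 0 := by
        intro a
        simp only [hpd]
        have : ∀ k : Fin n, T i (Function.update j a k) x *
            (if k = ν then (if ν = j a then (1:ℂ) else 0) else 0)
            = if k = ν then T i (Function.update j a k) x *
                (if ν = j a then (1:ℂ) else 0) else 0 := by
          intro k; by_cases h' : k = ν <;> simp [h']
        rw [Finset.sum_congr rfl fun k _ => this k, Finset.sum_ite_eq' Finset.univ ν]
        by_cases h' : ν = j a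
        · simp [h', Function.update_eq_self]
        · simp [h']
      rw [Finset.sum_congr rfl fun a _ => inner a, Finset.sum_ite, Finset.sum_const,
        Finset.sum_const_zero, add_zero, nsmul_eq_mul]
    have e3 : (∑ b : Fin p, ∑ l, T (Function.update i b l) j x *
        pderivC (fun z : Fin n → ℂ => if i b = ν then z ν else 0) l x)
        = ((Finset.univ.filter fun b => ν = i b).card : ℂ) * T i j x := by
      have inner : ∀ b : Fin p, (∑ l, T (Function.update i b l) j x *
          pderivC (fun z : Fin n → ℂ => if i b = ν then z ν else 0) l x)
          = if ν = i b then T i j x else 0 := by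
        intro b
        simp only [hpd]
        by_cases h' : ν = i b
        · simp only [← h', if_true]
          have : ∀ l : Fin n, T (Function.update i b l) j x *
              (if ν = l then (1:ℂ) else 0)
              = if ν = l then T (Function.update i b l) j x else 0 := by
            intro l; by_cases h'' : ν = l <;> simp [h'']
          rw [Finset.sum_congr rfl fun l _ => this l, Finset.sum_ite_eq Finset.univ ν]
          simp [h', Function.update_eq_self]
        · have hc : ¬ (i b = ν) := fun hh => h' hh.symm
          simp [hc, h']
      rw [Finset.sum_congr rfl fun b _ => inner b, Finset.sum_ite, Finset.sum_const,
        Finset.sum_const_zero, add_zero, nsmul_eq_mul]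
    rw [e1, e2, e3, zero_add] at h
    exact sub_eq_zero.mp h
  -- Conclusions
  refine ⟨fun i j => ⟨T i j 0, fun x => hconst i j x⟩, ?_, ?_⟩
  · obtain ⟨i, j, x, hx⟩ := hne
    have hm : (↑(List.ofFn j) : Multiset (Fin n)) = ↑(List.ofFn i) := by
      refine Multiset.ext.mpr fun ν => ?_
      rw [cnt_eq, cnt_eq]
      exact_mod_cast mul_right_cancel₀ hx (hkey i j x ν)
    have := congrArg Multiset.card hm
    simpa using this.symm
  · intro i j hne' x
    by_contra hx
    refine hne' (Multiset.ext.mpr fun ν => ?_)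
    rw [cnt_eq, cnt_eq]
    exact_mod_cast mul_right_cancel₀ hx (hkey i j x ν)
end

section
/- Let T be a tensor field of type (1,1) on ℂⁿ such that L_F T = 0 for every analytic vector field F on ℂⁿ. Then there exists a constant c ∈ ℂ such that T^i_j = c·δ^i_j for all i, j ∈ {1,…,n}, where δ^i_j is the Kronecker symbol. -/
open scoped BigOperators

/-- A type-`(1,1)` tensor field on `ℂⁿ` whose Lie derivative vanishes
along every analytic vector field is a constant multiple of the Kronecker delta. -/
theorem trivial_tensor_invariant_one_one {n : ℕ}
    (T : (Fin 1 → Fin n) → (Fin 1 → Fin n) → (Fin n → ℂ) → ℂ)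
    (hTan : ∀ i j, AnalyticOnNhd ℂ (T i j) Set.univ)
    (htriv : ∀ F : Fin n → (Fin n → ℂ) → ℂ,
      (∀ s, AnalyticOnNhd ℂ (F s) Set.univ) →
      ∀ i j x, lieDeriv F T i j x = 0) :
    ∃ c : ℂ, ∀ (i j : Fin 1 → Fin n) (x : Fin n → ℂ),
      T i j x = if i 0 = j 0 then c else 0 := by
  rcases Nat.eq_zero_or_pos n with hn | hn
  · subst hn
    exact ⟨0, fun i => (i 0).elim0⟩
  -- Step 1: each component has vanishing fderiv everywhere
  have hfd : ∀ i j x, fderiv ℂ (T i j) x = 0 := by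
    intro i j x
    have hp : ∀ s, pderivC (T i j) s x = 0 := by
      intro s
      have h := htriv (fun s' _ => if s' = s then (1:ℂ) else 0)
        (fun s' x' _ => analyticAt_const) i j x
      unfold lieDeriv at h
      simp only [pderivC, fderiv_const, Pi.zero_apply, ContinuousLinearMap.zero_apply,
        mul_zero, Finset.sum_const_zero, add_zero, sub_zero] at h
      rw [Finset.sum_eq_single s] at h
      · simpa [pderivC] using h
      · intro b _ hb; simp [hb]
      · simp
    ext v
    have hsingle : ∀ s : Fin n, (fun j' => if s = j' then (1:ℂ) else 0) = Pi.single s 1 := by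
      intro s; funext w; simp [Pi.single_apply, eq_comm]
    have hv : v = ∑ s, v s • (Pi.single s 1 : Fin n → ℂ) := by
      conv_lhs => rw [pi_eq_sum_univ v]
      exact Finset.sum_congr rfl fun s _ => by rw [hsingle s]
    rw [ContinuousLinearMap.zero_apply, hv, map_sum]
    refine Finset.sum_eq_zero fun s _ => ?_
    rw [map_smul]
    have hps := hp s
    unfold pderivC at hps
    rw [hps, smul_zero]
  have hconst : ∀ i j x y, T i j x = T i j y := by
    intro i j x y
    exact is_const_of_fderiv_eq_zero
      (fun z => ((hTan i j z (Set.mem_univ z)).differentiableAt)) (hfd i j) x y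
  -- Step 2: algebraic relation from linear vector fields
  set t : Fin n → Fin n → ℂ := fun a b => T (fun _ => a) (fun _ => b) 0 with ht
  have key : ∀ a b m r : Fin n,
      t a m * (if b = r then 1 else 0) = t r b * (if a = m then 1 else 0) := by
    intro a b m r
    have hF : ∀ s, AnalyticOnNhd ℂ
        (fun x : Fin n → ℂ => if s = m then x r else 0) Set.univ := by
      intro s x _
      by_cases hs : s = m
      · simp only [hs, if_true, eq_self_iff_true]
        exact (ContinuousLinearMap.proj r : (Fin n → ℂ) →L[ℂ] ℂ).analyticAt x
      · simpa [hs] using (analyticAt_const : AnalyticAt ℂ (fun _ : Fin n → ℂ => (0:ℂ)) x)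
    have h := htriv (fun s x => if s = m then x r else 0) hF (fun _ => a) (fun _ => b) 0
    unfold lieDeriv at h
    have hdF : ∀ (s l : Fin n),
        pderivC (fun x : Fin n → ℂ => if s = m then x r else 0) l 0
          = if s = m then (if l = r then 1 else 0) else 0 := by
      intro s l
      by_cases hs : s = m
      · have hder : fderiv ℂ (fun x : Fin n → ℂ => x r) 0
            = (ContinuousLinearMap.proj r : (Fin n → ℂ) →L[ℂ] ℂ) :=
          (ContinuousLinearMap.proj r : (Fin n → ℂ) →L[ℂ] ℂ).fderiv
        simp only [hs, if_true, pderivC]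
        rw [hder]
        simp [ContinuousLinearMap.proj_apply, Pi.single_apply, eq_comm]
      · simp [hs, pderivC]
    have h1 : ∀ i' j' : Fin 1 → Fin n, ∀ s : Fin n,
        pderivC (T i' j') s (0 : Fin n → ℂ) = 0 := by
      intro i' j' s; simp [pderivC, hfd]
    have hb0 : ∀ (k : Fin n) (j' : Fin 1 → Fin n), Function.update j' 0 k = fun _ => k := by
      intro k j'
      funext z
      rw [Subsingleton.elim z 0, Function.update_self]
    simp only [hdF, h1, mul_zero, Finset.sum_const_zero, zero_add, Fin.sum_univ_one,
      hb0, mul_ite, mul_one, Finset.sum_ite_eq', Finset.mem_univ, if_true,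
      sub_eq_zero] at h
    simpa [ht, mul_ite, mul_one, mul_zero] using h
  -- conclusion
  refine ⟨t ⟨0, hn⟩ ⟨0, hn⟩, fun i j x => ?_⟩
  have hi : i = fun _ => i 0 := funext fun w => by rw [Subsingleton.elim w 0]
  have hj : j = fun _ => j 0 := funext fun w => by rw [Subsingleton.elim w 0]
  have hx : T i j x = t (i 0) (j 0) :=
    (hconst i j x 0).trans (by rw [ht]; exact congrArg₂ (fun a b => T a b 0) hi hj)
  rw [hx]
  by_cases hij : i 0 = j 0
  · rw [if_pos hij, hij]
    have h' := key (j 0) (⟨0, hn⟩ : Fin n) (j 0) ⟨0, hn⟩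
    simpa using h'
  · rw [if_neg hij]
    have h' := key (i 0) (j 0) (j 0) (j 0)
    simpa [hij] using h'
end

section
/- Let T be a tensor field of type (2,2) on ℂⁿ such that L_F T = 0 for every analytic vector field F on ℂⁿ. Then there exist constants c₁, c₂ ∈ ℂ such that T^{i₁ i₂}_{j₁ j₂} = c₁·δ^{i₁}_{j₁}δ^{i₂}_{j₂} + c₂·δ^{i₁}_{j₂}δ^{i₂}_{j₁} for all i₁, i₂, j₁, j₂ ∈ {1,…,n}, where δ^i_j is the Kronecker symbol. -/
open scoped BigOperators

/-- Kronecker delta on `Fin n`, valued in `ℂ`. -/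
noncomputable def kron {n : ℕ} (a b : Fin n) : ℂ := if a = b then 1 else 0

/-! ### Auxiliary lemmas -/

lemma TTI_const_of_pderiv_zero {n : ℕ} (f : (Fin n → ℂ) → ℂ)
    (hf : AnalyticOnNhd ℂ f Set.univ) (h : ∀ s x, pderivC f s x = 0) (x y : Fin n → ℂ) :
    f x = f y := by
  have hd : Differentiable ℂ f := fun z => (hf z trivial).differentiableAt
  refine is_const_of_fderiv_eq_zero hd (fun z => ?_) x y
  have : (fderiv ℂ f z).toLinearMap = (0 : ((Fin n → ℂ) →ₗ[ℂ] ℂ)) := by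
    apply LinearMap.pi_ext
    intro i c
    have hsc : Pi.single i c = c • (Pi.single i (1:ℂ) : Fin n → ℂ) := by
      rw [← Pi.single_smul, smul_eq_mul, mul_one]
    simp only [LinearMap.zero_apply, ContinuousLinearMap.coe_coe, hsc, map_smul]
    have := h i z
    simp only [pderivC] at this
    simp [this]
  ext v
  exact congrFun (congrArg DFunLike.coe this) v

lemma TTI_pderiv_const {n : ℕ} (c : ℂ) (s : Fin n) (x : Fin n → ℂ) :
    pderivC (fun _ => c) s x = 0 := by
  simp [pderivC, fderiv_const]

lemma TTI_step1 {n p q : ℕ}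
    (T : (Fin p → Fin n) → (Fin q → Fin n) → (Fin n → ℂ) → ℂ)
    (htriv : ∀ F : Fin n → (Fin n → ℂ) → ℂ,
      (∀ s, AnalyticOnNhd ℂ (F s) Set.univ) →
      ∀ i j x, lieDeriv F T i j x = 0) :
    ∀ i j K x, pderivC (T i j) K x = 0 := by
  intro i j K x
  have h := htriv (fun s _ => if s = K then 1 else 0)
    (fun s => analyticOnNhd_const) i j x
  simpa [lieDeriv, TTI_pderiv_const, Finset.sum_ite_eq'] using h

lemma TTI_pderiv_proj {n : ℕ} (M l : Fin n) (x : Fin n → ℂ) :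
    pderivC (fun y => y M) l x = if l = M then 1 else 0 := by
  have h : fderiv ℂ (fun y : Fin n → ℂ => y M) x
      = (ContinuousLinearMap.proj M : (Fin n → ℂ) →L[ℂ] ℂ) :=
    (ContinuousLinearMap.proj M : (Fin n → ℂ) →L[ℂ] ℂ).fderiv
  simp [pderivC, h, ContinuousLinearMap.proj_apply, Pi.single_apply, eq_comm]

lemma TTI_master {n p q : ℕ}
    (T : (Fin p → Fin n) → (Fin q → Fin n) → (Fin n → ℂ) → ℂ)
    (hstep1 : ∀ i j K (x : Fin n → ℂ), pderivC (T i j) K x = 0)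
    (htriv : ∀ F : Fin n → (Fin n → ℂ) → ℂ,
      (∀ s, AnalyticOnNhd ℂ (F s) Set.univ) →
      ∀ i j x, lieDeriv F T i j x = 0)
    (K M : Fin n) (i : Fin p → Fin n) (j : Fin q → Fin n) (x : Fin n → ℂ) :
    (∑ a : Fin q, if j a = M then T i (Function.update j a K) x else 0)
      = ∑ b : Fin p, if i b = K then T (Function.update i b M) j x else 0 := by
  have hF : ∀ s, AnalyticOnNhd ℂ (fun y : Fin n → ℂ => if s = K then y M else 0) Set.univ := by
    intro s
    by_cases h : s = K
    · simp only [h, if_true]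
      exact fun y _ => (ContinuousLinearMap.proj M : (Fin n → ℂ) →L[ℂ] ℂ).analyticAt y
    · simp only [h, if_false]; exact analyticOnNhd_const
  have hpd : ∀ k l (y : Fin n → ℂ),
      pderivC (fun z : Fin n → ℂ => if k = K then z M else 0) l y
        = if k = K ∧ l = M then 1 else 0 := by
    intro k l y
    by_cases h : k = K
    · simp only [h, if_true, true_and]
      exact TTI_pderiv_proj M l y
    · simp only [h, if_false, false_and]
      simp [pderivC, fderiv_const]
  have h := htriv (fun s y => if s = K then y M else 0) hF i j x
  simp only [lieDeriv, hstep1, mul_zero, Finset.sum_const_zero, zero_add, hpd] at h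
  have h2 : ∀ a : Fin q, (∑ k, T i (Function.update j a k) x * if k = K ∧ j a = M then 1 else 0)
      = if j a = M then T i (Function.update j a K) x else 0 := by
    intro a
    rw [Finset.sum_eq_single K]
    · by_cases hM : j a = M <;> simp [hM]
    · intro k _ hk; simp [hk]
    · intro hk; exact absurd (Finset.mem_univ K) hk
  have h3 : ∀ b : Fin p, (∑ l, T (Function.update i b l) j x * if i b = K ∧ l = M then 1 else 0)
      = if i b = K then T (Function.update i b M) j x else 0 := by
    intro b
    rw [Finset.sum_eq_single M]
    · by_cases hK : i b = K <;> simp [hK]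
    · intro l _ hl; simp [hl]
    · intro hl; exact absurd (Finset.mem_univ M) hl
  simp only [h2, h3] at h
  exact sub_eq_zero.mp h

section TTIComb
variable {n : ℕ} (t2 : Fin n → Fin n → Fin n → Fin n → ℂ)
variable (hM : ∀ a b c d K M : Fin n,
    (if c = M then t2 a b K d else 0) + (if d = M then t2 a b c K else 0)
      = (if a = K then t2 M b c d else 0) + (if b = K then t2 a M c d else 0))

include hM

lemma TTI_cnt (a b c d r : Fin n) :
    ((if c = r then (1:ℂ) else 0) + (if d = r then 1 else 0)
      - (if a = r then 1 else 0) - (if b = r then 1 else 0)) * t2 a b c d = 0 := by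
  have hr := hM a b c d r r
  have e1 : (if c = r then t2 a b r d else 0) = (if c = r then (1:ℂ) else 0) * t2 a b c d := by
    by_cases h : c = r
    · subst h; simp
    · simp [h]
  have e2 : (if d = r then t2 a b c r else 0) = (if d = r then (1:ℂ) else 0) * t2 a b c d := by
    by_cases h : d = r
    · subst h; simp
    · simp [h]
  have e3 : (if a = r then t2 r b c d else 0) = (if a = r then (1:ℂ) else 0) * t2 a b c d := by
    by_cases h : a = r
    · subst h; simp
    · simp [h]
  have e4 : (if b = r then t2 a r c d else 0) = (if b = r then (1:ℂ) else 0) * t2 a b c d := by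
    by_cases h : b = r
    · subst h; simp
    · simp [h]
  rw [e1, e2, e3, e4] at hr
  linear_combination hr

set_option maxHeartbeats 1000000 in
lemma TTI_vanish (a b c d : Fin n) (h1 : ¬(a = c ∧ b = d)) (h2 : ¬(a = d ∧ b = c)) :
    t2 a b c d = 0 := by
  by_contra ht
  have ha := TTI_cnt t2 hM a b c d a
  have hb := TTI_cnt t2 hM a b c d b
  rw [mul_eq_zero] at ha hb
  rcases ha with ha | ha; swap; · exact ht ha
  rcases hb with hb | hb; swap; · exact ht hb
  clear hM
  split_ifs at ha hb <;>
    first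
      | (norm_num at ha; done)
      | (norm_num at hb; done)
      | exact h1 ⟨by grind, by grind⟩
      | exact h2 ⟨by grind, by grind⟩

lemma TTI_R1 (a b : Fin n) (h : a ≠ b) :
    t2 a b a b + t2 a b b a = t2 b b b b := by
  have := hM a b b b a b
  simp [h, Ne.symm h] at this
  linear_combination this

lemma TTI_R1' (a b : Fin n) (h : a ≠ b) :
    t2 a b b a + t2 a b a b = t2 a a a a := by
  have := hM a b a a b a
  simp [h, Ne.symm h] at this
  linear_combination this

lemma TTI_R2 (a b : Fin n) (h : a ≠ b) :
    t2 b a a b + t2 a b a b = t2 a a a a := by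
  have := hM a a a b a b
  simp [h, Ne.symm h] at this
  linear_combination -this

lemma TTI_R3' (a b c : Fin n) (hab : a ≠ b) (hac : a ≠ c) :
    t2 a b a b = t2 a c a c := by
  have := hM a b a c b c
  simp [hab, hac, Ne.symm hab, Ne.symm hac] at this
  linear_combination this

lemma TTI_Qsym (a b : Fin n) (h : a ≠ b) : t2 a b b a = t2 b a a b := by
  have h1 := TTI_R1' t2 hM a b h
  have h2 := TTI_R2 t2 hM a b h
  linear_combination h1 - h2

lemma TTI_S2 (a b b' : Fin n) (hab : a ≠ b) (hab' : a ≠ b') :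
    t2 a b b a = t2 a b' b' a := by
  have h1 := TTI_R1' t2 hM a b hab
  have h2 := TTI_R1' t2 hM a b' hab'
  have h3 := TTI_R3' t2 hM a b b' hab hab'
  linear_combination h1 - h2 - h3

lemma TTI_S3 (a a' b : Fin n) (hab : a ≠ b) (ha'b : a' ≠ b) :
    t2 a b b a = t2 a' b b a' := by
  have h1 := TTI_Qsym t2 hM a b hab
  have h2 := TTI_S2 t2 hM b a a' (Ne.symm hab) (Ne.symm ha'b)
  have h3 := TTI_Qsym t2 hM a' b ha'b
  linear_combination h1 + h2 - h3

lemma TTI_Qconst (u v a b : Fin n) (huv : u ≠ v) (hab : a ≠ b) :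
    t2 a b b a = t2 u v v u := by
  by_cases hav : a = v
  · subst hav
    calc t2 a b b a = t2 b a a b := TTI_Qsym t2 hM a b hab
    _ = t2 u a a u := TTI_S3 t2 hM b u a (Ne.symm hab) huv
  · calc t2 a b b a = t2 a v v a := TTI_S2 t2 hM a b v hab hav
    _ = t2 u v v u := TTI_S3 t2 hM a u v hav huv
end TTIComb

lemma TTI_comb_main {n : ℕ} (t2 : Fin n → Fin n → Fin n → Fin n → ℂ)
    (hM : ∀ a b c d K M : Fin n,
      (if c = M then t2 a b K d else 0) + (if d = M then t2 a b c K else 0)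
        = (if a = K then t2 M b c d else 0) + (if b = K then t2 a M c d else 0)) :
    ∃ c₁ c₂ : ℂ, ∀ a b c d : Fin n,
      t2 a b c d = c₁ * (kron a c * kron b d) + c₂ * (kron a d * kron b c) := by
  by_cases hex : ∃ u v : Fin n, u ≠ v
  · obtain ⟨u, v, huv⟩ := hex
    refine ⟨t2 u v u v, t2 u v v u, ?_⟩
    have hPconst : ∀ a b : Fin n, a ≠ b → t2 a b a b = t2 u v u v := by
      intro a b hab
      have h1 := TTI_R1' t2 hM a b hab
      have h2 := TTI_R1' t2 hM u v huv
      have hq := TTI_Qconst t2 hM u v a b huv hab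
      have hD : t2 a a a a = t2 u u u u := by
        by_cases hau : a = u
        · rw [hau]
        · have x1 := TTI_R1 t2 hM u a (Ne.symm hau)
          have x2 := TTI_R1' t2 hM u a (Ne.symm hau)
          linear_combination x2 - x1
      linear_combination h1 - h2 - hq + hD
    intro a b c d
    by_cases h1 : a = c ∧ b = d
    · obtain ⟨hac, hbd⟩ := h1
      subst hac; subst hbd
      by_cases hab : a = b
      · subst hab
        have h2 := TTI_R1' t2 hM u v huv
        have hD : t2 a a a a = t2 u u u u := by
          by_cases hau : a = u
          · rw [hau]
          · have x1 := TTI_R1 t2 hM u a (Ne.symm hau)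
            have x2 := TTI_R1' t2 hM u a (Ne.symm hau)
            linear_combination x2 - x1
        simp [kron]
        linear_combination hD - h2
      · simp [kron, hab]
        linear_combination hPconst a b hab
    · by_cases h2 : a = d ∧ b = c
      · obtain ⟨had, hbc⟩ := h2
        subst had; subst hbc
        have hab : a ≠ b := by
          intro h
          exact h1 ⟨h.symm ▸ rfl, h ▸ rfl⟩
        simp [kron, hab, Ne.symm hab]
        linear_combination TTI_Qconst t2 hM u v a b huv hab
      · rw [TTI_vanish t2 hM a b c d h1 h2]
        have z1 : kron a c * kron b d = 0 := by
          simp only [kron]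
          by_cases hac : a = c
          · by_cases hbd : b = d
            · exact absurd ⟨hac, hbd⟩ h1
            · simp [hbd]
          · simp [hac]
        have z2 : kron a d * kron b c = 0 := by
          simp only [kron]
          by_cases had : a = d
          · by_cases hbc : b = c
            · exact absurd ⟨had, hbc⟩ h2
            · simp [hbc]
          · simp [had]
        rw [z1, z2]; ring
  · push_neg at hex
    by_cases hne : Nonempty (Fin n)
    · obtain ⟨e⟩ := hne
      refine ⟨t2 e e e e, 0, ?_⟩
      intro a b c d
      have ha := hex a e; have hb := hex b e; have hc := hex c e; have hd := hex d e
      subst ha; subst hb; subst hc; subst hd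
      simp [kron]
    · refine ⟨0, 0, ?_⟩
      intro a
      exact absurd ⟨a⟩ hne

lemma TTI_upd0 {n : ℕ} (a b k : Fin n) :
    Function.update ![a, b] (0 : Fin 2) k = ![k, b] := by
  funext x
  fin_cases x <;> simp

lemma TTI_upd1 {n : ℕ} (a b k : Fin n) :
    Function.update ![a, b] (1 : Fin 2) k = ![a, k] := by
  funext x
  fin_cases x <;> simp

lemma TTI_eta {n : ℕ} (i : Fin 2 → Fin n) : ![i 0, i 1] = i := by
  funext x
  fin_cases x <;> simp

/-- A type-`(2,2)` tensor field on `ℂⁿ` whose Lie derivative vanishes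
along every analytic vector field is a constant combination
`c₁ δ^{i₁}_{j₁} δ^{i₂}_{j₂} + c₂ δ^{i₁}_{j₂} δ^{i₂}_{j₁}`. -/
theorem trivial_tensor_invariant_two_two {n : ℕ}
    (T : (Fin 2 → Fin n) → (Fin 2 → Fin n) → (Fin n → ℂ) → ℂ)
    (hTan : ∀ i j, AnalyticOnNhd ℂ (T i j) Set.univ)
    (htriv : ∀ F : Fin n → (Fin n → ℂ) → ℂ,
      (∀ s, AnalyticOnNhd ℂ (F s) Set.univ) →
      ∀ i j x, lieDeriv F T i j x = 0) :
    ∃ c₁ c₂ : ℂ, ∀ (i j : Fin 2 → Fin n) (x : Fin n → ℂ),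
      T i j x = c₁ * (kron (i 0) (j 0) * kron (i 1) (j 1))
        + c₂ * (kron (i 0) (j 1) * kron (i 1) (j 0)) := by
  have hstep1 := TTI_step1 T htriv
  have hconst : ∀ i j (x : Fin n → ℂ), T i j x = T i j 0 := fun i j x =>
    TTI_const_of_pderiv_zero (T i j) (hTan i j) (fun s y => hstep1 i j s y) x 0
  set t2 : Fin n → Fin n → Fin n → Fin n → ℂ :=
    fun a b c d => T ![a, b] ![c, d] 0 with ht2
  have hM : ∀ a b c d K M : Fin n,
      (if c = M then t2 a b K d else 0) + (if d = M then t2 a b c K else 0)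
        = (if a = K then t2 M b c d else 0) + (if b = K then t2 a M c d else 0) := by
    intro a b c d K M
    have h := TTI_master T hstep1 htriv K M ![a, b] ![c, d] 0
    rw [Fin.sum_univ_two, Fin.sum_univ_two] at h
    simpa [ht2, TTI_upd0, TTI_upd1] using h
  obtain ⟨c₁, c₂, hc⟩ := TTI_comb_main t2 hM
  refine ⟨c₁, c₂, ?_⟩
  intro i j x
  have := hc (i 0) (i 1) (j 0) (j 1)
  rw [ht2] at this
  simp only [TTI_eta] at this
  rw [hconst i j x]
  exact this
end

section
/- Let T be a tensor field of type (3,3) on ℂⁿ such that L_F T = 0 for every analytic vector field F on ℂⁿ. Then there exist constants c_σ ∈ ℂ, one for each permutation σ of {1,2,3}, such that T^{i₁ i₂ i₃}_{j₁ j₂ j₃} = Σ_{σ ∈ S₃} c_σ·δ^{i₁}_{j_{σ(1)}}δ^{i₂}_{j_{σ(2)}}δ^{i₃}_{j_{σ(3)}} for all i₁, i₂, i₃, j₁, j₂, j₃ ∈ {1,…,n}, where δ^i_j is the Kronecker symbol and S₃ is the symmetric group on three letters. -/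
open scoped BigOperators

section PartI
variable {n : ℕ}

lemma pderivC_const (c : ℂ) (s : Fin n) (x : Fin n → ℂ) : pderivC (fun _ => c) s x = 0 := by
  simp [pderivC, fderiv_const]

lemma pderivC_proj (v : Fin n) (s : Fin n) (x : Fin n → ℂ) :
    pderivC (fun y => y v) s x = if v = s then 1 else 0 := by
  have : (fun y : Fin n → ℂ => y v) = (ContinuousLinearMap.proj v : (Fin n → ℂ) →L[ℂ] ℂ) := rfl
  rw [pderivC, this, ContinuousLinearMap.fderiv]
  simp [ContinuousLinearMap.proj_apply, Pi.single_apply]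

theorem pderivT_zero
    (T : (Fin 3 → Fin n) → (Fin 3 → Fin n) → (Fin n → ℂ) → ℂ)
    (htriv : ∀ F : Fin n → (Fin n → ℂ) → ℂ,
      (∀ s, AnalyticOnNhd ℂ (F s) Set.univ) →
      ∀ i j x, lieDeriv F T i j x = 0)
    (i j : Fin 3 → Fin n) (s : Fin n) (x : Fin n → ℂ) :
    pderivC (T i j) s x = 0 := by
  have h := htriv (fun k _ => if k = s then 1 else 0) (fun k => analyticOnNhd_const) i j x
  simp only [lieDeriv, pderivC_const, mul_zero, Finset.sum_const_zero, add_zero, sub_zero,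
    ite_mul, one_mul, zero_mul] at h
  rwa [Finset.sum_ite_eq' Finset.univ s, if_pos (Finset.mem_univ s)] at h

theorem T_const
    (T : (Fin 3 → Fin n) → (Fin 3 → Fin n) → (Fin n → ℂ) → ℂ)
    (hTan : ∀ i j, AnalyticOnNhd ℂ (T i j) Set.univ)
    (htriv : ∀ F : Fin n → (Fin n → ℂ) → ℂ,
      (∀ s, AnalyticOnNhd ℂ (F s) Set.univ) →
      ∀ i j x, lieDeriv F T i j x = 0)
    (i j : Fin 3 → Fin n) (x y : Fin n → ℂ) : T i j x = T i j y := by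
  apply is_const_of_fderiv_eq_zero (𝕜 := ℂ)
  · exact fun z => ((hTan i j) z (Set.mem_univ z)).differentiableAt
  · intro z
    ext v
    have hv : v = ∑ s, v s • (Pi.single s (1:ℂ) : Fin n → ℂ) := by
      funext w
      simp [Finset.sum_apply, Pi.single_apply]
    rw [hv]
    simp only [map_sum, map_smul]
    have : ∀ s, fderiv ℂ (T i j) z (Pi.single s 1) = 0 := fun s => pderivT_zero T htriv i j s z
    simp [this]

theorem hR_of_htriv
    (T : (Fin 3 → Fin n) → (Fin 3 → Fin n) → (Fin n → ℂ) → ℂ)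
    (htriv : ∀ F : Fin n → (Fin n → ℂ) → ℂ,
      (∀ s, AnalyticOnNhd ℂ (F s) Set.univ) →
      ∀ i j x, lieDeriv F T i j x = 0)
    (u v : Fin n) (i j : Fin 3 → Fin n) (x : Fin n → ℂ) :
    (∑ a : Fin 3, if j a = v then T i (Function.update j a u) x else 0)
      = ∑ b : Fin 3, if i b = u then T (Function.update i b v) j x else 0 := by
  have hF : ∀ k : Fin n, AnalyticOnNhd ℂ (fun y : Fin n → ℂ => if k = u then y v else 0) Set.univ := by
    intro k
    by_cases h : k = u
    · simp only [h, if_true]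
      exact (ContinuousLinearMap.proj v : (Fin n → ℂ) →L[ℂ] ℂ).analyticOnNhd Set.univ
    · simpa [h] using (analyticOnNhd_const : AnalyticOnNhd ℂ (fun _ : Fin n → ℂ => (0:ℂ)) Set.univ)
  have h := htriv (fun k y => if k = u then y v else 0) hF i j x
  have hp : ∀ k m, pderivC (fun y : Fin n → ℂ => if k = u then y v else 0) m x
      = if k = u ∧ v = m then 1 else 0 := by
    intro k m
    by_cases hk : k = u
    · simp only [hk, if_true, true_and]
      exact pderivC_proj v m x
    · simp [hk, pderivC_const]
  simp only [lieDeriv, hp, pderivT_zero T htriv, mul_zero, Finset.sum_const_zero, zero_add] at h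
  have h1 : ∀ a : Fin 3, (∑ k, T i (Function.update j a k) x * if k = u ∧ v = j a then 1 else 0)
      = if j a = v then T i (Function.update j a u) x else 0 := by
    intro a
    by_cases hj : j a = v
    · rw [if_pos hj]
      have : ∀ k, (T i (Function.update j a k) x * if k = u ∧ v = j a then 1 else 0)
          = if k = u then T i (Function.update j a k) x else 0 := by
        intro k; by_cases hk : k = u <;> simp [hk, hj.symm]
      rw [Finset.sum_congr rfl (fun k _ => this k), Finset.sum_ite_eq' Finset.univ u,
        if_pos (Finset.mem_univ u)]
    · rw [if_neg hj]
      apply Finset.sum_eq_zero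
      intro k _
      have : ¬ (k = u ∧ v = j a) := by
        rintro ⟨_, hv⟩; exact hj hv.symm
      simp [this]
  have h2 : ∀ b : Fin 3, (∑ l, T (Function.update i b l) j x * if i b = u ∧ v = l then 1 else 0)
      = if i b = u then T (Function.update i b v) j x else 0 := by
    intro b
    by_cases hi : i b = u
    · rw [if_pos hi]
      have : ∀ l, (T (Function.update i b l) j x * if i b = u ∧ v = l then 1 else 0)
          = if l = v then T (Function.update i b l) j x else 0 := by
        intro l
        by_cases hl : l = v
        · simp [hl, hi]
        · rw [if_neg (fun hv : i b = u ∧ v = l => hl hv.2.symm), if_neg (fun h' : l = v => hl h'), mul_zero]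
      rw [Finset.sum_congr rfl (fun l _ => this l), Finset.sum_ite_eq' Finset.univ v,
        if_pos (Finset.mem_univ v)]
    · rw [if_neg hi]
      apply Finset.sum_eq_zero
      intro l _
      simp [hi]
  rw [Finset.sum_congr rfl (fun a _ => h1 a), Finset.sum_congr rfl (fun b _ => h2 b)] at h
  exact sub_eq_zero.mp h

namespace TI33
variable {n : ℕ}

/-- number of positions of `i` carrying value `v` -/
def cnt (i : Fin 3 → Fin n) (v : Fin n) : ℕ := (Finset.univ.filter (fun a => i a = v)).card

noncomputable def D (σ : Equiv.Perm (Fin 3)) (i j : Fin 3 → Fin n) : ℂ :=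
  ∏ a, kron (i a) (j (σ a))

lemma D_eq (σ : Equiv.Perm (Fin 3)) (i j : Fin 3 → Fin n) :
    D σ i j = if ∀ a, i a = j (σ a) then 1 else 0 := by
  classical
  rw [D]
  rw [show (fun a => kron (i a) (j (σ a))) = fun a => if i a = j (σ a) then (1:ℂ) else 0 from rfl]
  rw [Finset.prod_boole]
  simp

variable (t : (Fin 3 → Fin n) → (Fin 3 → Fin n) → ℂ)
variable (hR : ∀ u v (i j : Fin 3 → Fin n),
    (∑ a : Fin 3, if j a = v then t i (Function.update j a u) else 0)
      = ∑ b : Fin 3, if i b = u then t (Function.update i b v) j else 0)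

section generic
include hR

/-- vanishing when multiplicities mismatch -/
lemma hzero {i j : Fin 3 → Fin n} {v : Fin n} (h : cnt i v ≠ cnt j v) : t i j = 0 := by
  have h0 := hR v v i j
  have e1 : ∀ a : Fin 3, (if j a = v then t i (Function.update j a v) else 0)
      = if j a = v then t i j else 0 := by
    intro a
    by_cases hj : j a = v
    · rw [if_pos hj, if_pos hj, ← hj, Function.update_eq_self]
    · rw [if_neg hj, if_neg hj]
  have e2 : ∀ b : Fin 3, (if i b = v then t (Function.update i b v) j else 0)
      = if i b = v then t i j else 0 := by
    intro b
    by_cases hi : i b = v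
    · rw [if_pos hi, if_pos hi, ← hi, Function.update_eq_self]
    · rw [if_neg hi, if_neg hi]
  rw [Finset.sum_congr rfl (fun a _ => e1 a), Finset.sum_congr rfl (fun b _ => e2 b),
    ← Finset.sum_filter, ← Finset.sum_filter, Finset.sum_const, Finset.sum_const] at h0
  have h0' : ((cnt j v : ℂ) - (cnt i v : ℂ)) * t i j = 0 := by
    have := h0
    rw [nsmul_eq_mul, nsmul_eq_mul] at this
    rw [cnt, cnt]
    linear_combination this
  rcases mul_eq_zero.mp h0' with h' | h'
  · exact absurd (Nat.cast_inj.mp (sub_eq_zero.mp h')).symm h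
  · exact h'

/-- splitting relation: replace the value at position `b` of `i` by a value `u`
fresh for `i`, summing over matching replacements in `j`. -/
lemma split (i j : Fin 3 → Fin n) (b : Fin 3) (u : Fin n) (hu : ∀ p, i p ≠ u) :
    t i j = ∑ a : Fin 3, if j a = i b then t (Function.update i b u) (Function.update j a u) else 0 := by
  have h := hR u (i b) (Function.update i b u) j
  have hrhs : (∑ b' : Fin 3, if Function.update i b u b' = u
      then t (Function.update (Function.update i b u) b' (i b)) j else 0) = t i j := by
    rw [Finset.sum_eq_single b]
    · rw [if_pos (by simp), Function.update_idem, Function.update_eq_self]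
    · intro b' _ hb'
      rw [if_neg]
      rw [Function.update_of_ne hb']
      exact hu b'
    · intro hb; exact absurd (Finset.mem_univ b) hb
  rw [hrhs] at h
  exact h.symm
end generic

/-- cnt is invariant under permuting positions -/
lemma cnt_comp (j : Fin 3 → Fin n) (σ : Equiv.Perm (Fin 3)) (v : Fin n) :
    cnt (fun a => j (σ a)) v = cnt j v := by
  unfold cnt
  apply Finset.card_bij (fun a _ => σ a)
  · intro a ha
    simp only [Finset.mem_filter, Finset.mem_univ, true_and] at ha ⊢
    exact ha
  · intro a _ b _ hab
    exact σ.injective hab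
  · intro a ha
    simp only [Finset.mem_filter, Finset.mem_univ, true_and] at ha
    exact ⟨σ.symm a, by simp [ha], by simp⟩

lemma D_zero_of_cnt {i j : Fin 3 → Fin n} {v : Fin n} (h : cnt i v ≠ cnt j v)
    (σ : Equiv.Perm (Fin 3)) : D σ i j = 0 := by
  rw [D_eq, if_neg]
  intro hall
  apply h
  have : i = fun a => j (σ a) := funext hall
  rw [this, cnt_comp]

/-- split identity for the delta tensors -/
lemma D_split (σ : Equiv.Perm (Fin 3)) (i j : Fin 3 → Fin n) (b : Fin 3) (u : Fin n)
    (hui : ∀ p, i p ≠ u) (huj : ∀ p, j p ≠ u) :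
    D σ i j = ∑ a : Fin 3, if j a = i b
      then D σ (Function.update i b u) (Function.update j a u) else 0 := by
  classical
  rw [D_eq]
  by_cases h : ∀ a, i a = j (σ a)
  · rw [if_pos h, Finset.sum_eq_single (σ b)]
    · rw [if_pos (h b).symm, D_eq, if_pos]
      intro c
      by_cases hc : c = b
      · subst hc; simp
      · rw [Function.update_of_ne hc, Function.update_of_ne (fun hh => hc (σ.injective hh))]
        exact h c
    · intro a _ ha
      by_cases hja : j a = i b
      · rw [if_pos hja, D_eq, if_neg]
        intro hall
        have hh := hall (σ.symm a)
        have hne : σ.symm a ≠ b := fun hb => ha (by rw [← hb, σ.apply_symm_apply])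
        rw [Function.update_of_ne hne, σ.apply_symm_apply, Function.update_self] at hh
        exact hui _ hh
      · rw [if_neg hja]
    · intro hb; exact absurd (Finset.mem_univ (σ b)) hb
  · rw [if_neg h]
    symm
    apply Finset.sum_eq_zero
    intro a _
    by_cases hja : j a = i b
    · rw [if_pos hja, D_eq, if_neg]
      intro hall
      apply h
      have hσb : σ b = a := by
        have hb := hall b
        rw [Function.update_self] at hb
        by_contra hne
        rw [Function.update_of_ne hne] at hb
        exact huj (σ b) hb.symm
      intro c
      by_cases hc : c = b
      · subst hc; rw [← hja, ← hσb]
      · have := hall c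
        rw [Function.update_of_ne hc,
          Function.update_of_ne (fun h' : σ c = a => hc (σ.injective (h'.trans hσb.symm)))] at this
        exact this
    · rw [if_neg hja]
end TI33

section swap
variable {n : ℕ}

def upd2 (f : Fin 3 → Fin n) (p q : Fin 3) (α β : Fin n) : Fin 3 → Fin n :=
  Function.update (Function.update f p α) q β

lemma upd2_apply (f : Fin 3 → Fin n) (p q : Fin 3) (α β : Fin n) (r : Fin 3) :
    upd2 f p q α β r = if r = q then β else if r = p then α else f r := by
  rw [upd2, Function.update_apply, Function.update_apply]

lemma upd2_upd1 (f : Fin 3 → Fin n) {p q : Fin 3} (hpq : p ≠ q) (α β α' : Fin n) :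
    Function.update (upd2 f p q α β) p α' = upd2 f p q α' β := by
  rw [upd2, Function.update_comm hpq, Function.update_idem, upd2, Function.update_comm hpq]

lemma upd2_upd2 (f : Fin 3 → Fin n) (p q : Fin 3) (α β β' : Fin n) :
    Function.update (upd2 f p q α β) q β' = upd2 f p q α β' := by
  rw [upd2, Function.update_idem, upd2]

lemma upd2_self (f : Fin 3 → Fin n) (p q : Fin 3) : upd2 f p q (f p) (f q) = f := by
  rw [upd2, Function.update_eq_self, Function.update_eq_self]

lemma sum3_pair (f : Fin 3 → ℂ) {a1 a2 : Fin 3} (ha : a1 ≠ a2)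
    (h0 : ∀ a, a ≠ a1 → a ≠ a2 → f a = 0) : (∑ a, f a) = f a1 + f a2 := by
  rw [← Finset.sum_pair ha]
  symm
  apply Finset.sum_subset (Finset.subset_univ _)
  intro x _ hx
  simp only [Finset.mem_insert, Finset.mem_singleton, not_or] at hx
  exact h0 x hx.1 hx.2

lemma sum3_single (f : Fin 3 → ℂ) (a1 : Fin 3)
    (h0 : ∀ a, a ≠ a1 → f a = 0) : (∑ a, f a) = f a1 :=
  Finset.sum_eq_single a1 (fun b _ hb => h0 b hb) (fun h => absurd (Finset.mem_univ a1) h)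

lemma sum_upd2_pair (g : (Fin 3 → Fin n) → ℂ) (f : Fin 3 → Fin n) {p q : Fin 3} (hpq : p ≠ q)
    (w w' : Fin n) (hother : ∀ r, r ≠ p → r ≠ q → f r ≠ w) :
    (∑ a, if upd2 f p q w w a = w then g (Function.update (upd2 f p q w w) a w') else 0)
      = g (upd2 f p q w' w) + g (upd2 f p q w w') := by
  rw [sum3_pair _ hpq (fun r h1 h2 => ?_)]
  · rw [if_pos (by rw [upd2_apply, if_neg hpq, if_pos rfl]),
      if_pos (by rw [upd2_apply, if_pos rfl]),
      upd2_upd1 _ hpq, upd2_upd2]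
  · rw [if_neg (by rw [upd2_apply, if_neg h2, if_neg h1]; exact hother r h1 h2)]

lemma sum_upd2_single1 (g : (Fin 3 → Fin n) → ℂ) (f : Fin 3 → Fin n) {p q : Fin 3} (hpq : p ≠ q)
    {α β w : Fin n} (w' : Fin n) (hα : α = w) (hβ : β ≠ w)
    (hother : ∀ r, r ≠ p → r ≠ q → f r ≠ w) :
    (∑ a, if upd2 f p q α β a = w then g (Function.update (upd2 f p q α β) a w') else 0)
      = g (upd2 f p q w' β) := by
  rw [sum3_single _ p (fun r h1 => ?_)]
  · rw [if_pos (by rw [upd2_apply, if_neg hpq, if_pos rfl, hα]), upd2_upd1 _ hpq]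
  · by_cases h2 : r = q
    · subst h2
      rw [if_neg (by rw [upd2_apply, if_pos rfl]; exact hβ)]
    · rw [if_neg (by rw [upd2_apply, if_neg h2, if_neg h1]; exact hother r h1 h2)]

lemma sum_upd2_single2 (g : (Fin 3 → Fin n) → ℂ) (f : Fin 3 → Fin n) {p q : Fin 3} (hpq : p ≠ q)
    {α β w : Fin n} (w' : Fin n) (hα : α ≠ w) (hβ : β = w)
    (hother : ∀ r, r ≠ p → r ≠ q → f r ≠ w) :
    (∑ a, if upd2 f p q α β a = w then g (Function.update (upd2 f p q α β) a w') else 0)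
      = g (upd2 f p q α w') := by
  rw [sum3_single _ q (fun r h2 => ?_)]
  · rw [if_pos (by rw [upd2_apply, if_pos rfl, hβ]), upd2_upd2]
  · by_cases h1 : r = p
    · subst h1
      rw [if_neg (by rw [upd2_apply, if_neg h2, if_pos rfl]; exact hα)]
    · rw [if_neg (by rw [upd2_apply, if_neg h2, if_neg h1]; exact hother r h1 h2)]

variable (t : (Fin 3 → Fin n) → (Fin 3 → Fin n) → ℂ)
variable (hR : ∀ u v (i j : Fin 3 → Fin n),
    (∑ a : Fin 3, if j a = v then t i (Function.update j a u) else 0)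
      = ∑ b : Fin 3, if i b = u then t (Function.update i b v) j else 0)

include hR in
lemma swap_lemma (u v : Fin n) (huv : u ≠ v) (i j : Fin 3 → Fin n)
    (b1 b2 a1 a2 : Fin 3) (hb : b1 ≠ b2) (ha : a1 ≠ a2)
    (hib1 : i b1 = u) (hib2 : i b2 = v) (hja1 : j a1 = u) (hja2 : j a2 = v)
    (hi3 : ∀ p, p ≠ b1 → p ≠ b2 → i p ≠ u ∧ i p ≠ v)
    (hj3 : ∀ p, p ≠ a1 → p ≠ a2 → j p ≠ u ∧ j p ≠ v) :
    t (upd2 i b1 b2 v u) (upd2 j a1 a2 v u) = t i j := by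
  have hJv : ∀ r, r ≠ a1 → r ≠ a2 → j r ≠ v := fun r h1 h2 => (hj3 r h1 h2).2
  have hJu : ∀ r, r ≠ a1 → r ≠ a2 → j r ≠ u := fun r h1 h2 => (hj3 r h1 h2).1
  have hIv : ∀ r, r ≠ b1 → r ≠ b2 → i r ≠ v := fun r h1 h2 => (hi3 r h1 h2).2
  have hIu : ∀ r, r ≠ b1 → r ≠ b2 → i r ≠ u := fun r h1 h2 => (hi3 r h1 h2).1
  have h1 := hR u v (upd2 i b1 b2 u v) (upd2 j a1 a2 v v)
  rw [sum_upd2_pair _ _ ha v u hJv,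
    sum_upd2_single1 (fun f => t f (upd2 j a1 a2 v v)) _ hb v rfl (Ne.symm huv) hIu] at h1
  have h2 := hR u v (upd2 i b1 b2 v u) (upd2 j a1 a2 v v)
  rw [sum_upd2_pair _ _ ha v u hJv,
    sum_upd2_single2 (fun f => t f (upd2 j a1 a2 v v)) _ hb v (Ne.symm huv) rfl hIu] at h2
  have h3 := hR v u (upd2 i b1 b2 u v) (upd2 j a1 a2 u u)
  rw [sum_upd2_pair _ _ ha u v hJu,
    sum_upd2_single2 (fun f => t f (upd2 j a1 a2 u u)) _ hb u huv rfl hIv] at h3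
  have h5 := hR u v (upd2 i b1 b2 u u) (upd2 j a1 a2 u v)
  rw [sum_upd2_single2 (t (upd2 i b1 b2 u u)) _ ha u huv rfl hJv,
    sum_upd2_pair (fun f => t f (upd2 j a1 a2 u v)) _ hb u v hIu] at h5
  have hi' : upd2 i b1 b2 u v = i := by
    have := upd2_self i b1 b2
    rwa [hib1, hib2] at this
  have hj' : upd2 j a1 a2 u v = j := by
    have := upd2_self j a1 a2
    rwa [hja1, hja2] at this
  rw [hi'] at h1 h3 h5
  rw [hj'] at h1 h2 h3 h5
  linear_combination h2 - h1 + h3 + h5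
end swap
section big
variable {n : ℕ}
variable (t : (Fin 3 → Fin n) → (Fin 3 → Fin n) → ℂ)
variable (hR : ∀ u v (i j : Fin 3 → Fin n),
    (∑ a : Fin 3, if j a = v then t i (Function.update j a u) else 0)
      = ∑ b : Fin 3, if i b = u then t (Function.update i b v) j else 0)

include hR in
/-- relabel a single value `u` (occurring once in each of `i`, `j`) to a fresh value `v` -/
lemma relabel_one {u v : Fin n} (i j : Fin 3 → Fin n) {b a : Fin 3}
    (hib : i b = u) (hja : j a = u) (hja' : ∀ p, p ≠ a → j p ≠ u)
    (hvi : ∀ p, i p ≠ v) :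
    t (Function.update i b v) (Function.update j a v) = t i j := by
  have h := TI33.split t hR i j b v hvi
  rw [hib] at h
  rw [h, sum3_single _ a (fun p hp => by rw [if_neg (hja' p hp)]), if_pos hja]

include hR in
lemma relabel (u v : Fin n) (i j : Fin 3 → Fin n) (hi : Function.Injective i)
    (hj : Function.Injective j) (hr : Set.range i = Set.range j) :
    t (fun a => Equiv.swap u v (i a)) (fun a => Equiv.swap u v (j a)) = t i j := by
  rcases eq_or_ne u v with rfl | huv
  · simp
  by_cases hu : u ∈ Set.range i
  · by_cases hv : v ∈ Set.range i
    · -- both occur : use swap_lemma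
      have hu' : u ∈ Set.range j := hr ▸ hu
      have hv' : v ∈ Set.range j := hr ▸ hv
      obtain ⟨b1, hb1⟩ := hu
      obtain ⟨b2, hb2⟩ := hv
      obtain ⟨a1, ha1⟩ := hu'
      obtain ⟨a2, ha2⟩ := hv'
      have hb : b1 ≠ b2 := fun h => huv (by rw [← hb1, h, hb2])
      have ha : a1 ≠ a2 := fun h => huv (by rw [← ha1, h, ha2])
      have hi3 : ∀ p, p ≠ b1 → p ≠ b2 → i p ≠ u ∧ i p ≠ v := by
        intro p h1 h2
        exact ⟨fun h => h1 (hi (h.trans hb1.symm)), fun h => h2 (hi (h.trans hb2.symm))⟩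
      have hj3 : ∀ p, p ≠ a1 → p ≠ a2 → j p ≠ u ∧ j p ≠ v := by
        intro p h1 h2
        exact ⟨fun h => h1 (hj (h.trans ha1.symm)), fun h => h2 (hj (h.trans ha2.symm))⟩
      have key := swap_lemma t hR u v huv i j b1 b2 a1 a2 hb ha hb1 hb2 ha1 ha2 hi3 hj3
      have e1 : (fun a => Equiv.swap u v (i a)) = upd2 i b1 b2 v u := by
        funext p
        rw [upd2_apply]
        by_cases h2 : p = b2
        · subst h2; rw [if_pos rfl, hb2, Equiv.swap_apply_right]
        by_cases h1 : p = b1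
        · subst h1; rw [if_neg h2, if_pos rfl, hb1, Equiv.swap_apply_left]
        · rw [if_neg h2, if_neg h1,
            Equiv.swap_apply_of_ne_of_ne (hi3 p h1 h2).1 (hi3 p h1 h2).2]
      have e2 : (fun a => Equiv.swap u v (j a)) = upd2 j a1 a2 v u := by
        funext p
        rw [upd2_apply]
        by_cases h2 : p = a2
        · subst h2; rw [if_pos rfl, ha2, Equiv.swap_apply_right]
        by_cases h1 : p = a1
        · subst h1; rw [if_neg h2, if_pos rfl, ha1, Equiv.swap_apply_left]
        · rw [if_neg h2, if_neg h1,
            Equiv.swap_apply_of_ne_of_ne (hj3 p h1 h2).1 (hj3 p h1 h2).2]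
      rw [e1, e2]
      exact key
    · -- u occurs, v fresh
      have hu' : u ∈ Set.range j := hr ▸ hu
      obtain ⟨b, hb⟩ := hu
      obtain ⟨a, ha⟩ := hu'
      have hv' : v ∉ Set.range j := hr ▸ hv
      have hvi : ∀ p, i p ≠ v := fun p h => hv ⟨p, h⟩
      have hvj : ∀ p, j p ≠ v := fun p h => hv' ⟨p, h⟩
      have hja' : ∀ p, p ≠ a → j p ≠ u := fun p hp h => hp (hj (h.trans ha.symm))
      have key := relabel_one t hR i j hb ha hja' hvi
      have e1 : (fun p => Equiv.swap u v (i p)) = Function.update i b v := by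
        funext p
        rw [Function.update_apply]
        by_cases h1 : p = b
        · subst h1; rw [if_pos rfl, hb, Equiv.swap_apply_left]
        · rw [if_neg h1,
            Equiv.swap_apply_of_ne_of_ne (fun h => h1 (hi (h.trans hb.symm))) (hvi p)]
      have e2 : (fun p => Equiv.swap u v (j p)) = Function.update j a v := by
        funext p
        rw [Function.update_apply]
        by_cases h1 : p = a
        · subst h1; rw [if_pos rfl, ha, Equiv.swap_apply_left]
        · rw [if_neg h1, Equiv.swap_apply_of_ne_of_ne (hja' p h1) (hvj p)]
      rw [e1, e2]
      exact key
  · by_cases hv : v ∈ Set.range i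
    · -- v occurs, u fresh : symmetric
      have hv' : v ∈ Set.range j := hr ▸ hv
      obtain ⟨b, hb⟩ := hv
      obtain ⟨a, ha⟩ := hv'
      have hu' : u ∉ Set.range j := hr ▸ hu
      have hui : ∀ p, i p ≠ u := fun p h => hu ⟨p, h⟩
      have huj : ∀ p, j p ≠ u := fun p h => hu' ⟨p, h⟩
      have hja' : ∀ p, p ≠ a → j p ≠ v := fun p hp h => hp (hj (h.trans ha.symm))
      have key := relabel_one t hR i j hb ha hja' hui
      have e1 : (fun p => Equiv.swap u v (i p)) = Function.update i b u := by
        funext p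
        rw [Function.update_apply]
        by_cases h1 : p = b
        · subst h1; rw [if_pos rfl, hb, Equiv.swap_apply_right]
        · rw [if_neg h1,
            Equiv.swap_apply_of_ne_of_ne (hui p) (fun h => h1 (hi (h.trans hb.symm)))]
      have e2 : (fun p => Equiv.swap u v (j p)) = Function.update j a u := by
        funext p
        rw [Function.update_apply]
        by_cases h1 : p = a
        · subst h1; rw [if_pos rfl, ha, Equiv.swap_apply_right]
        · rw [if_neg h1, Equiv.swap_apply_of_ne_of_ne (huj p) (hja' p h1)]
      rw [e1, e2]
      exact key
    · -- neither occurs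
      have hu' : u ∉ Set.range j := hr ▸ hu
      have hv' : v ∉ Set.range j := hr ▸ hv
      have e1 : (fun p => Equiv.swap u v (i p)) = i := by
        funext p
        exact Equiv.swap_apply_of_ne_of_ne (fun h => hu ⟨p, h⟩) (fun h => hv ⟨p, h⟩)
      have e2 : (fun p => Equiv.swap u v (j p)) = j := by
        funext p
        exact Equiv.swap_apply_of_ne_of_ne (fun h => hu' ⟨p, h⟩) (fun h => hv' ⟨p, h⟩)
      rw [e1, e2]
end big
section assemble
variable {n : ℕ}
variable (t : (Fin 3 → Fin n) → (Fin 3 → Fin n) → ℂ)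
variable (hR : ∀ u v (i j : Fin 3 → Fin n),
    (∑ a : Fin 3, if j a = v then t i (Function.update j a u) else 0)
      = ∑ b : Fin 3, if i b = u then t (Function.update i b v) j else 0)

open TI33

lemma cnt_le_one_iff (i : Fin 3 → Fin n) :
    Function.Injective i ↔ ∀ v, cnt i v ≤ 1 := by
  constructor
  · intro hi v
    apply Finset.card_le_one.mpr
    intro a ha b hb
    simp only [Finset.mem_filter] at ha hb
    exact hi (ha.2.trans hb.2.symm)
  · intro h a b hab
    by_contra hne
    have : ({a, b} : Finset (Fin 3)) ⊆ Finset.univ.filter (fun c => i c = i b) := by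
      intro c hc
      simp only [Finset.mem_insert, Finset.mem_singleton] at hc
      rcases hc with rfl | rfl <;> simp [hab]
    have h2 := Finset.card_le_card this
    rw [Finset.card_pair hne] at h2
    exact absurd (h2.trans (h (i b))) (by norm_num)

lemma cnt_pos_iff (i : Fin 3 → Fin n) (v : Fin n) :
    0 < cnt i v ↔ v ∈ Finset.univ.image i := by
  rw [cnt, Finset.card_pos]
  constructor
  · rintro ⟨a, ha⟩
    simp only [Finset.mem_filter] at ha
    exact Finset.mem_image.mpr ⟨a, Finset.mem_univ a, ha.2⟩
  · intro h
    obtain ⟨a, _, ha⟩ := Finset.mem_image.mp h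
    exact ⟨a, by simp [ha]⟩

lemma inj_iff_card_image (i : Fin 3 → Fin n) :
    Function.Injective i ↔ (Finset.univ.image i).card = 3 := by
  constructor
  · intro h
    rw [Finset.card_image_of_injective _ h]
    simp
  · intro h a b hab
    have hinj : Set.InjOn i (Finset.univ : Finset (Fin 3)) :=
      Finset.card_image_iff.mp (by rw [h]; simp)
    exact hinj (by simp) (by simp) hab

include hR in
lemma to_iota (ι : Fin 3 → Fin n) (hι : Function.Injective ι) :
    ∀ (k : ℕ) (i : Fin 3 → Fin n), Function.Injective i →
      (Finset.univ.filter (fun a => i a ≠ ι a)).card ≤ k →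
      ∀ π : Equiv.Perm (Fin 3), t i (fun a => i (π a)) = t ι (fun a => ι (π a)) := by
  intro k
  induction k with
  | zero =>
    intro i _ hcard π
    have : i = ι := by
      funext a
      by_contra h
      have : a ∈ Finset.univ.filter (fun a => i a ≠ ι a) := by simp [h]
      have := Finset.card_pos.mpr ⟨a, this⟩
      omega
    rw [this]
  | succ k ih =>
    intro i hi hcard π
    by_cases hfe : (Finset.univ.filter (fun a => i a ≠ ι a)) = ∅
    · have : i = ι := by
        funext a
        by_contra h
        exact absurd (Finset.filter_eq_empty_iff.mp hfe (Finset.mem_univ a)) (by simp [h])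
      rw [this]
    · obtain ⟨a0, ha0⟩ := Finset.nonempty_of_ne_empty hfe
      rw [Finset.mem_filter] at ha0
      have hne : i a0 ≠ ι a0 := ha0.2
      set u := i a0 with hu
      set v := ι a0 with hv
      have hrange : Set.range i = Set.range (fun a => i (π a)) := by
        ext w
        constructor
        · rintro ⟨a, rfl⟩; exact ⟨π.symm a, by simp⟩
        · rintro ⟨a, rfl⟩; exact ⟨π a, rfl⟩
      have hrel := relabel t hR u v i (fun a => i (π a)) hi
        (fun a b hab => π.injective (hi hab)) hrange
      have hi' : Function.Injective (fun a => Equiv.swap u v (i a)) :=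
        fun a b hab => hi ((Equiv.swap u v).injective hab)
      have hsub : (Finset.univ.filter (fun a => Equiv.swap u v (i a) ≠ ι a))
          ⊆ (Finset.univ.filter (fun a => i a ≠ ι a)).erase a0 := by
        intro a ha
        rw [Finset.mem_filter] at ha
        rw [Finset.mem_erase, Finset.mem_filter]
        constructor
        · rintro rfl
          exact ha.2 (by rw [← hu, Equiv.swap_apply_left])
        · refine ⟨Finset.mem_univ a, fun he => ha.2 ?_⟩
          have h1 : i a ≠ u := by
            intro h
            have haa : a = a0 := hi (h.trans hu)
            rw [haa] at he
            exact hne he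
          have h2 : i a ≠ v := by
            intro h
            have haa : a = a0 := hι (he.symm.trans (h.trans hv))
            rw [haa] at he
            exact hne he
          rw [Equiv.swap_apply_of_ne_of_ne h1 h2, he]
      have hcard' : (Finset.univ.filter (fun a => Equiv.swap u v (i a) ≠ ι a)).card ≤ k := by
        have h1 := Finset.card_le_card hsub
        have hmem : a0 ∈ Finset.univ.filter (fun a => i a ≠ ι a) := by
          rw [Finset.mem_filter]
          exact ⟨Finset.mem_univ a0, hne⟩
        have h2 := Finset.card_erase_of_mem hmem
        omega
      have := ih (fun a => Equiv.swap u v (i a)) hi' hcard' π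
      rw [← this, ← hrel]
end assemble
section algBig
variable {n : ℕ}
variable (t : (Fin 3 → Fin n) → (Fin 3 → Fin n) → ℂ)
variable (hR : ∀ u v (i j : Fin 3 → Fin n),
    (∑ a : Fin 3, if j a = v then t i (Function.update j a u) else 0)
      = ∑ b : Fin 3, if i b = u then t (Function.update i b v) j else 0)

open TI33

lemma image_update_insert (i : Fin 3 → Fin n) {b1 b2 : Fin 3} (hb : b1 ≠ b2)
    (heq : i b1 = i b2) (u : Fin n) :
    Finset.univ.image (Function.update i b1 u) = insert u (Finset.univ.image i) := by
  ext w
  simp only [Finset.mem_image, Finset.mem_insert, Finset.mem_univ, true_and]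
  constructor
  · rintro ⟨p, hp⟩
    by_cases h : p = b1
    · subst h
      rw [Function.update_self] at hp
      exact Or.inl hp.symm
    · rw [Function.update_of_ne h] at hp
      exact Or.inr ⟨p, hp⟩
  · rintro (rfl | ⟨p, hp⟩)
    · exact ⟨b1, Function.update_self _ _ _⟩
    · by_cases h : p = b1
      · subst h
        exact ⟨b2, by rw [Function.update_of_ne (Ne.symm hb), ← heq, hp]⟩
      · exact ⟨p, by rw [Function.update_of_ne h, hp]⟩

include hR in
lemma base_case (ι : Fin 3 → Fin n) (hι : Function.Injective ι)
    (i j : Fin 3 → Fin n) (hi : Function.Injective i) (hc : ∀ v, cnt i v = cnt j v) :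
    t i j = ∑ σ : Equiv.Perm (Fin 3), t ι (fun a => ι (σ⁻¹ a)) * D σ i j := by
  classical
  have hj : Function.Injective j := by
    rw [cnt_le_one_iff]
    intro v
    rw [← hc v]
    exact (cnt_le_one_iff i).mp hi v
  have hex : ∀ a, ∃ b, i b = j a := by
    intro a
    have h1 : j a ∈ Finset.univ.image j := Finset.mem_image.mpr ⟨a, Finset.mem_univ a, rfl⟩
    rw [← cnt_pos_iff, ← hc, cnt_pos_iff] at h1
    obtain ⟨b, _, hb⟩ := Finset.mem_image.mp h1
    exact ⟨b, hb⟩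
  choose f hf using hex
  have hfinj : Function.Injective f := fun a b hab => hj (by rw [← hf a, ← hf b, hab])
  have hfbij := Finite.injective_iff_bijective.mp hfinj
  let π : Equiv.Perm (Fin 3) := Equiv.ofBijective f hfbij
  have hπ : ∀ a, π a = f a := fun a => rfl
  have hjeq : j = fun a => i (π a) := by
    funext a
    rw [hπ, hf]
  have hD : ∀ σ : Equiv.Perm (Fin 3), D σ i j = if σ = π⁻¹ then 1 else 0 := by
    intro σ
    rw [D_eq]
    by_cases hσ : σ = π⁻¹
    · subst hσ
      rw [if_pos rfl, if_pos]
      intro a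
      rw [hjeq]
      simp
    · rw [if_neg hσ, if_neg]
      intro hall
      apply hσ
      apply Equiv.ext
      intro a
      have h := hall a
      rw [hjeq] at h
      have h2 : a = π (σ a) := hi h
      have h3 : π.symm a = σ a := (Equiv.symm_apply_eq π).mpr h2
      exact h3.symm
  rw [Finset.sum_congr rfl (fun σ _ => by rw [hD σ, mul_ite, mul_one, mul_zero]),
    Finset.sum_ite_eq' Finset.univ (π⁻¹) _, if_pos (Finset.mem_univ _)]
  have h1 := to_iota t hR ι hι 3 i hi (le_trans (Finset.card_filter_le _ _) (by simp)) π
  rw [hjeq]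
  rw [h1]
  simp

include hR in
theorem algBig (h3 : 3 ≤ n) :
    ∃ c : Equiv.Perm (Fin 3) → ℂ, ∀ i j, t i j = ∑ σ : Equiv.Perm (Fin 3), c σ * D σ i j := by
  classical
  set ι : Fin 3 → Fin n := fun a => Fin.castLE h3 a with hιdef
  have hι : Function.Injective ι := fun a b hab => Fin.castLE_injective h3 hab
  refine ⟨fun σ => t ι (fun a => ι (σ⁻¹ a)), ?_⟩
  have key : ∀ (m : ℕ) (i j : Fin 3 → Fin n), 3 - (Finset.univ.image i).card ≤ m →
      t i j = ∑ σ : Equiv.Perm (Fin 3), t ι (fun a => ι (σ⁻¹ a)) * D σ i j := by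
    intro m
    induction m with
    | zero =>
      intro i j hm
      by_cases hc : ∀ v, cnt i v = cnt j v
      · have hcard : (Finset.univ.image i).card = 3 := by
          have := Finset.card_image_le (s := (Finset.univ : Finset (Fin 3))) (f := i)
          simp only [Finset.card_univ, Fintype.card_fin] at this
          omega
        exact base_case t hR ι hι i j ((inj_iff_card_image i).mpr hcard) hc
      · push_neg at hc
        obtain ⟨v, hv⟩ := hc
        rw [hzero t hR hv]
        symm
        apply Finset.sum_eq_zero
        intro σ _
        rw [D_zero_of_cnt hv σ, mul_zero]
    | succ m ih =>
      intro i j hm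
      by_cases hc : ∀ v, cnt i v = cnt j v
      · by_cases hi : Function.Injective i
        · exact base_case t hR ι hι i j hi hc
        · -- split on a repeated value
          obtain ⟨b1, b2, heq, hb⟩ := Function.not_injective_iff.mp hi
          have himle : (Finset.univ.image i).card ≤ 2 := by
            have h1 := Finset.card_image_le (s := (Finset.univ : Finset (Fin 3))) (f := i)
            simp only [Finset.card_univ, Fintype.card_fin] at h1
            have h2 : (Finset.univ.image i).card ≠ 3 := fun h => hi ((inj_iff_card_image i).mpr h)
            omega
          have hcompl : ((Finset.univ.image i)ᶜ : Finset (Fin n)).Nonempty := by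
            rw [← Finset.card_pos, Finset.card_compl]
            have : Fintype.card (Fin n) = n := Fintype.card_fin n
            omega
          obtain ⟨u, hu⟩ := hcompl
          rw [Finset.mem_compl] at hu
          have hui : ∀ p, i p ≠ u := fun p h =>
            hu (Finset.mem_image.mpr ⟨p, Finset.mem_univ p, h⟩)
          have himeq : Finset.univ.image i = Finset.univ.image j := by
            ext w
            rw [← cnt_pos_iff, ← cnt_pos_iff, hc w]
          have huj : ∀ p, j p ≠ u := fun p h =>
            hu (himeq ▸ Finset.mem_image.mpr ⟨p, Finset.mem_univ p, h⟩)
          have hsplit := TI33.split t hR i j b1 u hui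
          have hDsplit : (∑ σ : Equiv.Perm (Fin 3), t ι (fun a => ι (σ⁻¹ a)) * D σ i j)
              = ∑ a : Fin 3, if j a = i b1 then
                  (∑ σ : Equiv.Perm (Fin 3), t ι (fun a => ι (σ⁻¹ a))
                    * D σ (Function.update i b1 u) (Function.update j a u)) else 0 := by
            rw [Finset.sum_congr rfl (fun σ _ => by
              rw [D_split σ i j b1 u hui huj, Finset.mul_sum])]
            rw [Finset.sum_comm]
            apply Finset.sum_congr rfl
            intro a _
            by_cases hja : j a = i b1
            · rw [if_pos hja]
              apply Finset.sum_congr rfl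
              intro σ _
              rw [if_pos hja]
            · rw [if_neg hja]
              apply Finset.sum_eq_zero
              intro σ _
              rw [if_neg hja, mul_zero]
          rw [hsplit, hDsplit]
          apply Finset.sum_congr rfl
          intro a _
          by_cases hja : j a = i b1
          · rw [if_pos hja, if_pos hja]
            apply ih
            have hins := image_update_insert i hb heq u
            rw [hins, Finset.card_insert_of_notMem hu]
            omega
          · rw [if_neg hja, if_neg hja]
      · push_neg at hc
        obtain ⟨v, hv⟩ := hc
        rw [hzero t hR hv]
        symm
        apply Finset.sum_eq_zero
        intro σ _
        rw [D_zero_of_cnt hv σ, mul_zero]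
  intro i j
  exact key 3 i j (by omega)
end algBig
section alg2
open TI33
def u3 : Fin 3 → Fin 2 := fun _ => 0
def v3 : Fin 3 → Fin 2 := fun _ => 1
def mI (b : Fin 3) : Fin 3 → Fin 2 := Function.update u3 b 1
def nI (b : Fin 3) : Fin 3 → Fin 2 := Function.update v3 b 0

def ps : Fin 6 → Equiv.Perm (Fin 3) :=
  ![1, Equiv.swap 0 1, Equiv.swap 0 2, Equiv.swap 1 2,
    Equiv.swap 0 1 * Equiv.swap 1 2, Equiv.swap 0 2 * Equiv.swap 1 2]

lemma ps_bij : Function.Bijective ps := by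
  rw [Fintype.bijective_iff_injective_and_card]
  constructor
  · decide
  · simp only [Fintype.card_fin, Fintype.card_perm]
    decide

lemma sum_perm3 (f : Equiv.Perm (Fin 3) → ℂ) :
    (∑ σ : Equiv.Perm (Fin 3), f σ)
      = f (ps 0) + f (ps 1) + f (ps 2) + f (ps 3) + f (ps 4) + f (ps 5) := by
  rw [← Fintype.sum_bijective ps ps_bij (fun k => f (ps k)) f (fun x => rfl), Fin.sum_univ_six]

lemma psA00 : ps 0 (0:Fin 3) = 0 := by decide
lemma psA01 : ps 0 (1:Fin 3) = 1 := by decide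
lemma psA02 : ps 0 (2:Fin 3) = 2 := by decide
lemma psA10 : ps 1 (0:Fin 3) = 1 := by decide
lemma psA11 : ps 1 (1:Fin 3) = 0 := by decide
lemma psA12 : ps 1 (2:Fin 3) = 2 := by decide
lemma psA20 : ps 2 (0:Fin 3) = 2 := by decide
lemma psA21 : ps 2 (1:Fin 3) = 1 := by decide
lemma psA22 : ps 2 (2:Fin 3) = 0 := by decide
lemma psA30 : ps 3 (0:Fin 3) = 0 := by decide
lemma psA31 : ps 3 (1:Fin 3) = 2 := by decide
lemma psA32 : ps 3 (2:Fin 3) = 1 := by decide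
lemma psA40 : ps 4 (0:Fin 3) = 1 := by decide
lemma psA41 : ps 4 (1:Fin 3) = 2 := by decide
lemma psA42 : ps 4 (2:Fin 3) = 0 := by decide
lemma psA50 : ps 5 (0:Fin 3) = 2 := by decide
lemma psA51 : ps 5 (1:Fin 3) = 0 := by decide
lemma psA52 : ps 5 (2:Fin 3) = 1 := by decide

lemma hDu (σ : Equiv.Perm (Fin 3)) : TI33.D σ u3 u3 = 1 := by
  rw [TI33.D_eq, if_pos (show ∀ a, u3 a = u3 (σ a) from fun a => rfl)]

lemma hDv (σ : Equiv.Perm (Fin 3)) : TI33.D σ v3 v3 = 1 := by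
  rw [TI33.D_eq, if_pos (show ∀ a, v3 a = v3 (σ a) from fun a => rfl)]

variable (t : (Fin 3 → Fin 2) → (Fin 3 → Fin 2) → ℂ)
variable (hR : ∀ u v (i j : Fin 3 → Fin 2),
    (∑ a : Fin 3, if j a = v then t i (Function.update j a u) else 0)
      = ∑ b : Fin 3, if i b = u then t (Function.update i b v) j else 0)

include hR in
lemma mism2 (c : Equiv.Perm (Fin 3) → ℂ) (i j : Fin 3 → Fin 2)
    (h : TI33.cnt i 1 ≠ TI33.cnt j 1) :
    t i j = ∑ σ : Equiv.Perm (Fin 3), c σ * TI33.D σ i j := by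
  rw [TI33.hzero t hR h]
  symm
  apply Finset.sum_eq_zero
  intro σ _
  rw [TI33.D_zero_of_cnt h σ, mul_zero]

lemma class2 : ∀ i : Fin 3 → Fin 2, i = u3 ∨ i = v3 ∨ i = mI 0 ∨ i = mI 1 ∨ i = mI 2
    ∨ i = nI 0 ∨ i = nI 1 ∨ i = nI 2 := by decide

include hR in
lemma r_mr0 : t (mI 0) (mI 0) + t (mI 0) (mI 1) + t (mI 0) (mI 2) = t u3 u3 := by
  have h := hR 1 0 (mI 0) u3
  rw [Fin.sum_univ_three, Fin.sum_univ_three] at h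
  simp only [show (u3 0 : Fin 2) = 0 from by decide,
    show Function.update u3 (0:Fin 3) (1:Fin 2) = (mI 0) from by decide,
    show (u3 1 : Fin 2) = 0 from by decide,
    show Function.update u3 (1:Fin 3) (1:Fin 2) = (mI 1) from by decide,
    show (u3 2 : Fin 2) = 0 from by decide,
    show Function.update u3 (2:Fin 3) (1:Fin 2) = (mI 2) from by decide,
    show ((mI 0) 0 : Fin 2) = 1 from by decide,
    show Function.update (mI 0) (0:Fin 3) (0:Fin 2) = u3 from by decide,
    show ((mI 0) 1 : Fin 2) = 0 from by decide,
    show ((mI 0) 2 : Fin 2) = 0 from by decide] at h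
  norm_num at h
  linear_combination h

include hR in
lemma r_mr1 : t (mI 1) (mI 0) + t (mI 1) (mI 1) + t (mI 1) (mI 2) = t u3 u3 := by
  have h := hR 1 0 (mI 1) u3
  rw [Fin.sum_univ_three, Fin.sum_univ_three] at h
  simp only [show (u3 0 : Fin 2) = 0 from by decide,
    show Function.update u3 (0:Fin 3) (1:Fin 2) = (mI 0) from by decide,
    show (u3 1 : Fin 2) = 0 from by decide,
    show Function.update u3 (1:Fin 3) (1:Fin 2) = (mI 1) from by decide,
    show (u3 2 : Fin 2) = 0 from by decide,
    show Function.update u3 (2:Fin 3) (1:Fin 2) = (mI 2) from by decide,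
    show ((mI 1) 0 : Fin 2) = 0 from by decide,
    show ((mI 1) 1 : Fin 2) = 1 from by decide,
    show Function.update (mI 1) (1:Fin 3) (0:Fin 2) = u3 from by decide,
    show ((mI 1) 2 : Fin 2) = 0 from by decide] at h
  norm_num at h
  linear_combination h

include hR in
lemma r_mr2 : t (mI 2) (mI 0) + t (mI 2) (mI 1) + t (mI 2) (mI 2) = t u3 u3 := by
  have h := hR 1 0 (mI 2) u3
  rw [Fin.sum_univ_three, Fin.sum_univ_three] at h
  simp only [show (u3 0 : Fin 2) = 0 from by decide,
    show Function.update u3 (0:Fin 3) (1:Fin 2) = (mI 0) from by decide,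
    show (u3 1 : Fin 2) = 0 from by decide,
    show Function.update u3 (1:Fin 3) (1:Fin 2) = (mI 1) from by decide,
    show (u3 2 : Fin 2) = 0 from by decide,
    show Function.update u3 (2:Fin 3) (1:Fin 2) = (mI 2) from by decide,
    show ((mI 2) 0 : Fin 2) = 0 from by decide,
    show ((mI 2) 1 : Fin 2) = 0 from by decide,
    show ((mI 2) 2 : Fin 2) = 1 from by decide,
    show Function.update (mI 2) (2:Fin 3) (0:Fin 2) = u3 from by decide] at h
  norm_num at h
  linear_combination h

include hR in
lemma r_mc0 : t u3 u3 = t (mI 0) (mI 0) + t (mI 1) (mI 0) + t (mI 2) (mI 0) := by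
  have h := hR 0 1 u3 (mI 0)
  rw [Fin.sum_univ_three, Fin.sum_univ_three] at h
  simp only [show ((mI 0) 0 : Fin 2) = 1 from by decide,
    show Function.update (mI 0) (0:Fin 3) (0:Fin 2) = u3 from by decide,
    show ((mI 0) 1 : Fin 2) = 0 from by decide,
    show ((mI 0) 2 : Fin 2) = 0 from by decide,
    show (u3 0 : Fin 2) = 0 from by decide,
    show Function.update u3 (0:Fin 3) (1:Fin 2) = (mI 0) from by decide,
    show (u3 1 : Fin 2) = 0 from by decide,
    show Function.update u3 (1:Fin 3) (1:Fin 2) = (mI 1) from by decide,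
    show (u3 2 : Fin 2) = 0 from by decide,
    show Function.update u3 (2:Fin 3) (1:Fin 2) = (mI 2) from by decide] at h
  norm_num at h
  linear_combination h

include hR in
lemma r_mc1 : t u3 u3 = t (mI 0) (mI 1) + t (mI 1) (mI 1) + t (mI 2) (mI 1) := by
  have h := hR 0 1 u3 (mI 1)
  rw [Fin.sum_univ_three, Fin.sum_univ_three] at h
  simp only [show ((mI 1) 0 : Fin 2) = 0 from by decide,
    show ((mI 1) 1 : Fin 2) = 1 from by decide,
    show Function.update (mI 1) (1:Fin 3) (0:Fin 2) = u3 from by decide,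
    show ((mI 1) 2 : Fin 2) = 0 from by decide,
    show (u3 0 : Fin 2) = 0 from by decide,
    show Function.update u3 (0:Fin 3) (1:Fin 2) = (mI 0) from by decide,
    show (u3 1 : Fin 2) = 0 from by decide,
    show Function.update u3 (1:Fin 3) (1:Fin 2) = (mI 1) from by decide,
    show (u3 2 : Fin 2) = 0 from by decide,
    show Function.update u3 (2:Fin 3) (1:Fin 2) = (mI 2) from by decide] at h
  norm_num at h
  linear_combination h

include hR in
lemma r_mc2 : t u3 u3 = t (mI 0) (mI 2) + t (mI 1) (mI 2) + t (mI 2) (mI 2) := by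
  have h := hR 0 1 u3 (mI 2)
  rw [Fin.sum_univ_three, Fin.sum_univ_three] at h
  simp only [show ((mI 2) 0 : Fin 2) = 0 from by decide,
    show ((mI 2) 1 : Fin 2) = 0 from by decide,
    show ((mI 2) 2 : Fin 2) = 1 from by decide,
    show Function.update (mI 2) (2:Fin 3) (0:Fin 2) = u3 from by decide,
    show (u3 0 : Fin 2) = 0 from by decide,
    show Function.update u3 (0:Fin 3) (1:Fin 2) = (mI 0) from by decide,
    show (u3 1 : Fin 2) = 0 from by decide,
    show Function.update u3 (1:Fin 3) (1:Fin 2) = (mI 1) from by decide,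
    show (u3 2 : Fin 2) = 0 from by decide,
    show Function.update u3 (2:Fin 3) (1:Fin 2) = (mI 2) from by decide] at h
  norm_num at h
  linear_combination h

include hR in
lemma r_nr0 : t (nI 0) (nI 0) + t (nI 0) (nI 1) + t (nI 0) (nI 2) = t v3 v3 := by
  have h := hR 0 1 (nI 0) v3
  rw [Fin.sum_univ_three, Fin.sum_univ_three] at h
  simp only [show (v3 0 : Fin 2) = 1 from by decide,
    show Function.update v3 (0:Fin 3) (0:Fin 2) = (nI 0) from by decide,
    show (v3 1 : Fin 2) = 1 from by decide,
    show Function.update v3 (1:Fin 3) (0:Fin 2) = (nI 1) from by decide,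
    show (v3 2 : Fin 2) = 1 from by decide,
    show Function.update v3 (2:Fin 3) (0:Fin 2) = (nI 2) from by decide,
    show ((nI 0) 0 : Fin 2) = 0 from by decide,
    show Function.update (nI 0) (0:Fin 3) (1:Fin 2) = v3 from by decide,
    show ((nI 0) 1 : Fin 2) = 1 from by decide,
    show ((nI 0) 2 : Fin 2) = 1 from by decide] at h
  norm_num at h
  linear_combination h

include hR in
lemma r_nr1 : t (nI 1) (nI 0) + t (nI 1) (nI 1) + t (nI 1) (nI 2) = t v3 v3 := by
  have h := hR 0 1 (nI 1) v3
  rw [Fin.sum_univ_three, Fin.sum_univ_three] at h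
  simp only [show (v3 0 : Fin 2) = 1 from by decide,
    show Function.update v3 (0:Fin 3) (0:Fin 2) = (nI 0) from by decide,
    show (v3 1 : Fin 2) = 1 from by decide,
    show Function.update v3 (1:Fin 3) (0:Fin 2) = (nI 1) from by decide,
    show (v3 2 : Fin 2) = 1 from by decide,
    show Function.update v3 (2:Fin 3) (0:Fin 2) = (nI 2) from by decide,
    show ((nI 1) 0 : Fin 2) = 1 from by decide,
    show ((nI 1) 1 : Fin 2) = 0 from by decide,
    show Function.update (nI 1) (1:Fin 3) (1:Fin 2) = v3 from by decide,
    show ((nI 1) 2 : Fin 2) = 1 from by decide] at h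
  norm_num at h
  linear_combination h

include hR in
lemma r_nr2 : t (nI 2) (nI 0) + t (nI 2) (nI 1) + t (nI 2) (nI 2) = t v3 v3 := by
  have h := hR 0 1 (nI 2) v3
  rw [Fin.sum_univ_three, Fin.sum_univ_three] at h
  simp only [show (v3 0 : Fin 2) = 1 from by decide,
    show Function.update v3 (0:Fin 3) (0:Fin 2) = (nI 0) from by decide,
    show (v3 1 : Fin 2) = 1 from by decide,
    show Function.update v3 (1:Fin 3) (0:Fin 2) = (nI 1) from by decide,
    show (v3 2 : Fin 2) = 1 from by decide,
    show Function.update v3 (2:Fin 3) (0:Fin 2) = (nI 2) from by decide,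
    show ((nI 2) 0 : Fin 2) = 1 from by decide,
    show ((nI 2) 1 : Fin 2) = 1 from by decide,
    show ((nI 2) 2 : Fin 2) = 0 from by decide,
    show Function.update (nI 2) (2:Fin 3) (1:Fin 2) = v3 from by decide] at h
  norm_num at h
  linear_combination h

include hR in
lemma r_nc0 : t v3 v3 = t (nI 0) (nI 0) + t (nI 1) (nI 0) + t (nI 2) (nI 0) := by
  have h := hR 1 0 v3 (nI 0)
  rw [Fin.sum_univ_three, Fin.sum_univ_three] at h
  simp only [show ((nI 0) 0 : Fin 2) = 0 from by decide,
    show Function.update (nI 0) (0:Fin 3) (1:Fin 2) = v3 from by decide,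
    show ((nI 0) 1 : Fin 2) = 1 from by decide,
    show ((nI 0) 2 : Fin 2) = 1 from by decide,
    show (v3 0 : Fin 2) = 1 from by decide,
    show Function.update v3 (0:Fin 3) (0:Fin 2) = (nI 0) from by decide,
    show (v3 1 : Fin 2) = 1 from by decide,
    show Function.update v3 (1:Fin 3) (0:Fin 2) = (nI 1) from by decide,
    show (v3 2 : Fin 2) = 1 from by decide,
    show Function.update v3 (2:Fin 3) (0:Fin 2) = (nI 2) from by decide] at h
  norm_num at h
  linear_combination h

include hR in
lemma r_nc1 : t v3 v3 = t (nI 0) (nI 1) + t (nI 1) (nI 1) + t (nI 2) (nI 1) := by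
  have h := hR 1 0 v3 (nI 1)
  rw [Fin.sum_univ_three, Fin.sum_univ_three] at h
  simp only [show ((nI 1) 0 : Fin 2) = 1 from by decide,
    show ((nI 1) 1 : Fin 2) = 0 from by decide,
    show Function.update (nI 1) (1:Fin 3) (1:Fin 2) = v3 from by decide,
    show ((nI 1) 2 : Fin 2) = 1 from by decide,
    show (v3 0 : Fin 2) = 1 from by decide,
    show Function.update v3 (0:Fin 3) (0:Fin 2) = (nI 0) from by decide,
    show (v3 1 : Fin 2) = 1 from by decide,
    show Function.update v3 (1:Fin 3) (0:Fin 2) = (nI 1) from by decide,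
    show (v3 2 : Fin 2) = 1 from by decide,
    show Function.update v3 (2:Fin 3) (0:Fin 2) = (nI 2) from by decide] at h
  norm_num at h
  linear_combination h

include hR in
lemma r_nc2 : t v3 v3 = t (nI 0) (nI 2) + t (nI 1) (nI 2) + t (nI 2) (nI 2) := by
  have h := hR 1 0 v3 (nI 2)
  rw [Fin.sum_univ_three, Fin.sum_univ_three] at h
  simp only [show ((nI 2) 0 : Fin 2) = 1 from by decide,
    show ((nI 2) 1 : Fin 2) = 1 from by decide,
    show ((nI 2) 2 : Fin 2) = 0 from by decide,
    show Function.update (nI 2) (2:Fin 3) (1:Fin 2) = v3 from by decide,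
    show (v3 0 : Fin 2) = 1 from by decide,
    show Function.update v3 (0:Fin 3) (0:Fin 2) = (nI 0) from by decide,
    show (v3 1 : Fin 2) = 1 from by decide,
    show Function.update v3 (1:Fin 3) (0:Fin 2) = (nI 1) from by decide,
    show (v3 2 : Fin 2) = 1 from by decide,
    show Function.update v3 (2:Fin 3) (0:Fin 2) = (nI 2) from by decide] at h
  norm_num at h
  linear_combination h

include hR in
lemma r_cr00 : t (mI 0) (mI 2) + t (mI 0) (mI 1) = t (nI 2) (nI 0) + t (nI 1) (nI 0) := by
  have h := hR 0 1 (mI 0) (nI 0)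
  rw [Fin.sum_univ_three, Fin.sum_univ_three] at h
  simp only [show ((nI 0) 0 : Fin 2) = 0 from by decide,
    show ((nI 0) 1 : Fin 2) = 1 from by decide,
    show Function.update (nI 0) (1:Fin 3) (0:Fin 2) = (mI 2) from by decide,
    show ((nI 0) 2 : Fin 2) = 1 from by decide,
    show Function.update (nI 0) (2:Fin 3) (0:Fin 2) = (mI 1) from by decide,
    show ((mI 0) 0 : Fin 2) = 1 from by decide,
    show ((mI 0) 1 : Fin 2) = 0 from by decide,
    show Function.update (mI 0) (1:Fin 3) (1:Fin 2) = (nI 2) from by decide,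
    show ((mI 0) 2 : Fin 2) = 0 from by decide,
    show Function.update (mI 0) (2:Fin 3) (1:Fin 2) = (nI 1) from by decide] at h
  norm_num at h
  linear_combination h

include hR in
lemma r_cr01 : t (mI 0) (mI 2) + t (mI 0) (mI 0) = t (nI 2) (nI 1) + t (nI 1) (nI 1) := by
  have h := hR 0 1 (mI 0) (nI 1)
  rw [Fin.sum_univ_three, Fin.sum_univ_three] at h
  simp only [show ((nI 1) 0 : Fin 2) = 1 from by decide,
    show Function.update (nI 1) (0:Fin 3) (0:Fin 2) = (mI 2) from by decide,
    show ((nI 1) 1 : Fin 2) = 0 from by decide,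
    show ((nI 1) 2 : Fin 2) = 1 from by decide,
    show Function.update (nI 1) (2:Fin 3) (0:Fin 2) = (mI 0) from by decide,
    show ((mI 0) 0 : Fin 2) = 1 from by decide,
    show ((mI 0) 1 : Fin 2) = 0 from by decide,
    show Function.update (mI 0) (1:Fin 3) (1:Fin 2) = (nI 2) from by decide,
    show ((mI 0) 2 : Fin 2) = 0 from by decide,
    show Function.update (mI 0) (2:Fin 3) (1:Fin 2) = (nI 1) from by decide] at h
  norm_num at h
  linear_combination h

include hR in
lemma r_cr02 : t (mI 0) (mI 1) + t (mI 0) (mI 0) = t (nI 2) (nI 2) + t (nI 1) (nI 2) := by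
  have h := hR 0 1 (mI 0) (nI 2)
  rw [Fin.sum_univ_three, Fin.sum_univ_three] at h
  simp only [show ((nI 2) 0 : Fin 2) = 1 from by decide,
    show Function.update (nI 2) (0:Fin 3) (0:Fin 2) = (mI 1) from by decide,
    show ((nI 2) 1 : Fin 2) = 1 from by decide,
    show Function.update (nI 2) (1:Fin 3) (0:Fin 2) = (mI 0) from by decide,
    show ((nI 2) 2 : Fin 2) = 0 from by decide,
    show ((mI 0) 0 : Fin 2) = 1 from by decide,
    show ((mI 0) 1 : Fin 2) = 0 from by decide,
    show Function.update (mI 0) (1:Fin 3) (1:Fin 2) = (nI 2) from by decide,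
    show ((mI 0) 2 : Fin 2) = 0 from by decide,
    show Function.update (mI 0) (2:Fin 3) (1:Fin 2) = (nI 1) from by decide] at h
  norm_num at h
  linear_combination h

include hR in
lemma r_cr10 : t (mI 1) (mI 2) + t (mI 1) (mI 1) = t (nI 2) (nI 0) + t (nI 0) (nI 0) := by
  have h := hR 0 1 (mI 1) (nI 0)
  rw [Fin.sum_univ_three, Fin.sum_univ_three] at h
  simp only [show ((nI 0) 0 : Fin 2) = 0 from by decide,
    show ((nI 0) 1 : Fin 2) = 1 from by decide,
    show Function.update (nI 0) (1:Fin 3) (0:Fin 2) = (mI 2) from by decide,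
    show ((nI 0) 2 : Fin 2) = 1 from by decide,
    show Function.update (nI 0) (2:Fin 3) (0:Fin 2) = (mI 1) from by decide,
    show ((mI 1) 0 : Fin 2) = 0 from by decide,
    show Function.update (mI 1) (0:Fin 3) (1:Fin 2) = (nI 2) from by decide,
    show ((mI 1) 1 : Fin 2) = 1 from by decide,
    show ((mI 1) 2 : Fin 2) = 0 from by decide,
    show Function.update (mI 1) (2:Fin 3) (1:Fin 2) = (nI 0) from by decide] at h
  norm_num at h
  linear_combination h

include hR in
lemma r_cr11 : t (mI 1) (mI 2) + t (mI 1) (mI 0) = t (nI 2) (nI 1) + t (nI 0) (nI 1) := by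
  have h := hR 0 1 (mI 1) (nI 1)
  rw [Fin.sum_univ_three, Fin.sum_univ_three] at h
  simp only [show ((nI 1) 0 : Fin 2) = 1 from by decide,
    show Function.update (nI 1) (0:Fin 3) (0:Fin 2) = (mI 2) from by decide,
    show ((nI 1) 1 : Fin 2) = 0 from by decide,
    show ((nI 1) 2 : Fin 2) = 1 from by decide,
    show Function.update (nI 1) (2:Fin 3) (0:Fin 2) = (mI 0) from by decide,
    show ((mI 1) 0 : Fin 2) = 0 from by decide,
    show Function.update (mI 1) (0:Fin 3) (1:Fin 2) = (nI 2) from by decide,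
    show ((mI 1) 1 : Fin 2) = 1 from by decide,
    show ((mI 1) 2 : Fin 2) = 0 from by decide,
    show Function.update (mI 1) (2:Fin 3) (1:Fin 2) = (nI 0) from by decide] at h
  norm_num at h
  linear_combination h

include hR in
lemma r_cr12 : t (mI 1) (mI 1) + t (mI 1) (mI 0) = t (nI 2) (nI 2) + t (nI 0) (nI 2) := by
  have h := hR 0 1 (mI 1) (nI 2)
  rw [Fin.sum_univ_three, Fin.sum_univ_three] at h
  simp only [show ((nI 2) 0 : Fin 2) = 1 from by decide,
    show Function.update (nI 2) (0:Fin 3) (0:Fin 2) = (mI 1) from by decide,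
    show ((nI 2) 1 : Fin 2) = 1 from by decide,
    show Function.update (nI 2) (1:Fin 3) (0:Fin 2) = (mI 0) from by decide,
    show ((nI 2) 2 : Fin 2) = 0 from by decide,
    show ((mI 1) 0 : Fin 2) = 0 from by decide,
    show Function.update (mI 1) (0:Fin 3) (1:Fin 2) = (nI 2) from by decide,
    show ((mI 1) 1 : Fin 2) = 1 from by decide,
    show ((mI 1) 2 : Fin 2) = 0 from by decide,
    show Function.update (mI 1) (2:Fin 3) (1:Fin 2) = (nI 0) from by decide] at h
  norm_num at h
  linear_combination h

include hR in
lemma r_cr20 : t (mI 2) (mI 2) + t (mI 2) (mI 1) = t (nI 1) (nI 0) + t (nI 0) (nI 0) := by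
  have h := hR 0 1 (mI 2) (nI 0)
  rw [Fin.sum_univ_three, Fin.sum_univ_three] at h
  simp only [show ((nI 0) 0 : Fin 2) = 0 from by decide,
    show ((nI 0) 1 : Fin 2) = 1 from by decide,
    show Function.update (nI 0) (1:Fin 3) (0:Fin 2) = (mI 2) from by decide,
    show ((nI 0) 2 : Fin 2) = 1 from by decide,
    show Function.update (nI 0) (2:Fin 3) (0:Fin 2) = (mI 1) from by decide,
    show ((mI 2) 0 : Fin 2) = 0 from by decide,
    show Function.update (mI 2) (0:Fin 3) (1:Fin 2) = (nI 1) from by decide,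
    show ((mI 2) 1 : Fin 2) = 0 from by decide,
    show Function.update (mI 2) (1:Fin 3) (1:Fin 2) = (nI 0) from by decide,
    show ((mI 2) 2 : Fin 2) = 1 from by decide] at h
  norm_num at h
  linear_combination h

include hR in
lemma r_cr21 : t (mI 2) (mI 2) + t (mI 2) (mI 0) = t (nI 1) (nI 1) + t (nI 0) (nI 1) := by
  have h := hR 0 1 (mI 2) (nI 1)
  rw [Fin.sum_univ_three, Fin.sum_univ_three] at h
  simp only [show ((nI 1) 0 : Fin 2) = 1 from by decide,
    show Function.update (nI 1) (0:Fin 3) (0:Fin 2) = (mI 2) from by decide,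
    show ((nI 1) 1 : Fin 2) = 0 from by decide,
    show ((nI 1) 2 : Fin 2) = 1 from by decide,
    show Function.update (nI 1) (2:Fin 3) (0:Fin 2) = (mI 0) from by decide,
    show ((mI 2) 0 : Fin 2) = 0 from by decide,
    show Function.update (mI 2) (0:Fin 3) (1:Fin 2) = (nI 1) from by decide,
    show ((mI 2) 1 : Fin 2) = 0 from by decide,
    show Function.update (mI 2) (1:Fin 3) (1:Fin 2) = (nI 0) from by decide,
    show ((mI 2) 2 : Fin 2) = 1 from by decide] at h
  norm_num at h
  linear_combination h

include hR in
lemma r_cr22 : t (mI 2) (mI 1) + t (mI 2) (mI 0) = t (nI 1) (nI 2) + t (nI 0) (nI 2) := by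
  have h := hR 0 1 (mI 2) (nI 2)
  rw [Fin.sum_univ_three, Fin.sum_univ_three] at h
  simp only [show ((nI 2) 0 : Fin 2) = 1 from by decide,
    show Function.update (nI 2) (0:Fin 3) (0:Fin 2) = (mI 1) from by decide,
    show ((nI 2) 1 : Fin 2) = 1 from by decide,
    show Function.update (nI 2) (1:Fin 3) (0:Fin 2) = (mI 0) from by decide,
    show ((nI 2) 2 : Fin 2) = 0 from by decide,
    show ((mI 2) 0 : Fin 2) = 0 from by decide,
    show Function.update (mI 2) (0:Fin 3) (1:Fin 2) = (nI 1) from by decide,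
    show ((mI 2) 1 : Fin 2) = 0 from by decide,
    show Function.update (mI 2) (1:Fin 3) (1:Fin 2) = (nI 0) from by decide,
    show ((mI 2) 2 : Fin 2) = 1 from by decide] at h
  norm_num at h
  linear_combination h

include hR in
theorem alg2 : ∃ c : Equiv.Perm (Fin 3) → ℂ, ∀ i j, t i j
    = ∑ σ : Equiv.Perm (Fin 3), c σ * TI33.D σ i j := by
  refine ⟨fun σ => (t (mI 0) (mI (σ 0)) + t (mI 1) (mI (σ 1)) + t (mI 2) (mI (σ 2))) / 3
    - t u3 u3 / 6, ?_⟩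
  intro i j
  rcases class2 i with rfl | rfl | rfl | rfl | rfl | rfl | rfl | rfl <;>
    rcases class2 j with rfl | rfl | rfl | rfl | rfl | rfl | rfl | rfl
  · rw [sum_perm3]
    simp only [hDu, psA00, psA01, psA02, psA10, psA11, psA12, psA20, psA21, psA22, psA30, psA31, psA32, psA40, psA41, psA42, psA50, psA51, psA52]
    linear_combination ((2 : ℂ)/3) * (r_mc0 t hR) + ((2 : ℂ)/3) * (r_mc1 t hR) + ((2 : ℂ)/3) * (r_mc2 t hR)
  · exact mism2 t hR _ _ _ (by decide)
  · exact mism2 t hR _ _ _ (by decide)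
  · exact mism2 t hR _ _ _ (by decide)
  · exact mism2 t hR _ _ _ (by decide)
  · exact mism2 t hR _ _ _ (by decide)
  · exact mism2 t hR _ _ _ (by decide)
  · exact mism2 t hR _ _ _ (by decide)
  · exact mism2 t hR _ _ _ (by decide)
  · rw [sum_perm3]
    simp only [hDv, psA00, psA01, psA02, psA10, psA11, psA12, psA20, psA21, psA22, psA30, psA31, psA32, psA40, psA41, psA42, psA50, psA51, psA52]
    linear_combination (r_mr0 t hR) + ((2 : ℂ)/3) * (r_mc0 t hR) + ((2 : ℂ)/3) * (r_mc1 t hR) + ((2 : ℂ)/3) * (r_mc2 t hR) + ((-1 : ℂ)/2) * (r_nr1 t hR) + ((-1 : ℂ)/2) * (r_nr2 t hR) + ((-1 : ℂ)/2) * (r_cr00 t hR) + ((-1 : ℂ)/2) * (r_cr01 t hR) + ((-1 : ℂ)/2) * (r_cr02 t hR)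
  · exact mism2 t hR _ _ _ (by decide)
  · exact mism2 t hR _ _ _ (by decide)
  · exact mism2 t hR _ _ _ (by decide)
  · exact mism2 t hR _ _ _ (by decide)
  · exact mism2 t hR _ _ _ (by decide)
  · exact mism2 t hR _ _ _ (by decide)
  · exact mism2 t hR _ _ _ (by decide)
  · exact mism2 t hR _ _ _ (by decide)
  · rw [sum_perm3]
    simp only [show TI33.D (ps 0) (mI 0) (mI 0) = (1:ℂ) from by rw [TI33.D_eq, if_pos (by decide)],
      show TI33.D (ps 1) (mI 0) (mI 0) = (0:ℂ) from by rw [TI33.D_eq, if_neg (by decide)],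
      show TI33.D (ps 2) (mI 0) (mI 0) = (0:ℂ) from by rw [TI33.D_eq, if_neg (by decide)],
      show TI33.D (ps 3) (mI 0) (mI 0) = (1:ℂ) from by rw [TI33.D_eq, if_pos (by decide)],
      show TI33.D (ps 4) (mI 0) (mI 0) = (0:ℂ) from by rw [TI33.D_eq, if_neg (by decide)],
      show TI33.D (ps 5) (mI 0) (mI 0) = (0:ℂ) from by rw [TI33.D_eq, if_neg (by decide)], psA00, psA01, psA02, psA10, psA11, psA12, psA20, psA21, psA22, psA30, psA31, psA32, psA40, psA41, psA42, psA50, psA51, psA52]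
    linear_combination ((1 : ℂ)/3) * (r_mr0 t hR) + ((1 : ℂ)/3) * (r_mc1 t hR) + ((1 : ℂ)/3) * (r_mc2 t hR)
  · rw [sum_perm3]
    simp only [show TI33.D (ps 0) (mI 0) (mI 1) = (0:ℂ) from by rw [TI33.D_eq, if_neg (by decide)],
      show TI33.D (ps 1) (mI 0) (mI 1) = (1:ℂ) from by rw [TI33.D_eq, if_pos (by decide)],
      show TI33.D (ps 2) (mI 0) (mI 1) = (0:ℂ) from by rw [TI33.D_eq, if_neg (by decide)],
      show TI33.D (ps 3) (mI 0) (mI 1) = (0:ℂ) from by rw [TI33.D_eq, if_neg (by decide)],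
      show TI33.D (ps 4) (mI 0) (mI 1) = (1:ℂ) from by rw [TI33.D_eq, if_pos (by decide)],
      show TI33.D (ps 5) (mI 0) (mI 1) = (0:ℂ) from by rw [TI33.D_eq, if_neg (by decide)], psA00, psA01, psA02, psA10, psA11, psA12, psA20, psA21, psA22, psA30, psA31, psA32, psA40, psA41, psA42, psA50, psA51, psA52]
    linear_combination ((1 : ℂ)/3) * (r_mr0 t hR) + ((1 : ℂ)/3) * (r_mc0 t hR) + ((1 : ℂ)/3) * (r_mc2 t hR)
  · rw [sum_perm3]
    simp only [show TI33.D (ps 0) (mI 0) (mI 2) = (0:ℂ) from by rw [TI33.D_eq, if_neg (by decide)],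
      show TI33.D (ps 1) (mI 0) (mI 2) = (0:ℂ) from by rw [TI33.D_eq, if_neg (by decide)],
      show TI33.D (ps 2) (mI 0) (mI 2) = (1:ℂ) from by rw [TI33.D_eq, if_pos (by decide)],
      show TI33.D (ps 3) (mI 0) (mI 2) = (0:ℂ) from by rw [TI33.D_eq, if_neg (by decide)],
      show TI33.D (ps 4) (mI 0) (mI 2) = (0:ℂ) from by rw [TI33.D_eq, if_neg (by decide)],
      show TI33.D (ps 5) (mI 0) (mI 2) = (1:ℂ) from by rw [TI33.D_eq, if_pos (by decide)], psA00, psA01, psA02, psA10, psA11, psA12, psA20, psA21, psA22, psA30, psA31, psA32, psA40, psA41, psA42, psA50, psA51, psA52]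
    linear_combination ((1 : ℂ)/3) * (r_mr0 t hR) + ((1 : ℂ)/3) * (r_mc0 t hR) + ((1 : ℂ)/3) * (r_mc1 t hR)
  · exact mism2 t hR _ _ _ (by decide)
  · exact mism2 t hR _ _ _ (by decide)
  · exact mism2 t hR _ _ _ (by decide)
  · exact mism2 t hR _ _ _ (by decide)
  · exact mism2 t hR _ _ _ (by decide)
  · rw [sum_perm3]
    simp only [show TI33.D (ps 0) (mI 1) (mI 0) = (0:ℂ) from by rw [TI33.D_eq, if_neg (by decide)],
      show TI33.D (ps 1) (mI 1) (mI 0) = (1:ℂ) from by rw [TI33.D_eq, if_pos (by decide)],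
      show TI33.D (ps 2) (mI 1) (mI 0) = (0:ℂ) from by rw [TI33.D_eq, if_neg (by decide)],
      show TI33.D (ps 3) (mI 1) (mI 0) = (0:ℂ) from by rw [TI33.D_eq, if_neg (by decide)],
      show TI33.D (ps 4) (mI 1) (mI 0) = (0:ℂ) from by rw [TI33.D_eq, if_neg (by decide)],
      show TI33.D (ps 5) (mI 1) (mI 0) = (1:ℂ) from by rw [TI33.D_eq, if_pos (by decide)], psA00, psA01, psA02, psA10, psA11, psA12, psA20, psA21, psA22, psA30, psA31, psA32, psA40, psA41, psA42, psA50, psA51, psA52]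
    linear_combination ((-1 : ℂ)/3) * (r_mr0 t hR) + ((-1 : ℂ)/3) * (r_mr2 t hR) + ((-1 : ℂ)/3) * (r_mc0 t hR)
  · rw [sum_perm3]
    simp only [show TI33.D (ps 0) (mI 1) (mI 1) = (1:ℂ) from by rw [TI33.D_eq, if_pos (by decide)],
      show TI33.D (ps 1) (mI 1) (mI 1) = (0:ℂ) from by rw [TI33.D_eq, if_neg (by decide)],
      show TI33.D (ps 2) (mI 1) (mI 1) = (1:ℂ) from by rw [TI33.D_eq, if_pos (by decide)],
      show TI33.D (ps 3) (mI 1) (mI 1) = (0:ℂ) from by rw [TI33.D_eq, if_neg (by decide)],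
      show TI33.D (ps 4) (mI 1) (mI 1) = (0:ℂ) from by rw [TI33.D_eq, if_neg (by decide)],
      show TI33.D (ps 5) (mI 1) (mI 1) = (0:ℂ) from by rw [TI33.D_eq, if_neg (by decide)], psA00, psA01, psA02, psA10, psA11, psA12, psA20, psA21, psA22, psA30, psA31, psA32, psA40, psA41, psA42, psA50, psA51, psA52]
    linear_combination ((-1 : ℂ)/3) * (r_mr0 t hR) + ((-1 : ℂ)/3) * (r_mr2 t hR) + ((-1 : ℂ)/3) * (r_mc1 t hR)
  · rw [sum_perm3]
    simp only [show TI33.D (ps 0) (mI 1) (mI 2) = (0:ℂ) from by rw [TI33.D_eq, if_neg (by decide)],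
      show TI33.D (ps 1) (mI 1) (mI 2) = (0:ℂ) from by rw [TI33.D_eq, if_neg (by decide)],
      show TI33.D (ps 2) (mI 1) (mI 2) = (0:ℂ) from by rw [TI33.D_eq, if_neg (by decide)],
      show TI33.D (ps 3) (mI 1) (mI 2) = (1:ℂ) from by rw [TI33.D_eq, if_pos (by decide)],
      show TI33.D (ps 4) (mI 1) (mI 2) = (1:ℂ) from by rw [TI33.D_eq, if_pos (by decide)],
      show TI33.D (ps 5) (mI 1) (mI 2) = (0:ℂ) from by rw [TI33.D_eq, if_neg (by decide)], psA00, psA01, psA02, psA10, psA11, psA12, psA20, psA21, psA22, psA30, psA31, psA32, psA40, psA41, psA42, psA50, psA51, psA52]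
    linear_combination ((-1 : ℂ)/3) * (r_mr0 t hR) + ((-1 : ℂ)/3) * (r_mr2 t hR) + ((-1 : ℂ)/3) * (r_mc2 t hR)
  · exact mism2 t hR _ _ _ (by decide)
  · exact mism2 t hR _ _ _ (by decide)
  · exact mism2 t hR _ _ _ (by decide)
  · exact mism2 t hR _ _ _ (by decide)
  · exact mism2 t hR _ _ _ (by decide)
  · rw [sum_perm3]
    simp only [show TI33.D (ps 0) (mI 2) (mI 0) = (0:ℂ) from by rw [TI33.D_eq, if_neg (by decide)],
      show TI33.D (ps 1) (mI 2) (mI 0) = (0:ℂ) from by rw [TI33.D_eq, if_neg (by decide)],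
      show TI33.D (ps 2) (mI 2) (mI 0) = (1:ℂ) from by rw [TI33.D_eq, if_pos (by decide)],
      show TI33.D (ps 3) (mI 2) (mI 0) = (0:ℂ) from by rw [TI33.D_eq, if_neg (by decide)],
      show TI33.D (ps 4) (mI 2) (mI 0) = (1:ℂ) from by rw [TI33.D_eq, if_pos (by decide)],
      show TI33.D (ps 5) (mI 2) (mI 0) = (0:ℂ) from by rw [TI33.D_eq, if_neg (by decide)], psA00, psA01, psA02, psA10, psA11, psA12, psA20, psA21, psA22, psA30, psA31, psA32, psA40, psA41, psA42, psA50, psA51, psA52]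
    linear_combination ((1 : ℂ)/3) * (r_mr2 t hR) + ((1 : ℂ)/3) * (r_mc1 t hR) + ((1 : ℂ)/3) * (r_mc2 t hR)
  · rw [sum_perm3]
    simp only [show TI33.D (ps 0) (mI 2) (mI 1) = (0:ℂ) from by rw [TI33.D_eq, if_neg (by decide)],
      show TI33.D (ps 1) (mI 2) (mI 1) = (0:ℂ) from by rw [TI33.D_eq, if_neg (by decide)],
      show TI33.D (ps 2) (mI 2) (mI 1) = (0:ℂ) from by rw [TI33.D_eq, if_neg (by decide)],
      show TI33.D (ps 3) (mI 2) (mI 1) = (1:ℂ) from by rw [TI33.D_eq, if_pos (by decide)],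
      show TI33.D (ps 4) (mI 2) (mI 1) = (0:ℂ) from by rw [TI33.D_eq, if_neg (by decide)],
      show TI33.D (ps 5) (mI 2) (mI 1) = (1:ℂ) from by rw [TI33.D_eq, if_pos (by decide)], psA00, psA01, psA02, psA10, psA11, psA12, psA20, psA21, psA22, psA30, psA31, psA32, psA40, psA41, psA42, psA50, psA51, psA52]
    linear_combination ((1 : ℂ)/3) * (r_mr2 t hR) + ((1 : ℂ)/3) * (r_mc0 t hR) + ((1 : ℂ)/3) * (r_mc2 t hR)
  · rw [sum_perm3]
    simp only [show TI33.D (ps 0) (mI 2) (mI 2) = (1:ℂ) from by rw [TI33.D_eq, if_pos (by decide)],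
      show TI33.D (ps 1) (mI 2) (mI 2) = (1:ℂ) from by rw [TI33.D_eq, if_pos (by decide)],
      show TI33.D (ps 2) (mI 2) (mI 2) = (0:ℂ) from by rw [TI33.D_eq, if_neg (by decide)],
      show TI33.D (ps 3) (mI 2) (mI 2) = (0:ℂ) from by rw [TI33.D_eq, if_neg (by decide)],
      show TI33.D (ps 4) (mI 2) (mI 2) = (0:ℂ) from by rw [TI33.D_eq, if_neg (by decide)],
      show TI33.D (ps 5) (mI 2) (mI 2) = (0:ℂ) from by rw [TI33.D_eq, if_neg (by decide)], psA00, psA01, psA02, psA10, psA11, psA12, psA20, psA21, psA22, psA30, psA31, psA32, psA40, psA41, psA42, psA50, psA51, psA52]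
    linear_combination ((1 : ℂ)/3) * (r_mr2 t hR) + ((1 : ℂ)/3) * (r_mc0 t hR) + ((1 : ℂ)/3) * (r_mc1 t hR)
  · exact mism2 t hR _ _ _ (by decide)
  · exact mism2 t hR _ _ _ (by decide)
  · exact mism2 t hR _ _ _ (by decide)
  · exact mism2 t hR _ _ _ (by decide)
  · exact mism2 t hR _ _ _ (by decide)
  · exact mism2 t hR _ _ _ (by decide)
  · exact mism2 t hR _ _ _ (by decide)
  · exact mism2 t hR _ _ _ (by decide)
  · rw [sum_perm3]
    simp only [show TI33.D (ps 0) (nI 0) (nI 0) = (1:ℂ) from by rw [TI33.D_eq, if_pos (by decide)],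
      show TI33.D (ps 1) (nI 0) (nI 0) = (0:ℂ) from by rw [TI33.D_eq, if_neg (by decide)],
      show TI33.D (ps 2) (nI 0) (nI 0) = (0:ℂ) from by rw [TI33.D_eq, if_neg (by decide)],
      show TI33.D (ps 3) (nI 0) (nI 0) = (1:ℂ) from by rw [TI33.D_eq, if_pos (by decide)],
      show TI33.D (ps 4) (nI 0) (nI 0) = (0:ℂ) from by rw [TI33.D_eq, if_neg (by decide)],
      show TI33.D (ps 5) (nI 0) (nI 0) = (0:ℂ) from by rw [TI33.D_eq, if_neg (by decide)], psA00, psA01, psA02, psA10, psA11, psA12, psA20, psA21, psA22, psA30, psA31, psA32, psA40, psA41, psA42, psA50, psA51, psA52]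
    linear_combination ((1 : ℂ)/3) * (r_mr0 t hR) + ((1 : ℂ)/3) * (r_mc1 t hR) + ((1 : ℂ)/3) * (r_mc2 t hR) + ((-1 : ℂ)/2) * (r_nr1 t hR) + ((-1 : ℂ)/2) * (r_nr2 t hR) + (-1 : ℂ) * (r_nc0 t hR) + ((1 : ℂ)/2) * (r_cr00 t hR) + ((-1 : ℂ)/2) * (r_cr01 t hR) + ((-1 : ℂ)/2) * (r_cr02 t hR)
  · rw [sum_perm3]
    simp only [show TI33.D (ps 0) (nI 0) (nI 1) = (0:ℂ) from by rw [TI33.D_eq, if_neg (by decide)],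
      show TI33.D (ps 1) (nI 0) (nI 1) = (1:ℂ) from by rw [TI33.D_eq, if_pos (by decide)],
      show TI33.D (ps 2) (nI 0) (nI 1) = (0:ℂ) from by rw [TI33.D_eq, if_neg (by decide)],
      show TI33.D (ps 3) (nI 0) (nI 1) = (0:ℂ) from by rw [TI33.D_eq, if_neg (by decide)],
      show TI33.D (ps 4) (nI 0) (nI 1) = (1:ℂ) from by rw [TI33.D_eq, if_pos (by decide)],
      show TI33.D (ps 5) (nI 0) (nI 1) = (0:ℂ) from by rw [TI33.D_eq, if_neg (by decide)], psA00, psA01, psA02, psA10, psA11, psA12, psA20, psA21, psA22, psA30, psA31, psA32, psA40, psA41, psA42, psA50, psA51, psA52]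
    linear_combination ((1 : ℂ)/3) * (r_mr0 t hR) + ((1 : ℂ)/3) * (r_mc0 t hR) + ((1 : ℂ)/3) * (r_mc2 t hR) + (r_nr0 t hR) + ((1 : ℂ)/2) * (r_nr1 t hR) + ((1 : ℂ)/2) * (r_nr2 t hR) + (r_nc0 t hR) + (r_nc2 t hR) + ((-1 : ℂ)/2) * (r_cr00 t hR) + ((1 : ℂ)/2) * (r_cr01 t hR) + ((-1 : ℂ)/2) * (r_cr02 t hR)
  · rw [sum_perm3]
    simp only [show TI33.D (ps 0) (nI 0) (nI 2) = (0:ℂ) from by rw [TI33.D_eq, if_neg (by decide)],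
      show TI33.D (ps 1) (nI 0) (nI 2) = (0:ℂ) from by rw [TI33.D_eq, if_neg (by decide)],
      show TI33.D (ps 2) (nI 0) (nI 2) = (1:ℂ) from by rw [TI33.D_eq, if_pos (by decide)],
      show TI33.D (ps 3) (nI 0) (nI 2) = (0:ℂ) from by rw [TI33.D_eq, if_neg (by decide)],
      show TI33.D (ps 4) (nI 0) (nI 2) = (0:ℂ) from by rw [TI33.D_eq, if_neg (by decide)],
      show TI33.D (ps 5) (nI 0) (nI 2) = (1:ℂ) from by rw [TI33.D_eq, if_pos (by decide)], psA00, psA01, psA02, psA10, psA11, psA12, psA20, psA21, psA22, psA30, psA31, psA32, psA40, psA41, psA42, psA50, psA51, psA52]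
    linear_combination ((1 : ℂ)/3) * (r_mr0 t hR) + ((1 : ℂ)/3) * (r_mc0 t hR) + ((1 : ℂ)/3) * (r_mc1 t hR) + ((-1 : ℂ)/2) * (r_nr1 t hR) + ((-1 : ℂ)/2) * (r_nr2 t hR) + (-1 : ℂ) * (r_nc2 t hR) + ((-1 : ℂ)/2) * (r_cr00 t hR) + ((-1 : ℂ)/2) * (r_cr01 t hR) + ((1 : ℂ)/2) * (r_cr02 t hR)
  · exact mism2 t hR _ _ _ (by decide)
  · exact mism2 t hR _ _ _ (by decide)
  · exact mism2 t hR _ _ _ (by decide)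
  · exact mism2 t hR _ _ _ (by decide)
  · exact mism2 t hR _ _ _ (by decide)
  · rw [sum_perm3]
    simp only [show TI33.D (ps 0) (nI 1) (nI 0) = (0:ℂ) from by rw [TI33.D_eq, if_neg (by decide)],
      show TI33.D (ps 1) (nI 1) (nI 0) = (1:ℂ) from by rw [TI33.D_eq, if_pos (by decide)],
      show TI33.D (ps 2) (nI 1) (nI 0) = (0:ℂ) from by rw [TI33.D_eq, if_neg (by decide)],
      show TI33.D (ps 3) (nI 1) (nI 0) = (0:ℂ) from by rw [TI33.D_eq, if_neg (by decide)],
      show TI33.D (ps 4) (nI 1) (nI 0) = (0:ℂ) from by rw [TI33.D_eq, if_neg (by decide)],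
      show TI33.D (ps 5) (nI 1) (nI 0) = (1:ℂ) from by rw [TI33.D_eq, if_pos (by decide)], psA00, psA01, psA02, psA10, psA11, psA12, psA20, psA21, psA22, psA30, psA31, psA32, psA40, psA41, psA42, psA50, psA51, psA52]
    linear_combination ((5 : ℂ)/3) * (r_mr0 t hR) + ((2 : ℂ)/3) * (r_mr2 t hR) + ((2 : ℂ)/3) * (r_mc0 t hR) + (r_mc1 t hR) + (r_mc2 t hR) + ((-1 : ℂ)/2) * (r_nr1 t hR) + ((-1 : ℂ)/2) * (r_nr2 t hR) + (-1 : ℂ) * (r_nc0 t hR) + ((-1 : ℂ)/2) * (r_cr00 t hR) + ((-1 : ℂ)/2) * (r_cr01 t hR) + ((-1 : ℂ)/2) * (r_cr02 t hR) + (r_cr10 t hR)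
  · rw [sum_perm3]
    simp only [show TI33.D (ps 0) (nI 1) (nI 1) = (1:ℂ) from by rw [TI33.D_eq, if_pos (by decide)],
      show TI33.D (ps 1) (nI 1) (nI 1) = (0:ℂ) from by rw [TI33.D_eq, if_neg (by decide)],
      show TI33.D (ps 2) (nI 1) (nI 1) = (1:ℂ) from by rw [TI33.D_eq, if_pos (by decide)],
      show TI33.D (ps 3) (nI 1) (nI 1) = (0:ℂ) from by rw [TI33.D_eq, if_neg (by decide)],
      show TI33.D (ps 4) (nI 1) (nI 1) = (0:ℂ) from by rw [TI33.D_eq, if_neg (by decide)],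
      show TI33.D (ps 5) (nI 1) (nI 1) = (0:ℂ) from by rw [TI33.D_eq, if_neg (by decide)], psA00, psA01, psA02, psA10, psA11, psA12, psA20, psA21, psA22, psA30, psA31, psA32, psA40, psA41, psA42, psA50, psA51, psA52]
    linear_combination ((5 : ℂ)/3) * (r_mr0 t hR) + ((2 : ℂ)/3) * (r_mr2 t hR) + (r_mc0 t hR) + ((2 : ℂ)/3) * (r_mc1 t hR) + (r_mc2 t hR) + (r_nr0 t hR) + ((1 : ℂ)/2) * (r_nr1 t hR) + ((1 : ℂ)/2) * (r_nr2 t hR) + (r_nc0 t hR) + (r_nc2 t hR) + ((-1 : ℂ)/2) * (r_cr00 t hR) + ((-1 : ℂ)/2) * (r_cr01 t hR) + ((-1 : ℂ)/2) * (r_cr02 t hR) + (r_cr11 t hR)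
  · rw [sum_perm3]
    simp only [show TI33.D (ps 0) (nI 1) (nI 2) = (0:ℂ) from by rw [TI33.D_eq, if_neg (by decide)],
      show TI33.D (ps 1) (nI 1) (nI 2) = (0:ℂ) from by rw [TI33.D_eq, if_neg (by decide)],
      show TI33.D (ps 2) (nI 1) (nI 2) = (0:ℂ) from by rw [TI33.D_eq, if_neg (by decide)],
      show TI33.D (ps 3) (nI 1) (nI 2) = (1:ℂ) from by rw [TI33.D_eq, if_pos (by decide)],
      show TI33.D (ps 4) (nI 1) (nI 2) = (1:ℂ) from by rw [TI33.D_eq, if_pos (by decide)],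
      show TI33.D (ps 5) (nI 1) (nI 2) = (0:ℂ) from by rw [TI33.D_eq, if_neg (by decide)], psA00, psA01, psA02, psA10, psA11, psA12, psA20, psA21, psA22, psA30, psA31, psA32, psA40, psA41, psA42, psA50, psA51, psA52]
    linear_combination ((-7 : ℂ)/3) * (r_mr0 t hR) + ((-4 : ℂ)/3) * (r_mr2 t hR) + (-1 : ℂ) * (r_mc0 t hR) + (-1 : ℂ) * (r_mc1 t hR) + ((-4 : ℂ)/3) * (r_mc2 t hR) + (-1 : ℂ) * (r_nr0 t hR) + ((1 : ℂ)/2) * (r_nr1 t hR) + ((-1 : ℂ)/2) * (r_nr2 t hR) + (-1 : ℂ) * (r_nc2 t hR) + ((1 : ℂ)/2) * (r_cr00 t hR) + ((1 : ℂ)/2) * (r_cr01 t hR) + ((1 : ℂ)/2) * (r_cr02 t hR) + (-1 : ℂ) * (r_cr10 t hR) + (-1 : ℂ) * (r_cr11 t hR)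
  · exact mism2 t hR _ _ _ (by decide)
  · exact mism2 t hR _ _ _ (by decide)
  · exact mism2 t hR _ _ _ (by decide)
  · exact mism2 t hR _ _ _ (by decide)
  · exact mism2 t hR _ _ _ (by decide)
  · rw [sum_perm3]
    simp only [show TI33.D (ps 0) (nI 2) (nI 0) = (0:ℂ) from by rw [TI33.D_eq, if_neg (by decide)],
      show TI33.D (ps 1) (nI 2) (nI 0) = (0:ℂ) from by rw [TI33.D_eq, if_neg (by decide)],
      show TI33.D (ps 2) (nI 2) (nI 0) = (1:ℂ) from by rw [TI33.D_eq, if_pos (by decide)],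
      show TI33.D (ps 3) (nI 2) (nI 0) = (0:ℂ) from by rw [TI33.D_eq, if_neg (by decide)],
      show TI33.D (ps 4) (nI 2) (nI 0) = (1:ℂ) from by rw [TI33.D_eq, if_pos (by decide)],
      show TI33.D (ps 5) (nI 2) (nI 0) = (0:ℂ) from by rw [TI33.D_eq, if_neg (by decide)], psA00, psA01, psA02, psA10, psA11, psA12, psA20, psA21, psA22, psA30, psA31, psA32, psA40, psA41, psA42, psA50, psA51, psA52]
    linear_combination (-1 : ℂ) * (r_mr0 t hR) + ((-2 : ℂ)/3) * (r_mr2 t hR) + ((-2 : ℂ)/3) * (r_mc1 t hR) + ((-2 : ℂ)/3) * (r_mc2 t hR) + ((1 : ℂ)/2) * (r_nr1 t hR) + ((1 : ℂ)/2) * (r_nr2 t hR) + (r_nc0 t hR) + ((-1 : ℂ)/2) * (r_cr00 t hR) + ((1 : ℂ)/2) * (r_cr01 t hR) + ((1 : ℂ)/2) * (r_cr02 t hR) + (-1 : ℂ) * (r_cr10 t hR)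
  · rw [sum_perm3]
    simp only [show TI33.D (ps 0) (nI 2) (nI 1) = (0:ℂ) from by rw [TI33.D_eq, if_neg (by decide)],
      show TI33.D (ps 1) (nI 2) (nI 1) = (0:ℂ) from by rw [TI33.D_eq, if_neg (by decide)],
      show TI33.D (ps 2) (nI 2) (nI 1) = (0:ℂ) from by rw [TI33.D_eq, if_neg (by decide)],
      show TI33.D (ps 3) (nI 2) (nI 1) = (1:ℂ) from by rw [TI33.D_eq, if_pos (by decide)],
      show TI33.D (ps 4) (nI 2) (nI 1) = (0:ℂ) from by rw [TI33.D_eq, if_neg (by decide)],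
      show TI33.D (ps 5) (nI 2) (nI 1) = (1:ℂ) from by rw [TI33.D_eq, if_pos (by decide)], psA00, psA01, psA02, psA10, psA11, psA12, psA20, psA21, psA22, psA30, psA31, psA32, psA40, psA41, psA42, psA50, psA51, psA52]
    linear_combination (-1 : ℂ) * (r_mr0 t hR) + ((-2 : ℂ)/3) * (r_mr2 t hR) + ((-2 : ℂ)/3) * (r_mc0 t hR) + ((-2 : ℂ)/3) * (r_mc2 t hR) + (-1 : ℂ) * (r_nr0 t hR) + ((-1 : ℂ)/2) * (r_nr1 t hR) + ((-1 : ℂ)/2) * (r_nr2 t hR) + (-1 : ℂ) * (r_nc0 t hR) + (-1 : ℂ) * (r_nc2 t hR) + ((1 : ℂ)/2) * (r_cr00 t hR) + ((-1 : ℂ)/2) * (r_cr01 t hR) + ((1 : ℂ)/2) * (r_cr02 t hR) + (-1 : ℂ) * (r_cr11 t hR)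
  · rw [sum_perm3]
    simp only [show TI33.D (ps 0) (nI 2) (nI 2) = (1:ℂ) from by rw [TI33.D_eq, if_pos (by decide)],
      show TI33.D (ps 1) (nI 2) (nI 2) = (1:ℂ) from by rw [TI33.D_eq, if_pos (by decide)],
      show TI33.D (ps 2) (nI 2) (nI 2) = (0:ℂ) from by rw [TI33.D_eq, if_neg (by decide)],
      show TI33.D (ps 3) (nI 2) (nI 2) = (0:ℂ) from by rw [TI33.D_eq, if_neg (by decide)],
      show TI33.D (ps 4) (nI 2) (nI 2) = (0:ℂ) from by rw [TI33.D_eq, if_neg (by decide)],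
      show TI33.D (ps 5) (nI 2) (nI 2) = (0:ℂ) from by rw [TI33.D_eq, if_neg (by decide)], psA00, psA01, psA02, psA10, psA11, psA12, psA20, psA21, psA22, psA30, psA31, psA32, psA40, psA41, psA42, psA50, psA51, psA52]
    linear_combination ((3 : ℂ)/1) * (r_mr0 t hR) + ((4 : ℂ)/3) * (r_mr2 t hR) + ((4 : ℂ)/3) * (r_mc0 t hR) + ((4 : ℂ)/3) * (r_mc1 t hR) + ((2 : ℂ)/1) * (r_mc2 t hR) + (r_nr0 t hR) + ((-1 : ℂ)/2) * (r_nr1 t hR) + ((1 : ℂ)/2) * (r_nr2 t hR) + (r_nc2 t hR) + ((-1 : ℂ)/2) * (r_cr00 t hR) + ((-1 : ℂ)/2) * (r_cr01 t hR) + ((-3 : ℂ)/2) * (r_cr02 t hR) + (r_cr10 t hR) + (r_cr11 t hR)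
end alg2
section algAll

theorem algAll {n : ℕ} (t : (Fin 3 → Fin n) → (Fin 3 → Fin n) → ℂ)
    (hR : ∀ u v (i j : Fin 3 → Fin n),
      (∑ a : Fin 3, if j a = v then t i (Function.update j a u) else 0)
        = ∑ b : Fin 3, if i b = u then t (Function.update i b v) j else 0) :
    ∃ c : Equiv.Perm (Fin 3) → ℂ, ∀ i j, t i j
      = ∑ σ : Equiv.Perm (Fin 3), c σ * TI33.D σ i j := by
  classical
  match n with
  | 0 => exact ⟨0, fun i j => (i 0).elim0⟩
  | 1 =>
    refine ⟨fun σ => if σ = 1 then t (fun _ => 0) (fun _ => 0) else 0, fun i j => ?_⟩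
    have hone : ∀ f : Fin 3 → Fin 1, f = fun _ => 0 :=
      fun f => funext fun a => Subsingleton.elim _ _
    rw [hone i, hone j]
    have hD : ∀ σ : Equiv.Perm (Fin 3),
        TI33.D σ (fun _ : Fin 3 => (0 : Fin 1)) (fun _ => 0) = 1 := by
      intro σ
      rw [TI33.D_eq,
        if_pos (show ∀ a : Fin 3, (fun _ : Fin 3 => (0:Fin 1)) a
          = (fun _ : Fin 3 => (0:Fin 1)) (σ a) from fun a => rfl)]
    rw [Finset.sum_congr rfl (fun σ _ => by rw [hD σ, mul_one]),
      Finset.sum_ite_eq' Finset.univ (1 : Equiv.Perm (Fin 3)), if_pos (Finset.mem_univ _)]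
  | 2 => exact alg2 t hR
  | (m+3) => exact algBig t hR (by omega)
end algAll

/-- A type-`(3,3)` tensor field on `ℂⁿ` whose Lie derivative vanishes
along every analytic vector field is a constant combination
`Σ_{σ ∈ S₃} c_σ δ^{i₁}_{j_{σ(1)}} δ^{i₂}_{j_{σ(2)}} δ^{i₃}_{j_{σ(3)}}`. -/
theorem trivial_tensor_invariant_three_three {n : ℕ}
    (T : (Fin 3 → Fin n) → (Fin 3 → Fin n) → (Fin n → ℂ) → ℂ)
    (hTan : ∀ i j, AnalyticOnNhd ℂ (T i j) Set.univ)
    (htriv : ∀ F : Fin n → (Fin n → ℂ) → ℂ,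
      (∀ s, AnalyticOnNhd ℂ (F s) Set.univ) →
      ∀ i j x, lieDeriv F T i j x = 0) :
    ∃ c : Equiv.Perm (Fin 3) → ℂ, ∀ (i j : Fin 3 → Fin n) (x : Fin n → ℂ),
      T i j x = ∑ σ : Equiv.Perm (Fin 3), c σ * ∏ a : Fin 3, kron (i a) (j (σ a)) := by
  obtain ⟨c, hc⟩ := algAll (fun i j => T i j 0)
    (fun u v i j => hR_of_htriv T htriv u v i j 0)
  refine ⟨c, fun i j x => ?_⟩
  rw [T_const T hTan htriv i j x 0]
  exact hc i j
end PartI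
end

section
/- Let A be an n×n complex matrix and consider the linear system ẋ = Ax on ℂⁿ. If T is an analytic tensor invariant of type (p,q) of this system in a neighbourhood of 0, written as T = T^{(k)} + T^{(k+1)} + ⋯, where for each r ≥ k, T^{(r)} is a tensor field of type (p,q) whose components are homogeneous polynomials of degree r, then each T^{(r)} (r = k, k+1, …) is a tensor invariant of the system ẋ = Ax. -/
open scoped BigOperators

/-- An entire function `h : ℂⁿ → ℂ` that is a homogeneous polynomial of degree `r`
(characterized analytically by the scaling law `h(c • x) = c^r h(x)`). -/
def IsHomogDeg {n : ℕ} (r : ℕ) (h : (Fin n → ℂ) → ℂ) : Prop :=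
  AnalyticOnNhd ℂ h Set.univ ∧ ∀ (c : ℂ) (x : Fin n → ℂ), h (c • x) = c ^ r * h x

/-- The linear vector field `x ↦ Ax`. -/
noncomputable def linVF {n : ℕ} (A : Matrix (Fin n) (Fin n) ℂ) :
    Fin n → (Fin n → ℂ) → ℂ :=
  fun s x => ∑ t, A s t * x t

open Metric Filter

/-- If a power series sums to `0` on the closed unit disc, all coefficients vanish. -/
lemma coeffs_eq_zero {a : ℕ → ℂ}
    (h : ∀ c : ℂ, ‖c‖ ≤ 1 → HasSum (fun m => a m * c ^ m) 0) : ∀ m, a m = 0 := by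
  have hsum : Summable a := by simpa using (h 1 (by norm_num)).summable
  have htend : Tendsto (fun m => ‖a m‖) atTop (nhds 0) := by
    simpa using hsum.tendsto_atTop_zero.norm
  obtain ⟨C, hC⟩ := htend.bddAbove_range
  have hCb : ∀ m, ‖a m‖ ≤ C := fun m => hC ⟨m, rfl⟩
  set p : FormalMultilinearSeries ℂ ℂ ℂ :=
    fun m => ContinuousMultilinearMap.mkPiRing ℂ (Fin m) (a m) with hp
  have hrad : (1 : ENNReal) ≤ p.radius := by
    have := p.le_radius_of_bound C (r := 1) (fun m => by
      simpa [hp, ContinuousMultilinearMap.norm_mkPiRing] using hCb m)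
    simpa using this
  have hzero : HasFPowerSeriesOnBall (0 : ℂ → ℂ) p 0 1 := by
    refine ⟨hrad, one_pos, ?_⟩
    intro y hy
    have hy1 : ‖y‖ ≤ 1 := by
      rw [EMetric.mem_ball, edist_zero_right] at hy
      have : ‖y‖₊ < 1 := by rw [enorm_eq_nnnorm] at hy; exact_mod_cast hy
      exact_mod_cast this.le
    have := h y hy1
    simpa [hp, ContinuousMultilinearMap.mkPiRing_apply, mul_comm, smul_eq_mul] using this
  have hp0 : p = 0 := hzero.hasFPowerSeriesAt.eq_zero
  intro m
  have : (p m) (fun _ => 1) = a m := by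
    simp [hp, ContinuousMultilinearMap.mkPiRing_apply]
  rw [← this, hp0]
  simp

lemma pderiv_scale {n : ℕ} {m : ℕ} {h : (Fin n → ℂ) → ℂ} (hh : IsHomogDeg m h)
    (c : ℂ) (x : Fin n → ℂ) (s : Fin n) :
    c * pderivC h s (c • x) = c ^ m * pderivC h s x := by
  have hdiff : Differentiable ℂ h := fun y => (hh.1 y (Set.mem_univ y)).differentiableAt
  have hs : HasFDerivAt (fun y : Fin n → ℂ => c • y)
      (c • ContinuousLinearMap.id ℂ (Fin n → ℂ)) x := (hasFDerivAt_id x).const_smul c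
  have h1 : HasFDerivAt (fun y : Fin n → ℂ => h (c • y))
      ((fderiv ℂ h (c • x)).comp (c • ContinuousLinearMap.id ℂ (Fin n → ℂ))) x :=
    (hdiff (c • x)).hasFDerivAt.comp x hs
  have h2 : HasFDerivAt (fun y : Fin n → ℂ => c ^ m * h y) ((c ^ m) • fderiv ℂ h x) x :=
    (hdiff x).hasFDerivAt.const_mul (c ^ m)
  have heq : (fun y : Fin n → ℂ => h (c • y)) = fun y => c ^ m * h y :=
    funext fun y => hh.2 c y
  rw [heq] at h1
  have huniq := h1.unique h2
  have happ := congrArg (fun L : (Fin n → ℂ) →L[ℂ] ℂ => L (Pi.single s 1)) huniq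
  simpa [pderivC, ContinuousLinearMap.comp_apply, ContinuousLinearMap.smul_apply,
    map_smul, smul_eq_mul] using happ

lemma pderiv_linVF {n : ℕ} (A : Matrix (Fin n) (Fin n) ℂ) (k s : Fin n) (x : Fin n → ℂ) :
    pderivC (linVF A k) s x = A k s := by
  classical
  have hd : HasFDerivAt (linVF A k)
      (∑ t, A k t • (ContinuousLinearMap.proj t : (Fin n → ℂ) →L[ℂ] ℂ)) x := by
    have : ∀ t ∈ Finset.univ, HasFDerivAt (fun y : Fin n → ℂ => A k t * y t)
        (A k t • (ContinuousLinearMap.proj t : (Fin n → ℂ) →L[ℂ] ℂ)) x := fun t _ =>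
      (ContinuousLinearMap.proj t : (Fin n → ℂ) →L[ℂ] ℂ).hasFDerivAt.const_mul (A k t)
    exact HasFDerivAt.fun_sum this
  rw [pderivC, hd.fderiv]
  simp [ContinuousLinearMap.sum_apply, ContinuousLinearMap.smul_apply,
    ContinuousLinearMap.proj_apply, Pi.single_apply, smul_eq_mul, mul_ite,
    Finset.sum_ite_eq']

lemma linVF_smul {n : ℕ} (A : Matrix (Fin n) (Fin n) ℂ) (s : Fin n) (c : ℂ) (x : Fin n → ℂ) :
    linVF A s (c • x) = c * linVF A s x := by
  simp only [linVF, Pi.smul_apply, smul_eq_mul, Finset.mul_sum]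
  exact Finset.sum_congr rfl fun t _ => by ring

lemma lieDeriv_linVF_eq {n p q : ℕ} (A : Matrix (Fin n) (Fin n) ℂ)
    (S : (Fin p → Fin n) → (Fin q → Fin n) → (Fin n → ℂ) → ℂ)
    (i : Fin p → Fin n) (j : Fin q → Fin n) (x : Fin n → ℂ) :
    lieDeriv (linVF A) S i j x =
      (∑ s, linVF A s x * pderivC (S i j) s x)
        + (∑ a : Fin q, ∑ k, S i (Function.update j a k) x * A k (j a))
        - ∑ b : Fin p, ∑ l, S (Function.update i b l) j x * A (i b) l := by
  simp only [lieDeriv, pderiv_linVF]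

lemma lieDeriv_homog {n p q m : ℕ} (A : Matrix (Fin n) (Fin n) ℂ)
    (S : (Fin p → Fin n) → (Fin q → Fin n) → (Fin n → ℂ) → ℂ)
    (hS : ∀ i j, IsHomogDeg m (S i j))
    (i : Fin p → Fin n) (j : Fin q → Fin n) (c : ℂ) (x : Fin n → ℂ) :
    lieDeriv (linVF A) S i j (c • x) = c ^ m * lieDeriv (linVF A) S i j x := by
  rw [lieDeriv_linVF_eq, lieDeriv_linVF_eq, mul_sub, mul_add]
  congr 1
  congr 1
  · rw [Finset.mul_sum]
    refine Finset.sum_congr rfl fun s _ => ?_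
    rw [linVF_smul]
    calc c * linVF A s x * pderivC (S i j) s (c • x)
        = linVF A s x * (c * pderivC (S i j) s (c • x)) := by ring
      _ = linVF A s x * (c ^ m * pderivC (S i j) s x) := by rw [pderiv_scale (hS i j)]
      _ = c ^ m * (linVF A s x * pderivC (S i j) s x) := by ring
  · rw [Finset.mul_sum]
    refine Finset.sum_congr rfl fun a _ => ?_
    rw [Finset.mul_sum]
    refine Finset.sum_congr rfl fun k' _ => ?_
    rw [(hS i (Function.update j a k')).2 c x]; ring
  · rw [Finset.mul_sum]
    refine Finset.sum_congr rfl fun b _ => ?_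
    rw [Finset.mul_sum]
    refine Finset.sum_congr rfl fun l _ => ?_
    rw [(hS (Function.update i b l) j).2 c x]; ring

/-- **Corollary 1.** If `T = T^{(k)} + T^{(k+1)} + ⋯` is an analytic tensor
invariant of the linear system `ẋ = Ax` near `0`, where `T^{(r)}` has homogeneous
polynomial components of degree `r`, then each `T^{(r)}` is a tensor invariant of
`ẋ = Ax`. -/
theorem homogeneous_parts_invariant_of_linear_system {n p q : ℕ}
    (U : Set (Fin n → ℂ)) (hU : IsOpen U) (h0 : (0 : Fin n → ℂ) ∈ U)
    (A : Matrix (Fin n) (Fin n) ℂ)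
    (T : (Fin p → Fin n) → (Fin q → Fin n) → (Fin n → ℂ) → ℂ)
    (hTan : ∀ i j, AnalyticOnNhd ℂ (T i j) U)
    (hinv : ∀ i j, ∀ x ∈ U, lieDeriv (linVF A) T i j x = 0)
    (k : ℕ)
    (Tfam : ℕ → (Fin p → Fin n) → (Fin q → Fin n) → (Fin n → ℂ) → ℂ)
    (hhom : ∀ r i j, IsHomogDeg r (Tfam r i j))
    (hlow : ∀ r < k, ∀ i j x, Tfam r i j x = 0)
    (hrep : ∀ i j, ∀ x ∈ U, HasSum (fun r => Tfam r i j x) (T i j x)) :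
    ∀ r i j x, lieDeriv (linVF A) (Tfam r) i j x = 0 := by
  classical
  obtain ⟨ε, hε, hball⟩ := Metric.isOpen_iff.mp hU 0 h0
  set R : ℝ := ε / 2 with hRdef
  have hRpos : 0 < R := by positivity
  have hRU : Metric.closedBall (0 : Fin n → ℂ) R ⊆ U :=
    (Metric.closedBall_subset_ball (by simp [hRdef]; linarith)).trans hball
  set ρ : ℝ := R / 2 with hρdef
  have hρpos : 0 < ρ := by positivity
  have hρR : ρ ≤ R := by rw [hρdef]; linarith
  have hρU : ∀ z : Fin n → ℂ, ‖z‖ ≤ R → z ∈ U := fun z hz =>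
    hRU (by simpa [Metric.mem_closedBall, dist_zero_right] using hz)
  -- Step 1 : uniform coefficient bound
  have coeffBound : ∀ i j, ∃ C : ℝ, ∀ (m : ℕ) (z : Fin n → ℂ), ‖z‖ ≤ ρ →
      ‖Tfam m i j z‖ ≤ C * (1 / 2) ^ m := by
    intro i j
    obtain ⟨C, hC⟩ := (isCompact_closedBall (0 : Fin n → ℂ) R).exists_bound_of_continuousOn
      (((hTan i j).continuousOn).mono hRU)
    refine ⟨C, fun m z hz => ?_⟩
    have hC0 : 0 ≤ C :=
      le_trans (norm_nonneg (T i j 0)) (hC 0 (Metric.mem_closedBall_self hRpos.le))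
    have hcz : ∀ c : ℂ, ‖c‖ ≤ 2 → c • z ∈ Metric.closedBall (0 : Fin n → ℂ) R := by
      intro c hc
      simp only [Metric.mem_closedBall, dist_zero_right, norm_smul]
      calc ‖c‖ * ‖z‖ ≤ 2 * ρ :=
            mul_le_mul hc hz (norm_nonneg z) (by norm_num)
        _ = R := by rw [hρdef]; ring
    set g : ℂ → ℂ := fun c => T i j (c • z) with hg
    have hgd : DifferentiableOn ℂ g (Metric.closedBall (0 : ℂ) ((2 : NNReal) : ℝ)) := by
      intro c hc
      have hc2 : ‖c‖ ≤ 2 := by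
        simpa [Metric.mem_closedBall, dist_zero_right] using hc
      have hcU : c • z ∈ U := hRU (hcz c hc2)
      have h1 : DifferentiableAt ℂ (T i j) (c • z) := (hTan i j _ hcU).differentiableAt
      have h2 : DifferentiableAt ℂ (fun c : ℂ => c • z) c := differentiableAt_id.smul_const z
      exact (h1.comp c h2).differentiableWithinAt
    have hps : HasFPowerSeriesOnBall g (cauchyPowerSeries g 0 ((2 : NNReal) : ℝ)) 0 (2 : NNReal) :=
      hgd.hasFPowerSeriesOnBall (by norm_num)
    set qc : ℕ → ℂ := fun m => (cauchyPowerSeries g 0 ((2 : NNReal) : ℝ)).coeff m with hqc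
    have hqsum : ∀ c : ℂ, ‖c‖ ≤ 1 → HasSum (fun m => qc m * c ^ m) (g c) := by
      intro c hc
      have hmem : c ∈ Metric.eball (0 : ℂ) ((2 : NNReal) : ENNReal) := by
        rw [EMetric.mem_ball, edist_zero_right]
        have : ‖c‖₊ < 2 := by
          have : ‖c‖ < 2 := lt_of_le_of_lt hc (by norm_num)
          exact_mod_cast this
        rw [enorm_eq_nnnorm]; exact_mod_cast this
      have := hps.hasSum hmem
      simp only [zero_add] at this
      have heq : ∀ m, (cauchyPowerSeries g 0 ((2 : NNReal) : ℝ) m fun _ => c) = qc m * c ^ m := by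
        intro m
        rw [FormalMultilinearSeries.apply_eq_pow_smul_coeff, smul_eq_mul, hqc, mul_comm]
      rw [show (fun m => cauchyPowerSeries g 0 ((2 : NNReal) : ℝ) m fun _ => c)
          = fun m => qc m * c ^ m from funext heq] at this
      exact this
    have hTsum : ∀ c : ℂ, ‖c‖ ≤ 1 → HasSum (fun m' => Tfam m' i j z * c ^ m') (g c) := by
      intro c hc
      have hcU : c • z ∈ U := hRU (hcz c (le_trans hc (by norm_num)))
      have hs := hrep i j (c • z) hcU
      have heq : ∀ m', Tfam m' i j (c • z) = Tfam m' i j z * c ^ m' := fun m' => by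
        rw [(hhom m' i j).2 c z]; ring
      rw [show (fun m' => Tfam m' i j (c • z)) = fun m' => Tfam m' i j z * c ^ m'
        from funext heq] at hs
      exact hs
    have hcoeff : Tfam m i j z = qc m := by
      have hz0 := coeffs_eq_zero (a := fun m' => Tfam m' i j z - qc m') (fun c hc => by
        have := (hTsum c hc).sub (hqsum c hc)
        simpa [sub_mul] using this) m
      exact sub_eq_zero.mp hz0
    rw [hcoeff]
    -- bound on qc m
    have hnq : ‖qc m‖ ≤ ‖cauchyPowerSeries g 0 ((2 : NNReal) : ℝ) m‖ := by
      have := (cauchyPowerSeries g 0 ((2 : NNReal) : ℝ) m).le_opNorm (fun _ => (1 : ℂ))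
      have happ : (cauchyPowerSeries g 0 ((2 : NNReal) : ℝ) m fun _ => (1:ℂ)) = qc m := by
        rw [FormalMultilinearSeries.apply_eq_pow_smul_coeff, one_pow, one_smul, hqc]
      rw [happ] at this
      simpa using this
    have hb := norm_cauchyPowerSeries_le g 0 ((2 : NNReal) : ℝ) m
    have hgcont : Continuous fun θ : ℝ => ‖g (circleMap 0 ((2 : NNReal) : ℝ) θ)‖ := by
      have hcc : ContinuousOn g (Metric.closedBall (0 : ℂ) ((2 : NNReal) : ℝ)) :=
        hgd.continuousOn
      have hmaps : ∀ θ : ℝ, circleMap 0 ((2 : NNReal) : ℝ) θ ∈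
          Metric.closedBall (0 : ℂ) ((2 : NNReal) : ℝ) := fun θ => by
        simp [Metric.mem_closedBall, dist_zero_right, norm_circleMap_zero]
      exact (hcc.comp_continuous (continuous_circleMap 0 _) hmaps).norm
    have hptbound : ∀ θ : ℝ, ‖g (circleMap 0 ((2 : NNReal) : ℝ) θ)‖ ≤ C := by
      intro θ
      apply hC
      apply hcz
      simp [norm_circleMap_zero]
    have hint : (∫ θ : ℝ in (0)..2 * Real.pi, ‖g (circleMap 0 ((2 : NNReal) : ℝ) θ)‖)
        ≤ C * (2 * Real.pi) := by
      have h1 := intervalIntegral.integral_mono_on (a := 0) (b := 2 * Real.pi)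
        Real.two_pi_pos.le (hgcont.intervalIntegrable _ _)
        (intervalIntegrable_const (μ := MeasureTheory.volume)) (fun θ _ => hptbound θ)
      simpa [mul_comm] using h1
    calc ‖qc m‖ ≤ ‖cauchyPowerSeries g 0 ((2 : NNReal) : ℝ) m‖ := hnq
      _ ≤ ((2 * Real.pi)⁻¹ *
            ∫ θ : ℝ in (0)..2 * Real.pi, ‖g (circleMap 0 ((2 : NNReal) : ℝ) θ)‖) *
            |((2 : NNReal) : ℝ)|⁻¹ ^ m := hb
      _ ≤ C * |((2 : NNReal) : ℝ)|⁻¹ ^ m := by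
          apply mul_le_mul_of_nonneg_right _ (by positivity)
          calc (2 * Real.pi)⁻¹ *
                (∫ θ : ℝ in (0)..2 * Real.pi, ‖g (circleMap 0 ((2 : NNReal) : ℝ) θ)‖)
              ≤ (2 * Real.pi)⁻¹ * (C * (2 * Real.pi)) :=
                mul_le_mul_of_nonneg_left hint (by positivity)
            _ = C := by field_simp
      _ = C * (1 / 2) ^ m := by norm_num
  -- Step 2 : termwise differentiation
  have derivSum : ∀ i j (s : Fin n) (x : Fin n → ℂ), ‖x‖ < ρ →
      HasSum (fun m => pderivC (Tfam m i j) s x) (pderivC (T i j) s x) := by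
    intro i j s x hx
    obtain ⟨C, hC⟩ := coeffBound i j
    set v : Fin n → ℂ := Pi.single s 1 with hv
    have hvnorm : ‖v‖ ≤ 1 := by
      refine (pi_norm_le_iff_of_nonneg zero_le_one).mpr fun t => ?_
      rw [hv, Pi.single_apply]
      split <;> simp
    set τ : ℝ := ρ - ‖x‖ with hτ
    have hτpos : 0 < τ := by rw [hτ]; linarith
    have hmem : ∀ t : ℂ, t ∈ Metric.ball (0 : ℂ) τ → ‖x + t • v‖ ≤ ρ := by
      intro t ht
      have ht' : ‖t‖ < τ := by simpa [Metric.mem_ball, dist_zero_right] using ht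
      have h1 : ‖x + t • v‖ ≤ ‖x‖ + ‖t‖ * ‖v‖ := by
        refine le_trans (norm_add_le _ _) ?_
        rw [norm_smul]
      have h2 : ‖t‖ * ‖v‖ ≤ ‖t‖ * 1 := mul_le_mul_of_nonneg_left hvnorm (norm_nonneg t)
      rw [hτ] at ht'
      linarith
    have hmemU : ∀ t : ℂ, t ∈ Metric.ball (0 : ℂ) τ → x + t • v ∈ U := fun t ht =>
      hρU _ (le_trans (hmem t ht) hρR)
    have hu : Summable (fun m : ℕ => C * (1 / 2) ^ m) :=
      (summable_geometric_of_lt_one (by norm_num) (by norm_num)).mul_left C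
    have hfd : ∀ m : ℕ, DifferentiableOn ℂ (fun t : ℂ => Tfam m i j (x + t • v))
        (Metric.ball (0 : ℂ) τ) := by
      intro m t ht
      have h1 : DifferentiableAt ℂ (Tfam m i j) (x + t • v) :=
        ((hhom m i j).1 _ (Set.mem_univ _)).differentiableAt
      have h2 : DifferentiableAt ℂ (fun t : ℂ => x + t • v) t :=
        (differentiableAt_id.smul_const v).const_add x
      exact (h1.comp t h2).differentiableWithinAt
    have hle : ∀ (m : ℕ) (w : ℂ), w ∈ Metric.ball (0 : ℂ) τ →
        ‖Tfam m i j (x + w • v)‖ ≤ C * (1 / 2) ^ m := fun m w hw => hC m _ (hmem w hw)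
    have key := Complex.hasSum_deriv_of_summable_norm
      (F := fun m (t : ℂ) => Tfam m i j (x + t • v)) hu hfd Metric.isOpen_ball hle
      (Metric.mem_ball_self hτpos)
    have hline : HasDerivAt (fun t : ℂ => x + t • v) v 0 := by
      simpa using ((hasDerivAt_id (0 : ℂ)).smul_const v).const_add x
    have hDT : ∀ m, deriv (fun t : ℂ => Tfam m i j (x + t • v)) 0
        = pderivC (Tfam m i j) s x := by
      intro m
      have h1 : HasFDerivAt (Tfam m i j) (fderiv ℂ (Tfam m i j) x)
          ((fun t : ℂ => x + t • v) 0) := by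
        simp only [zero_smul, add_zero]
        exact (((hhom m i j).1 x (Set.mem_univ x)).differentiableAt).hasFDerivAt
      have h2 : HasDerivAt (fun t : ℂ => Tfam m i j (x + t • v))
          (fderiv ℂ (Tfam m i j) x v) 0 := h1.comp_hasDerivAt 0 hline
      rw [h2.deriv, pderivC, hv]
    have hDTT : deriv (fun w : ℂ => ∑' m, Tfam m i j (x + w • v)) 0
        = pderivC (T i j) s x := by
      have heq : Set.EqOn (fun w : ℂ => ∑' m, Tfam m i j (x + w • v))
          (fun w : ℂ => T i j (x + w • v)) (Metric.ball (0 : ℂ) τ) :=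
        fun w hw => (hrep i j _ (hmemU w hw)).tsum_eq
      have hev : (fun w : ℂ => ∑' m, Tfam m i j (x + w • v))
          =ᶠ[nhds (0 : ℂ)] fun w => T i j (x + w • v) :=
        Filter.eventuallyEq_of_mem (Metric.isOpen_ball.mem_nhds (Metric.mem_ball_self hτpos)) heq
      rw [hev.deriv_eq]
      have hxU : x ∈ U := hρU x (le_trans hx.le hρR)
      have h1 : HasFDerivAt (T i j) (fderiv ℂ (T i j) x) ((fun t : ℂ => x + t • v) 0) := by
        simp only [zero_smul, add_zero]
        exact ((hTan i j x hxU).differentiableAt).hasFDerivAt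
      have h2 : HasDerivAt (fun t : ℂ => T i j (x + t • v))
          (fderiv ℂ (T i j) x v) 0 := h1.comp_hasDerivAt 0 hline
      rw [h2.deriv, pderivC, hv]
    rw [show (fun m => pderivC (Tfam m i j) s x)
        = fun m => deriv (fun t : ℂ => Tfam m i j (x + t • v)) 0 from
      funext fun m => (hDT m).symm, ← hDTT]
    exact key
  -- Step 3 : HasSum of the Lie derivatives on the ball
  have lieSum : ∀ i j (x : Fin n → ℂ), ‖x‖ < ρ →
      HasSum (fun m => lieDeriv (linVF A) (Tfam m) i j x) 0 := by
    intro i j x hx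
    have hxU : x ∈ U := hρU x (le_trans hx.le hρR)
    have H1 : HasSum (fun m => ∑ s, linVF A s x * pderivC (Tfam m i j) s x)
        (∑ s, linVF A s x * pderivC (T i j) s x) :=
      hasSum_sum fun s _ => (derivSum i j s x hx).mul_left _
    have H2 : HasSum
        (fun m => ∑ a : Fin q, ∑ k, Tfam m i (Function.update j a k) x * A k (j a))
        (∑ a : Fin q, ∑ k, T i (Function.update j a k) x * A k (j a)) :=
      hasSum_sum fun a _ => hasSum_sum fun k _ => (hrep i _ x hxU).mul_right _
    have H3 : HasSum
        (fun m => ∑ b : Fin p, ∑ l, Tfam m (Function.update i b l) j x * A (i b) l)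
        (∑ b : Fin p, ∑ l, T (Function.update i b l) j x * A (i b) l) :=
      hasSum_sum fun b _ => hasSum_sum fun l _ => (hrep _ j x hxU).mul_right _
    have Htot := (H1.add H2).sub H3
    rw [← lieDeriv_linVF_eq A T i j x, hinv i j x hxU] at Htot
    rw [show (fun m => lieDeriv (linVF A) (Tfam m) i j x)
        = fun m => (∑ s, linVF A s x * pderivC (Tfam m i j) s x)
          + (∑ a : Fin q, ∑ k, Tfam m i (Function.update j a k) x * A k (j a))
          - ∑ b : Fin p, ∑ l, Tfam m (Function.update i b l) j x * A (i b) l from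
      funext fun m => lieDeriv_linVF_eq A (Tfam m) i j x]
    exact Htot
  -- Step 4 : vanishing on the ball
  have vanish : ∀ i j (x : Fin n → ℂ), ‖x‖ < ρ → ∀ m,
      lieDeriv (linVF A) (Tfam m) i j x = 0 := by
    intro i j x hx
    apply coeffs_eq_zero
    intro c hc
    have hcx : ‖c • x‖ < ρ := by
      rw [norm_smul]
      calc ‖c‖ * ‖x‖ ≤ 1 * ‖x‖ := mul_le_mul_of_nonneg_right hc (norm_nonneg x)
        _ = ‖x‖ := one_mul _
        _ < ρ := hx
    have hsum := lieSum i j (c • x) hcx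
    rw [show (fun m => lieDeriv (linVF A) (Tfam m) i j (c • x))
        = fun m => lieDeriv (linVF A) (Tfam m) i j x * c ^ m from
      funext fun m => by rw [lieDeriv_homog A (Tfam m) (hhom m) i j c x]; ring] at hsum
    exact hsum
  -- Step 5 : globalization by homogeneity
  intro m i j x
  by_cases hx : ‖x‖ < ρ
  · exact vanish i j x hx m
  · push_neg at hx
    have hxpos : 0 < ‖x‖ := lt_of_lt_of_le hρpos hx
    set c : ℂ := ((ρ / (2 * ‖x‖) : ℝ) : ℂ) with hcdef
    have hcnorm : ‖c‖ = ρ / (2 * ‖x‖) := by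
      rw [hcdef, Complex.norm_real]
      exact Real.norm_of_nonneg (by positivity)
    have hcx : ‖c • x‖ < ρ := by
      rw [norm_smul, hcnorm]
      rw [div_mul_eq_mul_div, mul_comm]
      rw [div_lt_iff₀ (by positivity)]
      nlinarith
    have h0 := vanish i j (c • x) hcx m
    rw [lieDeriv_homog A (Tfam m) (hhom m) i j c x] at h0
    have hc0 : c ≠ 0 := by
      rw [hcdef]
      norm_cast
      positivity
    exact (mul_eq_zero.mp h0).resolve_left (pow_ne_zero m hc0)
end

section
/- Fix exponents s₁,…,sₙ ∈ ℕ₊ and write ρ^S x = (ρ^{s₁}x¹,…,ρ^{sₙ}xⁿ). Let g be a positively semi-quasihomogeneous analytic vector field with quasi-homogeneous part g_m of degree m > 1, and let T_r be a quasi-homogeneous tensor field of type (p,q) of degree r with exponents s₁,…,sₙ whose components are analytic. Then for every x and all index tuples i₁,…,i_p, j₁,…,j_q ∈ {1,…,n}, as ρ → 0⁺ one has (L_g T_r)^{i₁⋯i_p}_{j₁⋯j_q}(ρ^S x) = ρ^{r+m−1−s_{j₁}−⋯−s_{j_q}+s_{i₁}+⋯+s_{i_p}}·((L_{g_m} T_r)^{i₁⋯i_p}_{j₁⋯j_q}(x)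 + O(ρ)). -/
open scoped BigOperators

/-- Weighted scaling `ρ^S x = (ρ^{s₁}x¹, …, ρ^{sₙ}xⁿ)` with exponents `s` and `ρ > 0`. -/
noncomputable def wsc {n : ℕ} (s : Fin n → ℕ) (ρ : ℝ) (x : Fin n → ℂ) : Fin n → ℂ :=
  fun a => (ρ : ℂ) ^ (s a) * x a

/-- A vector field `g` on `ℂⁿ` is quasi-homogeneous of degree `m` with exponents `s`:
`g^j(ρ^S x) = ρ^{s_j + m − 1} g^j(x)` for all `ρ > 0`. -/
def IsQHVF {n : ℕ} (s : Fin n → ℕ) (m : ℕ) (g : Fin n → (Fin n → ℂ) → ℂ) : Prop :=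
  ∀ ρ : ℝ, 0 < ρ → ∀ (x : Fin n → ℂ) (j : Fin n),
    g j (wsc s ρ x) = (ρ : ℂ) ^ (s j + m - 1) * g j x

/-- `g` is positively semi-quasihomogeneous with quasi-homogeneous part `gm` of degree `m`:
`g = gm + g̃` where `g̃` is a sum of quasi-homogeneous vector fields of degrees all
strictly greater than `m`. -/
def IsPosSemiQH {n : ℕ} (s : Fin n → ℕ) (m : ℕ)
    (gm g : Fin n → (Fin n → ℂ) → ℂ) : Prop :=
  IsQHVF s m gm ∧
    ∃ h : ℕ → Fin n → (Fin n → ℂ) → ℂ,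
      (∀ d, IsQHVF s (m + 1 + d) (h d)) ∧
      (∀ (j : Fin n) (x : Fin n → ℂ), HasSum (fun d => h d j x) (g j x - gm j x))

/-- A tensor field `T` of type `(p,q)` is quasi-homogeneous of degree `l` with
exponents `s`:
`T^{i}_{j}(ρ^S x) = ρ^{l − s_{j₁} − ⋯ − s_{j_q} + s_{i₁} + ⋯ + s_{i_p}} T^{i}_{j}(x)`. -/
def IsQHTF {n p q : ℕ} (s : Fin n → ℕ) (l : ℤ)
    (T : (Fin p → Fin n) → (Fin q → Fin n) → (Fin n → ℂ) → ℂ) : Prop :=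
  ∀ ρ : ℝ, 0 < ρ → ∀ (i : Fin p → Fin n) (j : Fin q → Fin n) (x : Fin n → ℂ),
    T i j (wsc s ρ x)
      = (ρ : ℂ) ^ (l - ∑ a, (s (j a) : ℤ) + ∑ b, (s (i b) : ℤ)) * T i j x

section AuxLemmas

open Filter Metric Set

lemma tendsto_coeC : Filter.Tendsto (fun ρ:ℝ => (ρ:ℂ)) (nhdsWithin (0:ℝ) (Set.Ioi 0)) (nhds 0) := by
  have := (Complex.continuous_ofReal.tendsto 0).mono_left
    (nhdsWithin_le_nhds (s := Set.Ioi (0:ℝ)))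
  simpa using this

lemma dslope_differentiable (f : ℂ → ℂ) (hf : Differentiable ℂ f) :
    Differentiable ℂ (dslope f 0) := by
  intro b
  rcases eq_or_ne b 0 with rfl | hb
  · obtain ⟨p, hp⟩ := hf.analyticAt 0
    exact (hp.has_fpower_series_dslope_fslope).analyticAt.differentiableAt
  · exact (differentiableAt_dslope_of_ne hb).2 (hf b)

lemma factor_pow (μ : ℕ) : ∀ (f : ℂ → ℂ), Differentiable ℂ f →
    (∀ k, k < μ → Filter.Tendsto (fun ρ:ℝ => f ρ * ((ρ:ℂ)⁻¹)^k)
      (nhdsWithin (0:ℝ) (Set.Ioi 0)) (nhds 0)) →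
    ∃ gg : ℂ → ℂ, Differentiable ℂ gg ∧ ∀ ζ, f ζ = ζ^μ * gg ζ := by
  induction μ with
  | zero => exact fun f hf _ => ⟨f, hf, by simp⟩
  | succ μ ih =>
    intro f hf hcond
    have hf0 : f 0 = 0 := by
      have h1 : Tendsto (fun ρ:ℝ => f ρ) (nhdsWithin (0:ℝ) (Set.Ioi 0)) (nhds (f 0)) :=
        (hf.continuous.tendsto 0).comp tendsto_coeC
      have h2 : Tendsto (fun ρ:ℝ => f ρ) (nhdsWithin (0:ℝ) (Set.Ioi 0)) (nhds 0) := by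
        simpa using hcond 0 (Nat.succ_pos μ)
      exact tendsto_nhds_unique h1 h2
    set f1 := dslope f 0 with hf1def
    have hdiff : Differentiable ℂ f1 := dslope_differentiable f hf
    have hfac : ∀ ζ, f ζ = ζ * f1 ζ := by
      intro ζ
      have := sub_smul_dslope f 0 ζ
      simp only [sub_zero, smul_eq_mul, hf0] at this
      exact this.symm
    have hcond' : ∀ k, k < μ →
        Filter.Tendsto (fun ρ:ℝ => f1 ρ * ((ρ:ℂ)⁻¹)^k) (nhdsWithin (0:ℝ) (Set.Ioi 0)) (nhds 0) := by
      intro k hk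
      have hev : ∀ᶠ (ρ:ℝ) in nhdsWithin 0 (Set.Ioi 0),
          f ρ * ((ρ:ℂ)⁻¹)^(k+1) = f1 ρ * ((ρ:ℂ)⁻¹)^k := by
        filter_upwards [self_mem_nhdsWithin] with ρ (hρ : (0:ℝ) < ρ)
        have hne : (ρ:ℂ) ≠ 0 := by exact_mod_cast ne_of_gt hρ
        rw [hfac ρ]
        have hinv : (ρ:ℂ) * (ρ:ℂ)⁻¹ = 1 := mul_inv_cancel₀ hne
        linear_combination (f1 ρ * ((ρ:ℂ)⁻¹)^k) * hinv
      exact (hcond (k+1) (by omega)).congr' hev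
    obtain ⟨gg, hgg, hrep⟩ := ih f1 hdiff hcond'
    exact ⟨gg, hgg, fun ζ => by rw [hfac ζ, hrep ζ]; ring⟩

lemma maxmod (f : ℂ → ℂ) (hf : Differentiable ℂ f) (R M : ℝ) (hR : 0 < R)
    (hM : ∀ w:ℂ, ‖w‖ = R → ‖f w‖ ≤ M) : ∀ ζ:ℂ, ‖ζ‖ ≤ R → ‖f ζ‖ ≤ M := by
  intro ζ hζ
  have hfront : ∀ z ∈ frontier (Metric.ball (0:ℂ) R), ‖f z‖ ≤ M := by
    intro z hz
    rw [frontier_ball (0:ℂ) hR.ne'] at hz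
    exact hM z (by simpa [mem_sphere_iff_norm] using hz)
  have hcl : ζ ∈ closure (Metric.ball (0:ℂ) R) := by
    rw [closure_ball (0:ℂ) hR.ne']
    simpa [mem_closedBall_iff_norm] using hζ
  exact Complex.norm_le_of_forall_mem_frontier_norm_le isBounded_ball
    hf.diffContOnCl hfront hcl

lemma derivBound (φ : ℂ → ℂ) (hφ : Differentiable ℂ φ) (δ B : ℝ) (hδ : 0 < δ)
    (hB : ∀ t:ℂ, ‖t‖ = δ → ‖φ t - φ 0‖ ≤ B) : ‖deriv φ 0‖ ≤ B / δ := by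
  have hψd : Differentiable ℂ (dslope φ 0) := dslope_differentiable φ hφ
  have hsphere : ∀ t:ℂ, ‖t‖ = δ → ‖dslope φ 0 t‖ ≤ B / δ := by
    intro t ht
    have hne : t ≠ 0 := by
      intro h; rw [h] at ht; simp at ht; exact hδ.ne' ht.symm
    rw [dslope_of_ne _ hne, slope_def_field]
    rw [norm_div]
    simp only [sub_zero, ht]
    gcongr
    exact hB t ht
  have := maxmod (dslope φ 0) hψd δ (B/δ) hδ hsphere 0 (by simp [hδ.le])
  simpa [dslope_same] using this

variable {n p q : ℕ}

lemma pderiv_sub (f g : (Fin n → ℂ) → ℂ) (hf : Differentiable ℂ f)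
    (hg : Differentiable ℂ g) (l : Fin n) (y : Fin n → ℂ) :
    pderivC (fun z => f z - g z) l y = pderivC f l y - pderivC g l y := by
  unfold pderivC
  rw [fderiv_fun_sub (hf y) (hg y)]
  simp

lemma pderiv_slice (u : (Fin n → ℂ) → ℂ) (hu : Differentiable ℂ u)
    (y : Fin n → ℂ) (l : Fin n) :
    pderivC u l y = deriv (fun t : ℂ => u (y + t • (Pi.single l 1 : Fin n → ℂ))) 0 := by
  have hA : HasDerivAt (fun t:ℂ => y + t • (Pi.single l 1 : Fin n → ℂ))
      (Pi.single l 1 : Fin n → ℂ) 0 := by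
    simpa using ((hasDerivAt_id (0:ℂ)).smul_const (Pi.single l (1:ℂ))).const_add y
  have hy : y = y + (0:ℂ) • (Pi.single l 1 : Fin n → ℂ) := by simp
  have hcomp := (hy ▸ (hu y).hasFDerivAt :
      HasFDerivAt u (fderiv ℂ u y) (y + (0:ℂ) • (Pi.single l 1 : Fin n → ℂ))).comp_hasDerivAt 0 hA
  exact (hcomp.deriv).symm

lemma pderiv_scale_s7 (s : Fin n → ℕ) (u : (Fin n → ℂ) → ℂ) (hu : Differentiable ℂ u)
    (e : ℤ) (hsc : ∀ ρ:ℝ, 0 < ρ → ∀ y, u (wsc s ρ y) = (ρ:ℂ)^e * u y)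
    (ρ : ℝ) (hρ : 0 < ρ) (x : Fin n → ℂ) (k : Fin n) :
    pderivC u k (wsc s ρ x) = (ρ:ℂ)^(e - (s k : ℤ)) * pderivC u k x := by
  set L : (Fin n → ℂ) →L[ℂ] (Fin n → ℂ) :=
    ContinuousLinearMap.pi (fun a => ((ρ:ℂ)^(s a)) • ContinuousLinearMap.proj a) with hLdef
  have hL : ∀ y, L y = wsc s ρ y := by
    intro y; funext a
    simp [hLdef, wsc, ContinuousLinearMap.proj_apply, smul_eq_mul]
  have hcomp : (fun y => u (L y)) = fun y => (ρ:ℂ)^e * u y := by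
    funext y; rw [hL y]; exact hsc ρ hρ y
  have h1 : fderiv ℂ (fun y => u (L y)) x = (fderiv ℂ u (L x)).comp L := by
    have := fderiv_comp x (hu (L x)) (L.differentiable.differentiableAt)
    simpa [L.fderiv, Function.comp_def] using this
  have h2 : fderiv ℂ (fun y => (ρ:ℂ)^e * u y) x = (ρ:ℂ)^e • fderiv ℂ u x :=
    fderiv_const_mul (hu x) _
  have h3 : (fderiv ℂ u (L x)).comp L = (ρ:ℂ)^e • fderiv ℂ u x := by
    rw [← h1, hcomp, h2]
  have hLe : L (Pi.single k 1 : Fin n → ℂ) = ((ρ:ℂ)^(s k)) • (Pi.single k 1 : Fin n → ℂ) := by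
    funext a
    rcases eq_or_ne a k with rfl | hak
    · simp [hLdef]
    · simp [hLdef, Pi.single_apply, hak]
  have h4 := congrArg (fun (Φ : (Fin n → ℂ) →L[ℂ] ℂ) => Φ (Pi.single k 1)) h3
  simp only [ContinuousLinearMap.comp_apply, ContinuousLinearMap.smul_apply] at h4
  rw [hLe, map_smul] at h4
  have hρC : (ρ:ℂ) ≠ 0 := by exact_mod_cast hρ.ne'
  have hnz : ((ρ:ℂ)^(s k)) ≠ 0 := pow_ne_zero _ hρC
  unfold pderivC
  rw [hL x] at h4
  have : ((ρ:ℂ)^(s k)) * fderiv ℂ u (wsc s ρ x) (Pi.single k 1)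
      = (ρ:ℂ)^e * fderiv ℂ u x (Pi.single k 1) := by
    simpa [smul_eq_mul] using h4
  rw [zpow_sub₀ hρC, div_mul_eq_mul_div, eq_div_iff (zpow_ne_zero _ hρC), mul_comm ((ρ:ℂ)^e) _]
  rw [zpow_natCast] at *
  rw [mul_comm (fderiv ℂ u (wsc s ρ x) (Pi.single k 1)) _, this]
  ring

lemma factA (s : Fin n → ℕ) (m : ℕ) (u : Fin n → (Fin n → ℂ) → ℂ)
    (h : ℕ → Fin n → (Fin n → ℂ) → ℂ)
    (hh : ∀ d, IsQHVF s (m + 1 + d) (h d))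
    (hsum : ∀ (j : Fin n) (x : Fin n → ℂ), HasSum (fun d => h d j x) (u j x))
    (j : Fin n) (x : Fin n → ℂ) :
    ∃ C : ℝ, 0 ≤ C ∧ ∀ ρ:ℝ, 0 < ρ → ρ ≤ 1/4 →
      ‖u j (wsc s ρ x)‖ ≤ C * ρ^(s j + m) := by
  set μ := s j + m with hμ
  have key : ∀ ρ:ℝ, 0 < ρ → HasSum (fun d => (ρ:ℂ)^(μ + d) * h d j x) (u j (wsc s ρ x)) := by
    intro ρ hρ
    have h1 := hsum j (wsc s ρ x)
    have h2 : (fun d => h d j (wsc s ρ x)) = fun d => (ρ:ℂ)^(μ + d) * h d j x := by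
      funext d
      rw [hh d ρ hρ x j]
      congr 2
      omega
    rwa [h2] at h1
  have hhalf := (key (1/2) (by norm_num)).summable
  have hnorm : Summable (fun d => ‖((1/2:ℝ):ℂ)^(μ + d) * h d j x‖) :=
    summable_norm_iff.2 hhalf
  set c := ∑' d, ‖((1/2:ℝ):ℂ)^(μ + d) * h d j x‖ with hcdef
  have hc0 : 0 ≤ c := tsum_nonneg (fun d => norm_nonneg _)
  have hcb : ∀ d, ‖h d j x‖ ≤ c * 2^(μ + d) := by
    intro d
    have h1 : ‖((1/2:ℝ):ℂ)^(μ + d) * h d j x‖ ≤ c :=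
      Summable.le_tsum hnorm d (fun _ _ => norm_nonneg _)
    rw [norm_mul, norm_pow] at h1
    have h2 : ‖((1/2:ℝ):ℂ)‖ = (1/2:ℝ) := by
      rw [Complex.norm_real]; norm_num
    rw [h2] at h1
    calc ‖h d j x‖ = ((1/2:ℝ)^(μ+d) * ‖h d j x‖) * 2^(μ+d) := by
          rw [mul_comm ((1/2:ℝ)^(μ+d)) _, mul_assoc]
          rw [← mul_pow]
          norm_num
      _ ≤ c * 2^(μ+d) := by
          apply mul_le_mul_of_nonneg_right h1 (by positivity)
  refine ⟨c * 2^(μ+1), by positivity, ?_⟩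
  intro ρ hρ hρ4
  have hterm : ∀ d, ‖(ρ:ℂ)^(μ + d) * h d j x‖ ≤ (c * 2^μ * ρ^μ) * (1/2)^d := by
    intro d
    rw [norm_mul, norm_pow, Complex.norm_real, Real.norm_eq_abs, abs_of_pos hρ]
    calc ρ^(μ+d) * ‖h d j x‖ ≤ ρ^(μ+d) * (c * 2^(μ+d)) :=
          mul_le_mul_of_nonneg_left (hcb d) (by positivity)
      _ = c * ((2*ρ)^μ * (2*ρ)^d) := by rw [← pow_add, mul_pow]; ring
      _ ≤ c * ((2*ρ)^μ * (1/2)^d) := by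
          apply mul_le_mul_of_nonneg_left _ hc0
          apply mul_le_mul_of_nonneg_left _ (by positivity)
          apply pow_le_pow_left₀ (by positivity) (by linarith)
      _ ≤ c * ((2^μ * ρ^μ) * (1/2)^d) := by
          rw [mul_pow]
      _ = (c * 2^μ * ρ^μ) * (1/2)^d := by ring
  have hsummand : Summable (fun d => (c * 2^μ * ρ^μ) * (1/2:ℝ)^d) :=
    (summable_geometric_two).mul_left _
  have hnorms : Summable (fun d => ‖(ρ:ℂ)^(μ + d) * h d j x‖) :=
    Summable.of_nonneg_of_le (fun d => norm_nonneg _) hterm hsummand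
  have heq := (key ρ hρ).tsum_eq
  calc ‖u j (wsc s ρ x)‖ = ‖∑' d, (ρ:ℂ)^(μ + d) * h d j x‖ := by rw [heq]
    _ ≤ ∑' d, ‖(ρ:ℂ)^(μ + d) * h d j x‖ := norm_tsum_le_tsum_norm hnorms
    _ ≤ ∑' d, (c * 2^μ * ρ^μ) * (1/2:ℝ)^d := Summable.tsum_le_tsum hterm hnorms hsummand
    _ = (c * 2^μ * ρ^μ) * 2 := by rw [tsum_mul_left, tsum_geometric_two]
    _ = c * 2^(μ+1) * ρ^μ := by ring

lemma factD (s : Fin n → ℕ) (m : ℕ) (uk : (Fin n → ℂ) → ℂ)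
    (hud : Differentiable ℂ uk) (k l : Fin n)
    (hA : ∀ x : Fin n → ℂ, ∃ C : ℝ, 0 ≤ C ∧ ∀ ρ:ℝ, 0 < ρ → ρ ≤ 1/4 →
      ‖uk (wsc s ρ x)‖ ≤ C * ρ^(s k + m))
    (x : Fin n → ℂ) :
    ∃ C : ℝ, 0 ≤ C ∧ ∀ ρ:ℝ, 0 < ρ → ρ ≤ 1/4 →
      ‖pderivC uk l (wsc s ρ x)‖ ≤ C * ρ^(((s k : ℤ) + m - s l)) := by
  classical
  set μ := s k + m with hμ
  set el : Fin n → ℂ := Pi.single l 1 with heldef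
  set Φ : ℂ × ℂ → (Fin n → ℂ) := fun p => fun a => p.1^(s a) * (x a + p.2 * el a) with hΦdef
  have hΦcont : Continuous Φ := by
    apply continuous_pi
    intro a
    exact ((continuous_fst.pow _).mul (continuous_const.add (continuous_snd.mul continuous_const)))
  have hK : IsCompact (Φ '' ((Metric.closedBall 0 1) ×ˢ (Metric.closedBall 0 1))) :=
    ((isCompact_closedBall _ _).prod (isCompact_closedBall _ _)).image hΦcont
  obtain ⟨M, hM⟩ := hK.exists_bound_of_continuousOn hud.continuous.continuousOn
  have hM0 : 0 ≤ M := by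
    refine le_trans (norm_nonneg (uk (Φ (0,0)))) (hM _ ?_)
    exact Set.mem_image_of_mem _ (by simp)
  have hdisc : ∀ (c : ℂ), ‖c‖ ≤ 1 → ∀ ρ:ℝ, 0 < ρ → ρ ≤ 1/4 →
      ‖uk (fun a => (ρ:ℂ)^(s a) * (x a + c * el a))‖ ≤ M * ρ^μ := by
    intro c hc
    set x' : Fin n → ℂ := fun a => x a + c * el a with hx'def
    set f : ℂ → ℂ := fun ζ => uk (fun a => ζ^(s a) * x' a) with hfdef
    have hfd : Differentiable ℂ f := by
      apply hud.comp
      apply differentiable_pi.2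
      intro a
      exact (differentiable_pow (s a)).mul_const _
    obtain ⟨C, hC0, hC⟩ := hA x'
    have hCf : ∀ ρ:ℝ, 0 < ρ → ρ ≤ 1/4 → ‖f ρ‖ ≤ C * ρ^μ := by
      intro ρ hρ hρ4
      exact hC ρ hρ hρ4
    have hcond : ∀ k', k' < μ →
        Filter.Tendsto (fun ρ:ℝ => f ρ * ((ρ:ℂ)⁻¹)^k') (nhdsWithin (0:ℝ) (Set.Ioi 0)) (nhds 0) := by
      intro k' hk'
      apply squeeze_zero_norm' (a := fun ρ:ℝ => C * ρ^(μ - k'))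
      · filter_upwards [Ioo_mem_nhdsGT (by norm_num : (0:ℝ) < 1/4)]
          with ρ hρ
        obtain ⟨hρ0, hρ4⟩ := hρ
        have hρC : (ρ:ℂ) ≠ 0 := by exact_mod_cast hρ0.ne'
        rw [norm_mul, norm_pow, norm_inv, Complex.norm_real, Real.norm_eq_abs,
          abs_of_pos hρ0]
        calc ‖f ρ‖ * (ρ⁻¹)^k' ≤ (C * ρ^μ) * (ρ⁻¹)^k' := by
              apply mul_le_mul_of_nonneg_right (hCf ρ hρ0 hρ4.le) (by positivity)
          _ = C * ρ^(μ - k') := by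
              rw [pow_sub₀ ρ hρ0.ne' hk'.le, inv_pow]
              ring
      · have hcc : Continuous (fun ρ:ℝ => C * ρ^(μ - k')) := by continuity
        have hcont := hcc.tendsto 0
        simp only [zero_pow (by omega : μ - k' ≠ 0), mul_zero] at hcont
        exact hcont.mono_left nhdsWithin_le_nhds
    obtain ⟨gg, hggd, hggrep⟩ := factor_pow μ f hfd hcond
    have hggM : ∀ ζ:ℂ, ‖ζ‖ ≤ 1 → ‖gg ζ‖ ≤ M := by
      apply maxmod gg hggd 1 M one_pos
      intro w hw
      have h1 : ‖f w‖ = ‖gg w‖ := by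
        rw [hggrep w, norm_mul, norm_pow, hw, one_pow, one_mul]
      rw [← h1]
      apply hM
      refine ⟨(w, c), ?_, rfl⟩
      constructor
      · simpa [Metric.mem_closedBall, dist_zero_right] using hw.le
      · simpa [Metric.mem_closedBall, dist_zero_right] using hc
    intro ρ hρ hρ4
    have h2 : ‖f ((ρ:ℝ):ℂ)‖ ≤ M * ρ^μ := by
      rw [hggrep]
      rw [norm_mul, norm_pow, Complex.norm_real, Real.norm_eq_abs, abs_of_pos hρ]
      rw [mul_comm]
      apply mul_le_mul_of_nonneg_right _ (by positivity)
      apply hggM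
      rw [Complex.norm_real, Real.norm_eq_abs, abs_of_pos hρ]; linarith
    exact h2
  refine ⟨2 * M, by positivity, ?_⟩
  intro ρ hρ hρ4
  have hρC : (ρ:ℂ) ≠ 0 := by exact_mod_cast hρ.ne'
  set y : Fin n → ℂ := wsc s ρ x with hydef
  set φ : ℂ → ℂ := fun t => uk (y + t • el) with hφdef
  have hφd : Differentiable ℂ φ := by
    apply hud.comp
    exact (differentiable_id.smul_const el).const_add y
  have hδ : (0:ℝ) < ρ^(s l) := by positivity
  have hBkey : ∀ t:ℂ, ‖t‖ = ρ^(s l) → ‖φ t - φ 0‖ ≤ 2 * (M * ρ^μ) := by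
    intro t ht
    have hb1 : ‖φ t‖ ≤ M * ρ^μ := by
      have hc : ‖t / ((ρ:ℂ)^(s l))‖ ≤ 1 := by
        rw [norm_div, norm_pow, Complex.norm_real, Real.norm_eq_abs, abs_of_pos hρ, ht]
        rw [div_self (by positivity)]
      have := hdisc (t / ((ρ:ℂ)^(s l))) hc ρ hρ hρ4
      have harg : (fun a => (ρ:ℂ)^(s a) * (x a + (t / ((ρ:ℂ)^(s l))) * el a)) = y + t • el := by
        funext a
        rcases eq_or_ne a l with rfl | hal
        · simp only [heldef, Pi.single_eq_same, mul_one, Pi.add_apply, Pi.smul_apply,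
            smul_eq_mul, hydef, wsc]
          field_simp
        · simp [heldef, Pi.single_apply, hal, hydef, wsc]
      rwa [harg] at this
    have hb0 : ‖φ 0‖ ≤ M * ρ^μ := by
      have := hdisc 0 (by simp) ρ hρ hρ4
      have harg : (fun a => (ρ:ℂ)^(s a) * (x a + 0 * el a)) = y + (0:ℂ) • el := by
        funext a; simp [hydef, wsc]
      rwa [harg] at this
    calc ‖φ t - φ 0‖ ≤ ‖φ t‖ + ‖φ 0‖ := norm_sub_le _ _
      _ ≤ 2 * (M * ρ^μ) := by linarith
  have hder := derivBound φ hφd (ρ^(s l)) (2 * (M * ρ^μ)) hδ hBkey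
  have hps : pderivC uk l y = deriv φ 0 := pderiv_slice uk hud y l
  rw [hps]
  calc ‖deriv φ 0‖ ≤ (2 * (M * ρ^μ)) / ρ^(s l) := hder
    _ = 2 * M * ρ^(((s k : ℤ) + m - s l)) := by
      rw [eq_comm, zpow_sub₀ hρ.ne']
      rw [show ((s k : ℤ) + m) = ((μ:ℕ) : ℤ) by push_cast [hμ]; ring]
      rw [zpow_natCast, zpow_natCast]
      field_simp

lemma sum_update_cast {q : ℕ} (s : Fin n → ℕ) (j : Fin q → Fin n) (a : Fin q) (k : Fin n) :
    ∑ a', (s (Function.update j a k a') : ℤ)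
      = (∑ a', (s (j a') : ℤ)) - s (j a) + s k := by
  classical
  have h1 : (fun a' => (s (Function.update j a k a') : ℤ))
      = Function.update (fun a' => (s (j a') : ℤ)) a (s k) := by
    funext a'
    rcases eq_or_ne a' a with rfl | ha
    · simp
    · simp [Function.update_of_ne ha]
  rw [h1, Finset.sum_update_of_mem (Finset.mem_univ a)]
  rw [← Finset.sum_erase_eq_sub (Finset.mem_univ a)]
  have h2 : Finset.univ \ {a} = Finset.univ.erase a := by
    ext t; simp [Finset.mem_erase, and_comm]
  rw [h2]; ring

lemma lieDeriv_QH_scale (s : Fin n → ℕ) (m : ℕ) (hm : 1 ≤ m)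
    (gm : Fin n → (Fin n → ℂ) → ℂ) (hgm : IsQHVF s m gm)
    (hgmd : ∀ k, Differentiable ℂ (gm k))
    (r : ℤ) (T : (Fin p → Fin n) → (Fin q → Fin n) → (Fin n → ℂ) → ℂ)
    (hT : IsQHTF s r T) (hTd : ∀ i j, Differentiable ℂ (T i j))
    (i : Fin p → Fin n) (j : Fin q → Fin n) (x : Fin n → ℂ) (ρ : ℝ) (hρ : 0 < ρ) :
    lieDeriv gm T i j (wsc s ρ x)
      = (ρ:ℂ)^(r + (m:ℤ) - 1 - ∑ a, (s (j a):ℤ) + ∑ b, (s (i b):ℤ)) * lieDeriv gm T i j x := by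
  classical
  have hρC : (ρ:ℂ) ≠ 0 := by exact_mod_cast hρ.ne'
  set Sj : ℤ := ∑ a, (s (j a):ℤ) with hSj
  set Si : ℤ := ∑ b, (s (i b):ℤ) with hSi
  set κ : ℤ := r + (m:ℤ) - 1 - Sj + Si with hκ
  have hgm' : ∀ k : Fin n, ∀ ρ':ℝ, 0 < ρ' → ∀ y,
      gm k (wsc s ρ' y) = (ρ':ℂ)^((s k:ℤ) + m - 1) * gm k y := by
    intro k ρ' hρ' y
    have hc : ((s k + m - 1 : ℕ):ℤ) = (s k:ℤ) + m - 1 := by omega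
    rw [hgm ρ' hρ' y k, ← zpow_natCast, hc]
  have hpT : ∀ (i' : Fin p → Fin n) (j' : Fin q → Fin n) (k : Fin n),
      pderivC (T i' j') k (wsc s ρ x)
        = (ρ:ℂ)^((r - ∑ a, (s (j' a):ℤ) + ∑ b, (s (i' b):ℤ)) - (s k:ℤ)) * pderivC (T i' j') k x :=
    fun i' j' k =>
      pderiv_scale_s7 s (T i' j') (hTd i' j') _ (fun ρ' hρ' y => hT ρ' hρ' i' j' y) ρ hρ x k
  have hpgm : ∀ k l' : Fin n, pderivC (gm k) l' (wsc s ρ x)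
      = (ρ:ℂ)^(((s k:ℤ) + m - 1) - (s l':ℤ)) * pderivC (gm k) l' x :=
    fun k l' => pderiv_scale_s7 s (gm k) (hgmd k) _ (hgm' k) ρ hρ x l'
  have hS1 : ∑ s', gm s' (wsc s ρ x) * pderivC (T i j) s' (wsc s ρ x)
      = (ρ:ℂ)^κ * ∑ s', gm s' x * pderivC (T i j) s' x := by
    rw [Finset.mul_sum]
    apply Finset.sum_congr rfl
    intro s' _
    rw [hgm' s' ρ hρ x, hpT i j s']
    have hme : (ρ:ℂ)^(((s s':ℤ) + m - 1)) * (ρ:ℂ)^((r - Sj + Si) - (s s':ℤ)) = (ρ:ℂ)^κ := by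
      rw [← zpow_add₀ hρC]; congr 1; omega
    calc ((ρ:ℂ)^(((s s':ℤ) + m - 1)) * gm s' x)
          * ((ρ:ℂ)^((r - Sj + Si) - (s s':ℤ)) * pderivC (T i j) s' x)
        = ((ρ:ℂ)^(((s s':ℤ) + m - 1)) * (ρ:ℂ)^((r - Sj + Si) - (s s':ℤ)))
          * (gm s' x * pderivC (T i j) s' x) := by ring
      _ = (ρ:ℂ)^κ * (gm s' x * pderivC (T i j) s' x) := by rw [hme]
  have hS2 : ∑ a : Fin q, ∑ k, T i (Function.update j a k) (wsc s ρ x)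
        * pderivC (gm k) (j a) (wsc s ρ x)
      = (ρ:ℂ)^κ * ∑ a : Fin q, ∑ k, T i (Function.update j a k) x * pderivC (gm k) (j a) x := by
    rw [Finset.mul_sum]
    apply Finset.sum_congr rfl
    intro a _
    rw [Finset.mul_sum]
    apply Finset.sum_congr rfl
    intro k _
    rw [hT ρ hρ i (Function.update j a k) x, hpgm k (j a)]
    rw [sum_update_cast s j a k]
    have hme : (ρ:ℂ)^(r - ((∑ a', (s (j a'):ℤ)) - (s (j a):ℤ) + (s k:ℤ)) + Si)
        * (ρ:ℂ)^(((s k:ℤ) + m - 1) - (s (j a):ℤ)) = (ρ:ℂ)^κ := by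
      rw [← zpow_add₀ hρC]; congr 1; rw [hκ, hSj]; ring
    calc ((ρ:ℂ)^(r - ((∑ a', (s (j a'):ℤ)) - (s (j a):ℤ) + (s k:ℤ)) + Si)
            * T i (Function.update j a k) x)
          * ((ρ:ℂ)^(((s k:ℤ) + m - 1) - (s (j a):ℤ)) * pderivC (gm k) (j a) x)
        = ((ρ:ℂ)^(r - ((∑ a', (s (j a'):ℤ)) - (s (j a):ℤ) + (s k:ℤ)) + Si)
            * (ρ:ℂ)^(((s k:ℤ) + m - 1) - (s (j a):ℤ)))
          * (T i (Function.update j a k) x * pderivC (gm k) (j a) x) := by ring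
      _ = _ := by rw [hme]
  have hS3 : ∑ b : Fin p, ∑ l', T (Function.update i b l') j (wsc s ρ x)
        * pderivC (gm (i b)) l' (wsc s ρ x)
      = (ρ:ℂ)^κ * ∑ b : Fin p, ∑ l', T (Function.update i b l') j x
          * pderivC (gm (i b)) l' x := by
    rw [Finset.mul_sum]
    apply Finset.sum_congr rfl
    intro b _
    rw [Finset.mul_sum]
    apply Finset.sum_congr rfl
    intro l' _
    rw [hT ρ hρ (Function.update i b l') j x, hpgm (i b) l']
    rw [sum_update_cast s i b l']
    have hme : (ρ:ℂ)^(r - Sj + ((∑ b', (s (i b'):ℤ)) - (s (i b):ℤ) + (s l':ℤ)))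
        * (ρ:ℂ)^(((s (i b):ℤ) + m - 1) - (s l':ℤ)) = (ρ:ℂ)^κ := by
      rw [← zpow_add₀ hρC]; congr 1; rw [hκ, hSi]; ring
    calc ((ρ:ℂ)^(r - Sj + ((∑ b', (s (i b'):ℤ)) - (s (i b):ℤ) + (s l':ℤ)))
            * T (Function.update i b l') j x)
          * ((ρ:ℂ)^(((s (i b):ℤ) + m - 1) - (s l':ℤ)) * pderivC (gm (i b)) l' x)
        = ((ρ:ℂ)^(r - Sj + ((∑ b', (s (i b'):ℤ)) - (s (i b):ℤ) + (s l':ℤ)))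
            * (ρ:ℂ)^(((s (i b):ℤ) + m - 1) - (s l':ℤ)))
          * (T (Function.update i b l') j x * pderivC (gm (i b)) l' x) := by ring
      _ = _ := by rw [hme]
  unfold lieDeriv
  rw [hS1, hS2, hS3]
  ring

end AuxLemmas

open Asymptotics

/-- **Lemma 3.** For a positively semi-quasihomogeneous analytic vector
field `g` with quasi-homogeneous part `gm` of degree `m > 1`, and a quasi-homogeneous
analytic tensor field `T` of type `(p,q)` of degree `r`, one has, as `ρ → 0⁺`,
`(L_g T)^{i}_{j}(ρ^S x) = ρ^{r+m−1−Σs_{j}+Σs_{i}} ((L_{gm} T)^{i}_{j}(x) + O(ρ))`. -/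
theorem lieDeriv_semiQH_expansion {n p q : ℕ}
    (s : Fin n → ℕ) (hs : ∀ a, 0 < s a) (m : ℕ) (hm : 1 < m)
    (g gm : Fin n → (Fin n → ℂ) → ℂ)
    (hgan : ∀ j, AnalyticOnNhd ℂ (g j) Set.univ)
    (hgman : ∀ j, AnalyticOnNhd ℂ (gm j) Set.univ)
    (hsemi : IsPosSemiQH s m gm g)
    (r : ℤ)
    (T : (Fin p → Fin n) → (Fin q → Fin n) → (Fin n → ℂ) → ℂ)
    (hTan : ∀ i j, AnalyticOnNhd ℂ (T i j) Set.univ)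
    (hT : IsQHTF s r T) :
    ∀ (x : Fin n → ℂ) (i : Fin p → Fin n) (j : Fin q → Fin n),
      (fun ρ : ℝ => lieDeriv g T i j (wsc s ρ x)
          - (ρ : ℂ) ^ (r + (m : ℤ) - 1 - ∑ a, (s (j a) : ℤ) + ∑ b, (s (i b) : ℤ))
            * lieDeriv gm T i j x)
        =O[nhdsWithin 0 (Set.Ioi 0)]
      (fun ρ : ℝ =>
        ρ ^ (r + (m : ℤ) - 1 - ∑ a, (s (j a) : ℤ) + ∑ b, (s (i b) : ℤ) + 1)) := by
  classical
  obtain ⟨hgmQH, h, hh, hsum⟩ := hsemi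
  intro x i j
  have hgd : ∀ k, Differentiable ℂ (g k) :=
    fun k y => ((hgan k) y (Set.mem_univ y)).differentiableAt
  have hgmd : ∀ k, Differentiable ℂ (gm k) :=
    fun k y => ((hgman k) y (Set.mem_univ y)).differentiableAt
  have hTd : ∀ i' j', Differentiable ℂ (T i' j') :=
    fun i' j' y => ((hTan i' j') y (Set.mem_univ y)).differentiableAt
  have hud : ∀ k, Differentiable ℂ (fun y => g k y - gm k y) := fun k => (hgd k).sub (hgmd k)
  set Sj : ℤ := ∑ a, (s (j a):ℤ) with hSj
  set Si : ℤ := ∑ b, (s (i b):ℤ) with hSi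
  set κ : ℤ := r + (m:ℤ) - 1 - Sj + Si with hκ
  have hEq : ∀ᶠ (ρ:ℝ) in nhdsWithin 0 (Set.Ioi 0),
      lieDeriv g T i j (wsc s ρ x) - (ρ:ℂ)^κ * lieDeriv gm T i j x
      = (∑ s', (g s' (wsc s ρ x) - gm s' (wsc s ρ x)) * pderivC (T i j) s' (wsc s ρ x))
        + (∑ a : Fin q, ∑ k, T i (Function.update j a k) (wsc s ρ x)
            * pderivC (fun z => g k z - gm k z) (j a) (wsc s ρ x))
        - (∑ b : Fin p, ∑ l', T (Function.update i b l') j (wsc s ρ x)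
            * pderivC (fun z => g (i b) z - gm (i b) z) l' (wsc s ρ x)) := by
    filter_upwards [self_mem_nhdsWithin] with ρ (hρ : (0:ℝ) < ρ)
    rw [← lieDeriv_QH_scale s m hm.le gm hgmQH hgmd r T hT hTd i j x ρ hρ]
    have hps : ∀ (k l' : Fin n), pderivC (fun z => g k z - gm k z) l' (wsc s ρ x)
        = pderivC (g k) l' (wsc s ρ x) - pderivC (gm k) l' (wsc s ρ x) :=
      fun k l' => pderiv_sub _ _ (hgd k) (hgmd k) l' (wsc s ρ x)
    simp only [lieDeriv, hps, sub_mul, mul_sub, Finset.sum_sub_distrib]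
    ring
  have hOA : (fun ρ:ℝ => ∑ s', (g s' (wsc s ρ x) - gm s' (wsc s ρ x))
        * pderivC (T i j) s' (wsc s ρ x))
      =O[nhdsWithin 0 (Set.Ioi 0)] (fun ρ:ℝ => ρ^(κ + 1)) := by
    apply Asymptotics.IsBigO.fun_sum
    intro s' _
    obtain ⟨C, hC0, hC⟩ := factA s m (fun k y => g k y - gm k y) h hh
      (fun j' x' => hsum j' x') s' x
    rw [Asymptotics.isBigO_iff]
    refine ⟨C * ‖pderivC (T i j) s' x‖, ?_⟩
    filter_upwards [Ioo_mem_nhdsGT (by norm_num : (0:ℝ) < 1/4)] with ρ hρm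
    obtain ⟨hρ0, hρ4⟩ := hρm
    have hρC : (ρ:ℂ) ≠ 0 := by exact_mod_cast hρ0.ne'
    rw [pderiv_scale_s7 s (T i j) (hTd i j) (r - Sj + Si)
      (fun ρ' hρ' y => hT ρ' hρ' i j y) ρ hρ0 x s']
    rw [norm_mul, norm_mul, norm_zpow, Complex.norm_real, Real.norm_eq_abs, abs_of_pos hρ0]
    rw [Real.norm_eq_abs, abs_of_pos (zpow_pos hρ0 _)]
    have hmr : ρ^(s s' + m) * ρ^(r - Sj + Si - (s s':ℤ)) = ρ^(κ+1) := by
      rw [← zpow_natCast ρ (s s' + m), ← zpow_add₀ hρ0.ne']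
      congr 1
      rw [hκ]; push_cast; ring
    calc ‖g s' (wsc s ρ x) - gm s' (wsc s ρ x)‖
          * (ρ^(r - Sj + Si - (s s':ℤ)) * ‖pderivC (T i j) s' x‖)
        ≤ (C * ρ^(s s' + m)) * (ρ^(r - Sj + Si - (s s':ℤ)) * ‖pderivC (T i j) s' x‖) := by
          apply mul_le_mul_of_nonneg_right (hC ρ hρ0 hρ4.le)
          have := zpow_pos hρ0 (r - Sj + Si - (s s':ℤ))
          positivity
      _ = (C * ‖pderivC (T i j) s' x‖) * (ρ^(s s' + m) * ρ^(r - Sj + Si - (s s':ℤ))) := by ring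
      _ = (C * ‖pderivC (T i j) s' x‖) * ρ^(κ+1) := by rw [hmr]
  have hOB : (fun ρ:ℝ => ∑ a : Fin q, ∑ k, T i (Function.update j a k) (wsc s ρ x)
        * pderivC (fun z => g k z - gm k z) (j a) (wsc s ρ x))
      =O[nhdsWithin 0 (Set.Ioi 0)] (fun ρ:ℝ => ρ^(κ + 1)) := by
    apply Asymptotics.IsBigO.fun_sum
    intro a _
    apply Asymptotics.IsBigO.fun_sum
    intro k _
    obtain ⟨C, hC0, hC⟩ := factD s m (fun y => g k y - gm k y) (hud k) k (j a)
      (fun x' => factA s m (fun k' y => g k' y - gm k' y) h hh (fun j' x'' => hsum j' x'') k x') x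
    rw [Asymptotics.isBigO_iff]
    refine ⟨‖T i (Function.update j a k) x‖ * C, ?_⟩
    filter_upwards [Ioo_mem_nhdsGT (by norm_num : (0:ℝ) < 1/4)] with ρ hρm
    obtain ⟨hρ0, hρ4⟩ := hρm
    have hρC : (ρ:ℂ) ≠ 0 := by exact_mod_cast hρ0.ne'
    rw [hT ρ hρ0 i (Function.update j a k) x]
    rw [norm_mul, norm_mul, norm_zpow, Complex.norm_real, Real.norm_eq_abs, abs_of_pos hρ0]
    rw [Real.norm_eq_abs, abs_of_pos (zpow_pos hρ0 _)]
    have hmr : ρ^(r - (∑ a', (s (Function.update j a k a'):ℤ)) + Si)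
        * ρ^((s k:ℤ) + m - (s (j a):ℤ)) = ρ^(κ+1) := by
      rw [← zpow_add₀ hρ0.ne']
      congr 1
      rw [sum_update_cast s j a k, hκ, hSj]; ring
    calc (ρ^(r - (∑ a', (s (Function.update j a k a'):ℤ)) + Si)
            * ‖T i (Function.update j a k) x‖)
          * ‖pderivC (fun z => g k z - gm k z) (j a) (wsc s ρ x)‖
        ≤ (ρ^(r - (∑ a', (s (Function.update j a k a'):ℤ)) + Si)
            * ‖T i (Function.update j a k) x‖) * (C * ρ^((s k:ℤ) + m - (s (j a):ℤ))) := by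
          apply mul_le_mul_of_nonneg_left (hC ρ hρ0 hρ4.le)
          have := zpow_pos hρ0 (r - (∑ a', (s (Function.update j a k a'):ℤ)) + Si)
          positivity
      _ = (‖T i (Function.update j a k) x‖ * C)
            * (ρ^(r - (∑ a', (s (Function.update j a k a'):ℤ)) + Si)
              * ρ^((s k:ℤ) + m - (s (j a):ℤ))) := by ring
      _ = (‖T i (Function.update j a k) x‖ * C) * ρ^(κ+1) := by rw [hmr]
  have hOC : (fun ρ:ℝ => ∑ b : Fin p, ∑ l', T (Function.update i b l') j (wsc s ρ x)
        * pderivC (fun z => g (i b) z - gm (i b) z) l' (wsc s ρ x))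
      =O[nhdsWithin 0 (Set.Ioi 0)] (fun ρ:ℝ => ρ^(κ + 1)) := by
    apply Asymptotics.IsBigO.fun_sum
    intro b _
    apply Asymptotics.IsBigO.fun_sum
    intro l' _
    obtain ⟨C, hC0, hC⟩ := factD s m (fun y => g (i b) y - gm (i b) y) (hud (i b)) (i b) l'
      (fun x' => factA s m (fun k' y => g k' y - gm k' y) h hh
        (fun j' x'' => hsum j' x'') (i b) x') x
    rw [Asymptotics.isBigO_iff]
    refine ⟨‖T (Function.update i b l') j x‖ * C, ?_⟩
    filter_upwards [Ioo_mem_nhdsGT (by norm_num : (0:ℝ) < 1/4)] with ρ hρm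
    obtain ⟨hρ0, hρ4⟩ := hρm
    have hρC : (ρ:ℂ) ≠ 0 := by exact_mod_cast hρ0.ne'
    rw [hT ρ hρ0 (Function.update i b l') j x]
    rw [norm_mul, norm_mul, norm_zpow, Complex.norm_real, Real.norm_eq_abs, abs_of_pos hρ0]
    rw [Real.norm_eq_abs, abs_of_pos (zpow_pos hρ0 _)]
    have hmr : ρ^(r - Sj + (∑ b', (s (Function.update i b l' b'):ℤ)))
        * ρ^((s (i b):ℤ) + m - (s l':ℤ)) = ρ^(κ+1) := by
      rw [← zpow_add₀ hρ0.ne']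
      congr 1
      rw [sum_update_cast s i b l', hκ, hSi]; ring
    calc (ρ^(r - Sj + (∑ b', (s (Function.update i b l' b'):ℤ)))
            * ‖T (Function.update i b l') j x‖)
          * ‖pderivC (fun z => g (i b) z - gm (i b) z) l' (wsc s ρ x)‖
        ≤ (ρ^(r - Sj + (∑ b', (s (Function.update i b l' b'):ℤ)))
            * ‖T (Function.update i b l') j x‖)
          * (C * ρ^((s (i b):ℤ) + m - (s l':ℤ))) := by
          apply mul_le_mul_of_nonneg_left (hC ρ hρ0 hρ4.le)
          have := zpow_pos hρ0 (r - Sj + (∑ b', (s (Function.update i b l' b'):ℤ)))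
          positivity
      _ = (‖T (Function.update i b l') j x‖ * C)
            * (ρ^(r - Sj + (∑ b', (s (Function.update i b l' b'):ℤ)))
              * ρ^((s (i b):ℤ) + m - (s l':ℤ))) := by ring
      _ = (‖T (Function.update i b l') j x‖ * C) * ρ^(κ+1) := by rw [hmr]
  have hEq2 : (fun ρ:ℝ => lieDeriv g T i j (wsc s ρ x) - (ρ:ℂ)^κ * lieDeriv gm T i j x)
      =ᶠ[nhdsWithin 0 (Set.Ioi 0)]
      (fun ρ:ℝ => (∑ s', (g s' (wsc s ρ x) - gm s' (wsc s ρ x)) * pderivC (T i j) s' (wsc s ρ x))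
        + (∑ a : Fin q, ∑ k, T i (Function.update j a k) (wsc s ρ x)
            * pderivC (fun z => g k z - gm k z) (j a) (wsc s ρ x))
        - (∑ b : Fin p, ∑ l', T (Function.update i b l') j (wsc s ρ x)
            * pderivC (fun z => g (i b) z - gm (i b) z) l' (wsc s ρ x))) := hEq
  exact ((hOA.add hOB).sub hOC).congr' hEq2.symm Filter.EventuallyEq.rfl
end
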